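/- arXiv:1403.0354 — 9 statements merged into one kernel-verified Lean document; each statement's English description precedes it below -/
import Mathlib

section
/- Let X_1,…,X_M and Y_1,…,Y_M be 2M independent random variables, each exponentially distributed with rate 1, and let I be the (almost surely unique) index in {1,…,M} maximizing min(X_i, Y_i). Fix η > 0 and for ε > 0 set ε₁ = ε/η and P_o(ε) = P(X_I < ε) + P((X_I − ε)·Y_I < ε₁ and X_I > ε). Then lim_{ε→0⁺} log P_o(ε) / log ε = (M+1)/2; that is, the diversity order achieved by max-min user scheduling with an energy harvesting relay equals (M+1)/2. -/
open MeasureTheory ProbabilityTheory Filter Topology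

namespace DivAux
open Set Real
open scoped ENNReal NNReal
set_option linter.unusedSectionVars false
set_option linter.unusedVariables false
set_option maxHeartbeats 1000000


lemma expMeasure_apply' {S : Set ℝ} (hS : MeasurableSet S) :
    expMeasure 1 S = ∫⁻ x in S, exponentialPDF 1 x := by
  rw [expMeasure, gammaMeasure, withDensity_apply _ hS]
  rfl

lemma exponentialPDF_le_one (x : ℝ) : exponentialPDF 1 x ≤ 1 := by
  rw [exponentialPDF_eq]
  split_ifs with h
  · calc ENNReal.ofReal (1 * rexp (-(1 * x))) ≤ ENNReal.ofReal 1 := by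
          apply ENNReal.ofReal_le_ofReal
          rw [one_mul]
          exact Real.exp_le_one_iff.mpr (by linarith)
      _ = 1 := ENNReal.ofReal_one
  · simp

lemma expMeasure_le_volume {S : Set ℝ} (hS : MeasurableSet S) :
    expMeasure 1 S ≤ volume S := by
  rw [expMeasure_apply' hS]
  calc ∫⁻ x in S, exponentialPDF 1 x ≤ ∫⁻ _ in S, 1 :=
        lintegral_mono fun x => exponentialPDF_le_one x
    _ = volume S := by simp

lemma expMeasure_le_one (S : Set ℝ) : expMeasure 1 S ≤ 1 := by
  have : IsProbabilityMeasure (expMeasure 1) := isProbabilityMeasure_expMeasure one_pos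
  exact prob_le_one

lemma expMeasure_Iic_zero : expMeasure 1 (Iic (0:ℝ)) = 0 := by
  have h1 : expMeasure 1 (Iio (0:ℝ)) = 0 := by
    rw [expMeasure_apply' measurableSet_Iio]
    exact lintegral_exponentialPDF_of_nonpos le_rfl
  have h2 : expMeasure 1 ({0} : Set ℝ) = 0 := by
    refine le_antisymm ?_ (zero_le)
    calc expMeasure 1 ({0} : Set ℝ) ≤ volume ({0} : Set ℝ) :=
        expMeasure_le_volume (measurableSet_singleton 0)
      _ = 0 := volume_singleton
  have : (Iic (0:ℝ)) ⊆ Iio 0 ∪ {0} := by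
    intro x hx
    rcases lt_or_eq_of_le (mem_Iic.mp hx) with h | h
    · exact Or.inl h
    · exact Or.inr h
  refine le_antisymm ?_ (zero_le)
  calc expMeasure 1 (Iic (0:ℝ)) ≤ expMeasure 1 (Iio 0 ∪ {0}) := measure_mono this
    _ ≤ expMeasure 1 (Iio 0) + expMeasure 1 {0} := measure_union_le _ _
    _ ≤ 0 := by rw [h1, h2, add_zero]

lemma expMeasure_Ioo_le (a b : ℝ) : expMeasure 1 (Ioo a b) ≤ ENNReal.ofReal (b - a) := by
  calc expMeasure 1 (Ioo a b) ≤ volume (Ioo a b) := expMeasure_le_volume measurableSet_Ioo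
    _ = ENNReal.ofReal (b - a) := Real.volume_Ioo

lemma expMeasure_Ico_le (a b : ℝ) : expMeasure 1 (Ico a b) ≤ ENNReal.ofReal (b - a) := by
  calc expMeasure 1 (Ico a b) ≤ volume (Ico a b) := expMeasure_le_volume measurableSet_Ico
    _ = ENNReal.ofReal (b - a) := Real.volume_Ico

lemma expMeasure_Iio_le (t : ℝ) : expMeasure 1 (Iio t) ≤ ENNReal.ofReal t := by
  have hsub : Iio t ⊆ Iic 0 ∪ Ico 0 t := by
    intro x hx
    rcases le_or_gt x 0 with h | h
    · exact Or.inl h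
    · exact Or.inr ⟨h.le, hx⟩
  calc expMeasure 1 (Iio t) ≤ expMeasure 1 (Iic 0 ∪ Ico 0 t) := measure_mono hsub
    _ ≤ expMeasure 1 (Iic 0) + expMeasure 1 (Ico 0 t) := measure_union_le _ _
    _ ≤ 0 + ENNReal.ofReal (t - 0) := by
        gcongr
        · exact expMeasure_Iic_zero.le
        · exact expMeasure_Ico_le 0 t
    _ = ENNReal.ofReal t := by rw [zero_add, sub_zero]

lemma expMeasure_Ioo_ge {a b : ℝ} (ha : 0 ≤ a) (hb : b ≤ 1) :
    ENNReal.ofReal (Real.exp (-1) * (b - a)) ≤ expMeasure 1 (Ioo a b) := by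
  rcases le_or_gt b a with h | h
  · have : b - a ≤ 0 := by linarith
    have : Real.exp (-1) * (b - a) ≤ 0 := mul_nonpos_of_nonneg_of_nonpos (Real.exp_pos _).le this
    simpa [ENNReal.ofReal_eq_zero.mpr this] using zero_le
  · rw [expMeasure_apply' measurableSet_Ioo]
    have hpt : ∀ x ∈ Ioo a b, ENNReal.ofReal (Real.exp (-1)) ≤ exponentialPDF 1 x := by
      intro x hx
      rw [exponentialPDF_eq, if_pos (le_of_lt (lt_of_le_of_lt ha hx.1)), one_mul]
      apply ENNReal.ofReal_le_ofReal
      apply Real.exp_le_exp.mpr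
      have : x < 1 := lt_of_lt_of_le hx.2 hb
      linarith
    calc ENNReal.ofReal (Real.exp (-1) * (b - a))
        = ENNReal.ofReal (Real.exp (-1)) * volume (Ioo a b) := by
          rw [Real.volume_Ioo, ← ENNReal.ofReal_mul (Real.exp_pos _).le]
      _ = ∫⁻ _ in Ioo a b, ENNReal.ofReal (Real.exp (-1)) := by
          rw [setLIntegral_const, mul_comm]
      _ ≤ ∫⁻ x in Ioo a b, exponentialPDF 1 x := setLIntegral_mono' measurableSet_Ioo hpt



lemma le_ofReal_rpow {m : ℝ≥0∞} {L c : ℝ} (hL : 0 ≤ L) (hm1 : m ≤ 1)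
    (hmL : m ≤ ENNReal.ofReal L) (hc : 0 < c) (hc1 : c ≤ 1) : m ≤ ENNReal.ofReal (L ^ c) := by
  rcases eq_or_lt_of_le hL with h0 | h0
  · rw [← h0] at hmL ⊢
    rwa [Real.zero_rpow hc.ne']
  rcases le_or_gt L 1 with h1 | h1
  · refine hmL.trans (ENNReal.ofReal_le_ofReal ?_)
    calc L = L ^ (1:ℝ) := (Real.rpow_one L).symm
      _ ≤ L ^ c := Real.rpow_le_rpow_of_exponent_ge h0 h1 hc1
  · refine hm1.trans ?_
    rw [← ENNReal.ofReal_one]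
    exact ENNReal.ofReal_le_ofReal (Real.one_le_rpow h1.le hc.le)

lemma dyadic_exists {δ y : ℝ} (hδ : 0 < δ) (h0 : 0 < y) (h1 : y < δ) :
    ∃ k : ℕ, δ / 2 ^ (k + 1) ≤ y ∧ y < δ / 2 ^ k := by
  have hex : ∃ n : ℕ, δ / 2 ^ (n + 1) ≤ y := by
    obtain ⟨n, hn⟩ := pow_unbounded_of_one_lt (δ / y) (one_lt_two (α := ℝ))
    refine ⟨n, ?_⟩
    rw [div_le_iff₀ (by positivity)]
    rw [div_lt_iff₀ h0] at hn
    have h2 : (2:ℝ) ^ n ≤ 2 ^ (n+1) := by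
      apply pow_le_pow_right₀ one_le_two (Nat.le_succ n)
    nlinarith
  classical
  refine ⟨Nat.find hex, Nat.find_spec hex, ?_⟩
  rcases Nat.eq_zero_or_pos (Nat.find hex) with h | h
  · rw [h]; simpa using h1
  · obtain ⟨j, hj⟩ := Nat.exists_eq_succ_of_ne_zero h.ne'
    have hmin := Nat.find_min hex (m := j) (by omega)
    push_neg at hmin
    rw [hj, Nat.succ_eq_add_one]
    exact_mod_cast hmin



variable {Ω : Type*} [MeasureSpace Ω] [IsProbabilityMeasure (ℙ : Measure Ω)]
  {M : ℕ} {X Y : Fin M → Ω → ℝ}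

/-- The basic event: every `X i` in `BX i` and every `Y i` in `BY i`. -/
def evt (X Y : Fin M → Ω → ℝ) (BX BY : Fin M → Set ℝ) : Set Ω :=
  {ω | (∀ i, X i ω ∈ BX i) ∧ (∀ i, Y i ω ∈ BY i)}

lemma evt_meas
    (hmX : ∀ i, Measurable (X i)) (hmY : ∀ i, Measurable (Y i))
    (hindep : iIndepFun (Sum.elim X Y) ℙ)
    (hX : ∀ i, Measure.map (X i) ℙ = expMeasure 1)
    (hY : ∀ i, Measure.map (Y i) ℙ = expMeasure 1)
    (BX BY : Fin M → Set ℝ)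
    (hBX : ∀ i, MeasurableSet (BX i)) (hBY : ∀ i, MeasurableSet (BY i)) :
    ℙ (evt X Y BX BY) =
      (∏ i, expMeasure 1 (BX i)) * ∏ i, expMeasure 1 (BY i) := by
  have hset : evt X Y BX BY = ⋂ a, Sum.elim X Y a ⁻¹' Sum.elim BX BY a := by
    ext ω
    simp only [evt, Set.mem_setOf_eq, Set.mem_iInter, Sum.forall, Sum.elim_inl, Sum.elim_inr,
      Set.mem_preimage]
  rw [hset, hindep.meas_iInter (fun a => ⟨Sum.elim BX BY a, by cases a <;> simp [hBX, hBY], rfl⟩)]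
  rw [Fintype.prod_sum_type]
  congr 1
  · refine Finset.prod_congr rfl fun i _ => ?_
    rw [show (Sum.elim X Y (Sum.inl i) ⁻¹' Sum.elim BX BY (Sum.inl i)) = X i ⁻¹' BX i from rfl,
      ← Measure.map_apply (hmX i) (hBX i), hX i]
  · refine Finset.prod_congr rfl fun i _ => ?_
    rw [show (Sum.elim X Y (Sum.inr i) ⁻¹' Sum.elim BX BY (Sum.inr i)) = Y i ⁻¹' BY i from rfl,
      ← Measure.map_apply (hmY i) (hBY i), hY i]

lemma evt_le
    (hmX : ∀ i, Measurable (X i)) (hmY : ∀ i, Measurable (Y i))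
    (hindep : iIndepFun (Sum.elim X Y) ℙ)
    (hX : ∀ i, Measure.map (X i) ℙ = expMeasure 1)
    (hY : ∀ i, Measure.map (Y i) ℙ = expMeasure 1)
    (BX BY : Fin M → Set ℝ)
    (hBX : ∀ i, MeasurableSet (BX i)) (hBY : ∀ i, MeasurableSet (BY i))
    (w : Fin M → ℝ≥0∞)
    (hw : ∀ i, expMeasure 1 (BX i) * expMeasure 1 (BY i) ≤ w i) :
    ℙ (evt X Y BX BY) ≤ ∏ i, w i := by
  rw [evt_meas hmX hmY hindep hX hY BX BY hBX hBY, ← Finset.prod_mul_distrib]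
  exact Finset.prod_le_prod' fun i _ => hw i

lemma piece_bound
    (hmX : ∀ i, Measurable (X i)) (hmY : ∀ i, Measurable (Y i))
    (hindep : iIndepFun (Sum.elim X Y) ℙ)
    (hX : ∀ i, Measure.map (X i) ℙ = expMeasure 1)
    (hY : ∀ i, Measure.map (Y i) ℙ = expMeasure 1)
    (i : Fin M) (SX SY : Set ℝ) (hSX : MeasurableSet SX) (hSY : MeasurableSet SY)
    (A1 A2 B : ℝ≥0∞) (h1 : expMeasure 1 SX ≤ A1) (h2 : expMeasure 1 SY ≤ A2)
    (t : ℝ) (hB : ENNReal.ofReal t ≤ B) :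
    ℙ (⋃ f : Fin M → Bool,
        evt X Y (fun j => if j = i then SX else if f j then Iio t else univ)
                (fun j => if j = i then SY else if f j then univ else Iio t))
      ≤ 2 ^ M * (A1 * A2 * B ^ (M - 1)) := by
  classical
  calc ℙ (⋃ f : Fin M → Bool, _)
      ≤ ∑ f : Fin M → Bool, ℙ (evt X Y
          (fun j => if j = i then SX else if f j then Iio t else univ)
          (fun j => if j = i then SY else if f j then univ else Iio t)) :=
        measure_iUnion_fintype_le _ _
    _ ≤ ∑ _f : Fin M → Bool, (A1 * A2 * B ^ (M - 1)) := by
        refine Finset.sum_le_sum fun f _ => ?_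
        have hle := evt_le hmX hmY hindep hX hY
          (fun j => if j = i then SX else if f j then Iio t else univ)
          (fun j => if j = i then SY else if f j then univ else Iio t)
          (fun j => by split_ifs <;> first | exact hSX | exact measurableSet_Iio | exact MeasurableSet.univ)
          (fun j => by split_ifs <;> first | exact hSY | exact measurableSet_Iio | exact MeasurableSet.univ)
          (fun j => if j = i then A1 * A2 else B)
          (fun j => by
            split_ifs with hj hf
            · exact mul_le_mul' h1 h2
            · calc expMeasure 1 (Iio t) * expMeasure 1 univ
                  ≤ ENNReal.ofReal t * 1 := mul_le_mul' (expMeasure_Iio_le t) (expMeasure_le_one _)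
                _ = ENNReal.ofReal t := mul_one _
                _ ≤ B := hB
            · calc expMeasure 1 univ * expMeasure 1 (Iio t)
                  ≤ 1 * ENNReal.ofReal t := mul_le_mul' (expMeasure_le_one _) (expMeasure_Iio_le t)
                _ = ENNReal.ofReal t := one_mul _
                _ ≤ B := hB)
        refine hle.trans (le_of_eq ?_)
        rw [← Finset.mul_prod_erase Finset.univ _ (Finset.mem_univ i), if_pos rfl]
        congr 1
        rw [Finset.prod_congr rfl (fun j hj => if_neg (Finset.ne_of_mem_erase hj)),
          Finset.prod_const, Finset.card_erase_of_mem (Finset.mem_univ i), Finset.card_univ,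
          Fintype.card_fin]
    _ = 2 ^ M * (A1 * A2 * B ^ (M - 1)) := by
        rw [Finset.sum_const, Finset.card_univ, nsmul_eq_mul]
        congr 1
        simp [Fintype.card_fun]

lemma piece_bound_A
    (hmX : ∀ i, Measurable (X i)) (hmY : ∀ i, Measurable (Y i))
    (hindep : iIndepFun (Sum.elim X Y) ℙ)
    (hX : ∀ i, Measure.map (X i) ℙ = expMeasure 1)
    (hY : ∀ i, Measure.map (Y i) ℙ = expMeasure 1)
    (t : ℝ) :
    ℙ (⋃ f : Fin M → Bool,
        evt X Y (fun j => if f j then Iio t else univ)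
                (fun j => if f j then univ else Iio t))
      ≤ 2 ^ M * (ENNReal.ofReal t) ^ M := by
  classical
  calc ℙ (⋃ f : Fin M → Bool, _)
      ≤ ∑ f : Fin M → Bool, ℙ (evt X Y
          (fun j => if f j then Iio t else univ)
          (fun j => if f j then univ else Iio t)) :=
        measure_iUnion_fintype_le _ _
    _ ≤ ∑ _f : Fin M → Bool, (ENNReal.ofReal t) ^ M := by
        refine Finset.sum_le_sum fun f _ => ?_
        have hle := evt_le hmX hmY hindep hX hY
          (fun j => if f j then Iio t else univ)
          (fun j => if f j then univ else Iio t)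
          (fun j => by split_ifs <;> first | exact measurableSet_Iio | exact MeasurableSet.univ)
          (fun j => by split_ifs <;> first | exact measurableSet_Iio | exact MeasurableSet.univ)
          (fun _ => ENNReal.ofReal t)
          (fun j => by
            split_ifs with hf
            · calc expMeasure 1 (Iio t) * expMeasure 1 univ
                  ≤ ENNReal.ofReal t * 1 := mul_le_mul' (expMeasure_Iio_le t) (expMeasure_le_one _)
                _ = ENNReal.ofReal t := mul_one _
            · calc expMeasure 1 univ * expMeasure 1 (Iio t)
                  ≤ 1 * ENNReal.ofReal t := mul_le_mul' (expMeasure_le_one _) (expMeasure_Iio_le t)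
                _ = ENNReal.ofReal t := one_mul _)
        refine hle.trans (le_of_eq ?_)
        rw [Finset.prod_const, Finset.card_univ, Fintype.card_fin]
    _ = 2 ^ M * (ENNReal.ofReal t) ^ M := by
        rw [Finset.sum_const, Finset.card_univ, nsmul_eq_mul]
        congr 1
        simp [Fintype.card_fun]

lemma dyadic_alg {δ c : ℝ} (hδ : 0 < δ) (k : ℕ) :
    (δ * 2 ^ (k + 1)) ^ c * (δ / 2 ^ k)
      = (2:ℝ) ^ c * δ ^ (1 + c) * ((2:ℝ) ^ (c - 1)) ^ k := by
  have e1 : ((2:ℝ) ^ (c - 1)) ^ k = (2:ℝ) ^ ((c - 1) * (k:ℝ)) := by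
    rw [← Real.rpow_natCast ((2:ℝ) ^ (c - 1)) k, ← Real.rpow_mul (by norm_num)]
  have e2 : ((2:ℝ) ^ (k + 1) : ℝ) ^ c = (2:ℝ) ^ (((k:ℝ) + 1) * c) := by
    rw [← Real.rpow_natCast (2:ℝ) (k + 1), ← Real.rpow_mul (by norm_num)]
    norm_num
  have e3 : ((2:ℝ) ^ k : ℝ) = (2:ℝ) ^ ((k:ℝ)) := by rw [Real.rpow_natCast]
  rw [Real.mul_rpow hδ.le (by positivity), e1, e2, e3]
  rw [show δ ^ (1 + c) = δ * δ ^ c by rw [Real.rpow_add hδ, Real.rpow_one]]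
  rw [div_eq_mul_inv, ← Real.rpow_neg (by norm_num : (0:ℝ) ≤ 2)]
  have e4 : (2:ℝ) ^ (((k:ℝ) + 1) * c) * 2 ^ (-(k:ℝ)) = 2 ^ c * 2 ^ ((c - 1) * (k:ℝ)) := by
    rw [← Real.rpow_add two_pos, ← Real.rpow_add two_pos]
    congr 1
    ring
  linear_combination (δ ^ c * δ) * e4

lemma geom_bound {r : ℝ≥0∞} (hr : r < 1) (A : ℝ≥0∞) :
    (∑' k : ℕ, A * r ^ k) = A * (1 - r)⁻¹ := by
  rw [ENNReal.tsum_mul_left, ENNReal.tsum_geometric]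

lemma geom_ne_top {ρ : ℝ} (hρ : ρ < 1) : (1 - ENNReal.ofReal ρ)⁻¹ ≠ ⊤ := by
  rw [Ne, ENNReal.inv_eq_top, tsub_eq_zero_iff_le]
  intro h
  have := (ENNReal.one_le_ofReal).mp h
  linarith

lemma const_div_log_tendsto (C : ℝ) :
    Tendsto (fun ε : ℝ => Real.log C / Real.log ε) (𝓝[>] (0:ℝ)) (𝓝 0) := by
  have h1 : Tendsto (fun ε : ℝ => (fun x : ℝ => Real.log ε) ε) (𝓝[>] (0:ℝ)) atBot :=
    Real.tendsto_log_nhdsGT_zero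
  have h2 : Tendsto (fun ε : ℝ => (Real.log ε)⁻¹) (𝓝[>] (0:ℝ)) (𝓝 0) := by
    have : Tendsto (fun ε : ℝ => -Real.log ε) (𝓝[>] (0:ℝ)) atTop :=
      tendsto_neg_atTop_iff.mpr Real.tendsto_log_nhdsGT_zero
    have h3 := this.inv_tendsto_atTop
    have h4 : Tendsto (fun ε : ℝ => -(-Real.log ε)⁻¹) (𝓝[>] (0:ℝ)) (𝓝 (-0)) := h3.neg
    simpa [inv_neg] using h4
  have := h2.const_mul (Real.log C)
  simpa [div_eq_mul_inv, mul_zero] using this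

/-- Main analytic glue: two-sided polynomial bounds give the log-ratio limit. -/
lemma ratio_tendsto {P : ℝ → ℝ} {L : ℝ}
    (hup : ∃ clow : ℝ, 0 < clow ∧ ∀ᶠ ε in 𝓝[>] (0:ℝ), clow * ε ^ L ≤ P ε)
    (hlo : ∀ θ : ℝ, 0 < θ → θ < 1 →
      ∃ K : ℝ, 0 < K ∧ ∀ᶠ ε in 𝓝[>] (0:ℝ), P ε ≤ K * ε ^ (L - θ/2)) :
    Tendsto (fun ε : ℝ => Real.log (P ε) / Real.log ε) (𝓝[>] (0:ℝ)) (𝓝 L) := by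
  obtain ⟨clow, hclow, hclowev⟩ := hup
  have hbasic : ∀ᶠ ε in 𝓝[>] (0:ℝ), 0 < ε ∧ ε < 1 := by
    have : Ioo (0:ℝ) 1 ∈ 𝓝[>] (0:ℝ) := Ioo_mem_nhdsGT_of_mem ⟨le_refl 0, zero_lt_one⟩
    filter_upwards [this] with ε hε using ⟨hε.1, hε.2⟩
  have hPpos : ∀ᶠ ε in 𝓝[>] (0:ℝ), 0 < P ε := by
    filter_upwards [hclowev, hbasic] with ε h1 h2
    have hε0 : (0:ℝ) < ε := h2.1
    have : (0:ℝ) < clow * ε ^ L := by positivity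
    linarith
  rw [tendsto_order]
  constructor
  · -- ∀ a < L, eventually a < ratio
    intro a ha
    set θ : ℝ := min (L - a) (1/2) with hθdef
    have hθ0 : 0 < θ := lt_min (by linarith) (by norm_num)
    have hθ1 : θ < 1 := lt_of_le_of_lt (min_le_right _ _) (by norm_num)
    obtain ⟨K, hK, hKev⟩ := hlo θ hθ0 hθ1
    set q : ℝ := L - θ/2 with hqdef
    have hqa : a < q := by
      have h1 : θ ≤ L - a := min_le_left _ _
      rw [hqdef]
      nlinarith [hθ0]
    have hg : Tendsto (fun ε : ℝ => Real.log K / Real.log ε + q) (𝓝[>] (0:ℝ)) (𝓝 (0 + q)) :=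
      (const_div_log_tendsto K).add_const q
    rw [zero_add] at hg
    have hgev : ∀ᶠ ε in 𝓝[>] (0:ℝ), a < Real.log K / Real.log ε + q :=
      hg.eventually_const_lt hqa
    filter_upwards [hKev, hbasic, hPpos, hgev] with ε hKε ⟨hε0, hε1⟩ hP hgε
    have hlogε : Real.log ε < 0 := Real.log_neg hε0 hε1
    have hlog1 : Real.log (P ε) ≤ Real.log K + q * Real.log ε := by
      calc Real.log (P ε) ≤ Real.log (K * ε ^ q) := Real.log_le_log hP hKε
        _ = Real.log K + q * Real.log ε := by
            rw [Real.log_mul hK.ne' (by positivity), Real.log_rpow hε0]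
    calc a < Real.log K / Real.log ε + q := hgε
      _ = (Real.log K + q * Real.log ε) / Real.log ε := by
          rw [add_div, mul_div_cancel_right₀ _ hlogε.ne]
      _ ≤ Real.log (P ε) / Real.log ε := by
          rw [div_le_div_right_of_neg hlogε]
          exact hlog1
  · -- ∀ a > L, eventually ratio < a
    intro a ha
    have hg : Tendsto (fun ε : ℝ => Real.log clow / Real.log ε + L) (𝓝[>] (0:ℝ)) (𝓝 (0 + L)) :=
      (const_div_log_tendsto clow).add_const L
    rw [zero_add] at hg
    have hgev : ∀ᶠ ε in 𝓝[>] (0:ℝ), Real.log clow / Real.log ε + L < a :=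
      hg.eventually_lt_const ha
    filter_upwards [hclowev, hbasic, hPpos, hgev] with ε hcε ⟨hε0, hε1⟩ hP hgε
    have hlogε : Real.log ε < 0 := Real.log_neg hε0 hε1
    have hlog1 : Real.log clow + L * Real.log ε ≤ Real.log (P ε) := by
      calc Real.log clow + L * Real.log ε = Real.log (clow * ε ^ L) := by
            rw [Real.log_mul hclow.ne' (by positivity), Real.log_rpow hε0]
        _ ≤ Real.log (P ε) := Real.log_le_log (by positivity) hcε
    calc Real.log (P ε) / Real.log ε
        ≤ (Real.log clow + L * Real.log ε) / Real.log ε := by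
          rw [div_le_div_right_of_neg hlogε]
          exact hlog1
      _ = Real.log clow / Real.log ε + L := by
          rw [add_div, mul_div_cancel_right₀ _ hlogε.ne]
      _ < a := hgε
lemma lower_bound
    {Ω : Type*} [MeasureSpace Ω] [IsProbabilityMeasure (ℙ : Measure Ω)]
    {M : ℕ} (hM : 1 ≤ M)
    {X Y : Fin M → Ω → ℝ}
    (hmX : ∀ i, Measurable (X i)) (hmY : ∀ i, Measurable (Y i))
    (hindep : iIndepFun (Sum.elim X Y) ℙ)
    (hX : ∀ i, Measure.map (X i) ℙ = expMeasure 1)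
    (hY : ∀ i, Measure.map (Y i) ℙ = expMeasure 1)
    (I : Ω → Fin M) (hI : Measurable I)
    (hmax : ∀ᵐ ω ∂ℙ, ∀ j, min (X j ω) (Y j ω) ≤ min (X (I ω) ω) (Y (I ω) ω))
    (η : ℝ) (hη : 0 < η) :
    ∃ clow : ℝ, 0 < clow ∧ ∀ᶠ ε in 𝓝[>] (0:ℝ),
      clow * ε ^ (((M:ℝ) + 1)/2) ≤
        (ℙ {ω | X (I ω) ω < ε}).toReal +
          (ℙ {ω | (X (I ω) ω - ε) * Y (I ω) ω < ε / η ∧ ε < X (I ω) ω}).toReal := by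
  classical
  haveI : IsProbabilityMeasure (expMeasure 1) := isProbabilityMeasure_expMeasure one_pos
  obtain ⟨c₀, hc₀, hc₀sq⟩ : ∃ c : ℝ, 0 < c ∧ 9 * c ^ 2 * (η + 1) = 1 := by
    have hsq : (0:ℝ) < Real.sqrt (η + 1) := Real.sqrt_pos.mpr (by linarith)
    have hsq2 : Real.sqrt (η + 1) ^ 2 = η + 1 := Real.sq_sqrt (by linarith)
    refine ⟨1 / (3 * Real.sqrt (η + 1)), by positivity, ?_⟩
    field_simp
    nlinarith [hsq2]
  refine ⟨(Real.exp (-1) * c₀) ^ (M + 1), by positivity, ?_⟩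
  have hε₀pos : 0 < min (4 * c₀ ^ 2) (min 1 (1 / (3 * c₀) ^ 2)) := by
    refine lt_min (by positivity) (lt_min one_pos (by positivity))
  have hmem : Ioo (0:ℝ) (min (4 * c₀ ^ 2) (min 1 (1 / (3 * c₀) ^ 2))) ∈ 𝓝[>] (0:ℝ) :=
    Ioo_mem_nhdsGT_of_mem ⟨le_refl 0, hε₀pos⟩
  filter_upwards [hmem] with ε hε
  obtain ⟨hε0, hεlt⟩ := hε
  set s : ℝ := Real.sqrt ε with hsdef
  have hs0 : 0 < s := Real.sqrt_pos.mpr hε0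
  have hss : s ^ 2 = ε := Real.sq_sqrt hε0.le
  have h3cs : 3 * c₀ * s ≤ 1 := by
    have h1 : ε < 1 / (3 * c₀) ^ 2 := hεlt.trans_le ((min_le_right _ _).trans (min_le_right _ _))
    have h2 : s ≤ 1 / (3 * c₀) := by
      rw [show (1 / (3 * c₀)) = Real.sqrt ((1 / (3 * c₀)) ^ 2) by
        rw [Real.sqrt_sq (by positivity)]]
      refine Real.sqrt_le_sqrt ?_
      rw [div_pow, one_pow]
      exact h1.le
    calc 3 * c₀ * s ≤ 3 * c₀ * (1 / (3 * c₀)) := by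
          apply mul_le_mul_of_nonneg_left h2 (by positivity)
      _ = 1 := by field_simp
  have hεs : ε < 2 * c₀ * s := by
    have h1 : ε < 4 * c₀ ^ 2 := hεlt.trans_le (min_le_left _ _)
    have h2 : s < 2 * c₀ := by
      have hlt : s ^ 2 < (2 * c₀) ^ 2 := by rw [hss]; nlinarith
      exact lt_of_pow_lt_pow_left₀ 2 (by positivity) hlt
    calc ε = s * s := by rw [← hss]; ring
      _ < (2 * c₀) * s := mul_lt_mul_of_pos_right h2 hs0
      _ = 2 * c₀ * s := by ring
  set i₀ : Fin M := ⟨0, hM⟩ with hi₀def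
  set BX : Fin M → Set ℝ := fun j => if j = i₀ then Ioo (2*c₀*s) (3*c₀*s) else Ioo 0 (c₀*s)
    with hBXdef
  set BY : Fin M → Set ℝ := fun j => if j = i₀ then Ioo (2*c₀*s) (3*c₀*s) else univ with hBYdef
  have hmeas : ℙ (evt X Y BX BY) = (∏ i, expMeasure 1 (BX i)) * ∏ i, expMeasure 1 (BY i) := by
    refine evt_meas hmX hmY hindep hX hY BX BY (fun i => ?_) (fun i => ?_)
    · simp only [hBXdef]; split_ifs <;> exact measurableSet_Ioo
    · simp only [hBYdef]; split_ifs <;> first | exact measurableSet_Ioo | exact MeasurableSet.univ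
  have hwX : ∀ i, ENNReal.ofReal (Real.exp (-1) * (c₀ * s)) ≤ expMeasure 1 (BX i) := by
    intro i
    simp only [hBXdef]
    split_ifs with h
    · refine le_trans (le_of_eq ?_) (expMeasure_Ioo_ge (by positivity) h3cs)
      congr 1; ring
    · refine le_trans (le_of_eq ?_) (expMeasure_Ioo_ge le_rfl (by nlinarith))
      congr 1; ring
  have hwY : ∀ i, (if i = i₀ then ENNReal.ofReal (Real.exp (-1) * (c₀ * s)) else 1)
      ≤ expMeasure 1 (BY i) := by
    intro i
    simp only [hBYdef]
    split_ifs with h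
    · refine le_trans (le_of_eq ?_) (expMeasure_Ioo_ge (by positivity) h3cs)
      congr 1; ring
    · rw [measure_univ]
  have hprodlow : ENNReal.ofReal (Real.exp (-1) * (c₀ * s)) ^ (M + 1)
      ≤ ℙ (evt X Y BX BY) := by
    rw [hmeas]
    have h1 : ENNReal.ofReal (Real.exp (-1) * (c₀ * s)) ^ M ≤ ∏ i, expMeasure 1 (BX i) := by
      calc ENNReal.ofReal (Real.exp (-1) * (c₀ * s)) ^ M
          = ∏ _i : Fin M, ENNReal.ofReal (Real.exp (-1) * (c₀ * s)) := by
            rw [Finset.prod_const, Finset.card_univ, Fintype.card_fin]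
        _ ≤ ∏ i, expMeasure 1 (BX i) := Finset.prod_le_prod' fun i _ => hwX i
    have h2 : ENNReal.ofReal (Real.exp (-1) * (c₀ * s)) ≤ ∏ i, expMeasure 1 (BY i) := by
      have hp := Finset.prod_le_prod' (s := Finset.univ) fun i (_ : i ∈ Finset.univ) => hwY i
      refine le_trans (le_of_eq ?_) hp
      rw [← Finset.mul_prod_erase Finset.univ _ (Finset.mem_univ i₀), if_pos rfl]
      rw [Finset.prod_congr rfl (fun j hj => if_neg (Finset.ne_of_mem_erase hj)),
        Finset.prod_const, one_pow, mul_one]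
    calc ENNReal.ofReal (Real.exp (-1) * (c₀ * s)) ^ (M + 1)
        = ENNReal.ofReal (Real.exp (-1) * (c₀ * s)) ^ M
            * ENNReal.ofReal (Real.exp (-1) * (c₀ * s)) := by ring
      _ ≤ _ := mul_le_mul' h1 h2
  set T : Set Ω := {ω | (X (I ω) ω - ε) * Y (I ω) ω < ε / η ∧ ε < X (I ω) ω} with hTdef
  set N : Set Ω := {ω | ¬ ∀ j, min (X j ω) (Y j ω) ≤ min (X (I ω) ω) (Y (I ω) ω)} with hNdef
  have hN0 : ℙ N = 0 := ae_iff.mp hmax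
  have hsub : evt X Y BX BY ⊆ T ∪ N := by
    intro ω hω
    by_cases hG : ∀ j, min (X j ω) (Y j ω) ≤ min (X (I ω) ω) (Y (I ω) ω)
    · left
      obtain ⟨hωX, hωY⟩ := hω
      have hx0 : X i₀ ω ∈ Ioo (2*c₀*s) (3*c₀*s) := by simpa [hBXdef] using hωX i₀
      have hy0 : Y i₀ ω ∈ Ioo (2*c₀*s) (3*c₀*s) := by simpa [hBYdef] using hωY i₀
      have hIω : I ω = i₀ := by
        by_contra hne
        have hx : X (I ω) ω ∈ Ioo 0 (c₀*s) := by simpa [hBXdef, hne] using hωX (I ω)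
        have h1 := hG i₀
        have h2 : 2*c₀*s ≤ min (X i₀ ω) (Y i₀ ω) := le_min hx0.1.le hy0.1.le
        have h3 : min (X (I ω) ω) (Y (I ω) ω) ≤ X (I ω) ω := min_le_left _ _
        have hcon : 2*c₀*s < 2*c₀*s := by
          calc 2*c₀*s ≤ min (X i₀ ω) (Y i₀ ω) := h2
            _ ≤ min (X (I ω) ω) (Y (I ω) ω) := h1
            _ ≤ X (I ω) ω := h3
            _ < c₀ * s := hx.2
            _ < 2*c₀*s := by nlinarith
        exact lt_irrefl _ hcon
      rw [hTdef, Set.mem_setOf_eq, hIω]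
      constructor
      · have h1 : X i₀ ω - ε < 3*c₀*s := by linarith [hx0.2]
        have h2 : Y i₀ ω < 3*c₀*s := hy0.2
        have h3 : 0 ≤ X i₀ ω - ε := by linarith [hx0.1, hεs]
        have h4 : 0 ≤ Y i₀ ω := by linarith [hy0.1]
        have hmul : (X i₀ ω - ε) * Y i₀ ω < (3*c₀*s) * (3*c₀*s) := mul_lt_mul'' h1 h2 h3 h4
        have h9 : 9 * c₀ ^ 2 = 1 / (η + 1) := by
          rw [eq_div_iff (by linarith : (η:ℝ) + 1 ≠ 0)]
          linarith [hc₀sq]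
        have hcval : (3*c₀*s) * (3*c₀*s) = ε / (η + 1) := by
          have e1 : (3*c₀*s) * (3*c₀*s) = 9 * c₀ ^ 2 * ε := by rw [← hss]; ring
          rw [e1, h9]; ring
        have hlt : ε / (η + 1) < ε / η := div_lt_div_of_pos_left hε0 hη (by linarith)
        calc (X i₀ ω - ε) * Y i₀ ω < (3*c₀*s) * (3*c₀*s) := hmul
          _ = ε / (η+1) := hcval
          _ < ε / η := hlt
      · exact lt_trans hεs hx0.1
    · right; exact hG
  have hPT : ENNReal.ofReal (Real.exp (-1) * (c₀ * s)) ^ (M+1) ≤ ℙ T := by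
    calc ENNReal.ofReal (Real.exp (-1) * (c₀ * s)) ^ (M+1) ≤ ℙ (evt X Y BX BY) := hprodlow
      _ ≤ ℙ (T ∪ N) := measure_mono hsub
      _ ≤ ℙ T + ℙ N := measure_union_le _ _
      _ = ℙ T := by rw [hN0, add_zero]
  have hsL : s ^ (M+1) = ε ^ (((M:ℝ)+1)/2) := by
    rw [hsdef, Real.sqrt_eq_rpow, ← Real.rpow_natCast (ε ^ ((1:ℝ)/2)) (M+1),
      ← Real.rpow_mul hε0.le]
    congr 1
    push_cast
    ring
  have hwpow : ENNReal.ofReal (Real.exp (-1) * (c₀ * s)) ^ (M+1)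
      = ENNReal.ofReal ((Real.exp (-1) * c₀) ^ (M+1) * ε ^ (((M:ℝ)+1)/2)) := by
    rw [← ENNReal.ofReal_pow (by positivity)]
    congr 1
    rw [← hsL, ← mul_pow]
    congr 1
    ring
  have hfin : ℙ T ≠ ⊤ := measure_ne_top _ _
  have hkey := (ENNReal.ofReal_le_iff_le_toReal hfin).mp (by rw [← hwpow]; exact hPT)
  calc (Real.exp (-1) * c₀) ^ (M + 1) * ε ^ (((M:ℝ)+1)/2) ≤ (ℙ T).toReal := hkey
    _ ≤ (ℙ {ω | X (I ω) ω < ε}).toReal + (ℙ T).toReal :=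
        le_add_of_nonneg_left ENNReal.toReal_nonneg
lemma upper_bound
    {Ω : Type*} [MeasureSpace Ω] [IsProbabilityMeasure (ℙ : Measure Ω)]
    {M : ℕ} (hM : 1 ≤ M)
    {X Y : Fin M → Ω → ℝ}
    (hmX : ∀ i, Measurable (X i)) (hmY : ∀ i, Measurable (Y i))
    (hindep : iIndepFun (Sum.elim X Y) ℙ)
    (hX : ∀ i, Measure.map (X i) ℙ = expMeasure 1)
    (hY : ∀ i, Measure.map (Y i) ℙ = expMeasure 1)
    (I : Ω → Fin M) (hI : Measurable I)
    (hmax : ∀ᵐ ω ∂ℙ, ∀ j, min (X j ω) (Y j ω) ≤ min (X (I ω) ω) (Y (I ω) ω))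
    (η : ℝ) (hη : 0 < η) (θ : ℝ) (hθ0 : 0 < θ) (hθ1 : θ < 1) :
    ∃ K : ℝ, 0 < K ∧ ∀ᶠ ε in 𝓝[>] (0:ℝ),
      (ℙ {ω | X (I ω) ω < ε}).toReal +
          (ℙ {ω | (X (I ω) ω - ε) * Y (I ω) ω < ε / η ∧ ε < X (I ω) ω}).toReal
        ≤ K * ε ^ (((M:ℝ) + 1)/2 - θ/2) := by
  classical
  haveI : IsProbabilityMeasure (expMeasure 1) := isProbabilityMeasure_expMeasure one_pos
  have hρ1 : (2:ℝ) ^ ((1 - θ) - 1) < 1 :=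
    Real.rpow_lt_one_of_one_lt_of_neg one_lt_two (by linarith)
  have hρ0 : (0:ℝ) < (2:ℝ) ^ ((1 - θ) - 1) := Real.rpow_pos_of_pos two_pos _
  have hrlt : ENNReal.ofReal ((2:ℝ) ^ ((1 - θ) - 1)) < 1 := ENNReal.ofReal_lt_one.mpr hρ1
  have hgne : (1 - ENNReal.ofReal ((2:ℝ) ^ ((1 - θ) - 1)))⁻¹ ≠ ⊤ := geom_ne_top hρ1
  set G : ℝ := ((1 - ENNReal.ofReal ((2:ℝ) ^ ((1 - θ) - 1)))⁻¹).toReal with hGdef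
  have hGg : (1 - ENNReal.ofReal ((2:ℝ) ^ ((1 - θ) - 1)))⁻¹ = ENNReal.ofReal G :=
    (ENNReal.ofReal_toReal hgne).symm
  have hG1 : 1 ≤ G := by
    have h1 : (1:ℝ≥0∞) ≤ (1 - ENNReal.ofReal ((2:ℝ) ^ ((1 - θ) - 1)))⁻¹ := by
      exact ENNReal.one_le_inv.mpr tsub_le_self
    rw [hGg] at h1
    exact ENNReal.one_le_ofReal.mp h1
  have hG0 : 0 < G := lt_of_lt_of_le one_pos hG1
  refine ⟨(2:ℝ) ^ M + (M:ℝ) * 2 * 2 ^ M * 2 ^ (1 - θ) * G * 2 ^ (M - 1)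
      * (1/η) ^ (((M:ℝ) + 1 - θ)/2), by positivity, ?_⟩
  have hmem : Ioo (0:ℝ) (min 1 (1/η)) ∈ 𝓝[>] (0:ℝ) :=
    Ioo_mem_nhdsGT_of_mem ⟨le_refl 0, lt_min one_pos (by positivity)⟩
  filter_upwards [hmem] with ε hε
  obtain ⟨hε0, hεlt⟩ := hε
  have hε1 : ε < 1 := hεlt.trans_le (min_le_left _ _)
  have hεη : ε < 1/η := hεlt.trans_le (min_le_right _ _)
  set δ : ℝ := Real.sqrt (ε/η) with hδdef
  have hδ0 : 0 < δ := Real.sqrt_pos.mpr (by positivity)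
  have hδsq : δ ^ 2 = ε/η := Real.sq_sqrt (by positivity)
  have hεδ : ε ≤ δ := by
    have h3 : ε * η < 1 := (lt_div_iff₀ hη).mp hεη
    have h2 : ε ^ 2 ≤ ε / η := by
      rw [le_div_iff₀ hη]
      nlinarith
    calc ε = Real.sqrt (ε ^ 2) := (Real.sqrt_sq hε0.le).symm
      _ ≤ Real.sqrt (ε / η) := Real.sqrt_le_sqrt h2
  set N : Set Ω := {ω | ¬ ∀ j, min (X j ω) (Y j ω) ≤ min (X (I ω) ω) (Y (I ω) ω)} with hNdef
  have hN0 : ℙ N = 0 := ae_iff.mp hmax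
  have hY0 : ∀ i : Fin M, ℙ {ω | Y i ω ≤ 0} = 0 := by
    intro i
    have : {ω | Y i ω ≤ 0} = Y i ⁻¹' (Iic 0) := rfl
    rw [this, ← Measure.map_apply (hmY i) measurableSet_Iic, hY i, expMeasure_Iic_zero]
  -- Part A
  have hA : (ℙ {ω | X (I ω) ω < ε}).toReal ≤ (2*ε) ^ M := by
    have hcov : {ω | X (I ω) ω < ε} ⊆
        (⋃ f : Fin M → Bool,
          evt X Y (fun j => if f j then Iio ε else univ)
                  (fun j => if f j then univ else Iio ε)) ∪ N := by
      intro ω hω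
      by_cases hG : ∀ j, min (X j ω) (Y j ω) ≤ min (X (I ω) ω) (Y (I ω) ω)
      · left
        refine mem_iUnion.mpr ⟨fun j => decide (X j ω < ε), fun j => ?_, fun j => ?_⟩ <;>
          dsimp only <;> split_ifs with hf
        · exact of_decide_eq_true hf
        · trivial
        · trivial
        · have hmin : min (X j ω) (Y j ω) < ε :=
            lt_of_le_of_lt (le_trans (hG j) (min_le_left _ _)) hω
          have hXj : ε ≤ X j ω := by simpa using hf
          rcases min_lt_iff.mp hmin with h | h
          · linarith
          · exact h
      · right; exact hG
    have h1 : ℙ {ω | X (I ω) ω < ε} ≤ 2 ^ M * (ENNReal.ofReal ε) ^ M := by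
      calc ℙ {ω | X (I ω) ω < ε} ≤ ℙ ((⋃ f : Fin M → Bool,
            evt X Y (fun j => if f j then Iio ε else univ)
                    (fun j => if f j then univ else Iio ε)) ∪ N) := measure_mono hcov
        _ ≤ ℙ (⋃ f : Fin M → Bool,
            evt X Y (fun j => if f j then Iio ε else univ)
                    (fun j => if f j then univ else Iio ε)) + ℙ N := measure_union_le _ _
        _ = ℙ (⋃ f : Fin M → Bool,
            evt X Y (fun j => if f j then Iio ε else univ)
                    (fun j => if f j then univ else Iio ε)) := by rw [hN0, add_zero]
        _ ≤ 2 ^ M * (ENNReal.ofReal ε) ^ M := piece_bound_A hmX hmY hindep hX hY ε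
    have h2 : (2:ℝ≥0∞) ^ M * (ENNReal.ofReal ε) ^ M = ENNReal.ofReal ((2*ε) ^ M) := by
      rw [ENNReal.ofReal_pow (by positivity), ENNReal.ofReal_mul (by norm_num), mul_pow]
      congr 1
      rw [ENNReal.ofReal_ofNat]
    rw [h2] at h1
    exact ENNReal.toReal_le_of_le_ofReal (by positivity) h1
  -- Part B
  set TB : Set Ω := {ω | (X (I ω) ω - ε) * Y (I ω) ω < ε / η ∧ ε < X (I ω) ω} with hTBdef
  set U1 : Fin M → ℕ → Set Ω := fun i k => ⋃ f : Fin M → Bool,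
      evt X Y (fun j => if j = i then Ioo ε (ε + δ * 2^(k+1)) else if f j then Iio δ else univ)
              (fun j => if j = i then Ico (δ/2^(k+1)) (δ/2^k) else if f j then univ else Iio δ)
    with hU1def
  set U2 : Fin M → ℕ → Set Ω := fun i k => ⋃ f : Fin M → Bool,
      evt X Y (fun j => if j = i then Ico (ε + δ/2^(k+1)) (ε + δ/2^k)
                        else if f j then Iio (ε+δ) else univ)
              (fun j => if j = i then Iio (δ * 2^(k+1)) else if f j then univ else Iio (ε+δ))
    with hU2def
  have hcovB : TB ⊆ (⋃ i, (({ω | Y i ω ≤ 0} ∪ ⋃ k, U1 i k) ∪ ⋃ k, U2 i k)) ∪ N := by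
    intro ω hω
    by_cases hG : ∀ j, min (X j ω) (Y j ω) ≤ min (X (I ω) ω) (Y (I ω) ω)
    swap
    · right; exact hG
    left
    refine mem_iUnion.mpr ⟨I ω, ?_⟩
    obtain ⟨hprod, hxε⟩ := hω
    by_cases hy : Y (I ω) ω ≤ 0
    · exact Or.inl (Or.inl hy)
    push_neg at hy
    have hu0 : 0 < X (I ω) ω - ε := sub_pos.mpr hxε
    have hδ2 : (X (I ω) ω - ε) * Y (I ω) ω < δ^2 := by rw [hδsq]; exact hprod
    have hminXY : min (X (I ω) ω) (Y (I ω) ω) ≤ Y (I ω) ω := min_le_right _ _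
    have hminXX : min (X (I ω) ω) (Y (I ω) ω) ≤ X (I ω) ω := min_le_left _ _
    rcases le_or_gt (Y (I ω) ω) (X (I ω) ω - ε) with hcase | hcase
    · -- Case 1 : Y small
      have hyδ : Y (I ω) ω < δ := by
        have h1 : Y (I ω) ω ^ 2 < δ ^ 2 := by nlinarith
        exact lt_of_pow_lt_pow_left₀ 2 hδ0.le h1
      obtain ⟨k, hk1, hk2⟩ := dyadic_exists hδ0 hy hyδ
      refine Or.inl (Or.inr (mem_iUnion.mpr ⟨k, mem_iUnion.mpr
        ⟨fun j => decide (X j ω < δ), fun j => ?_, fun j => ?_⟩⟩))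
      · dsimp only
        split_ifs with hj hf
        · subst hj
          refine ⟨hxε, ?_⟩
        -- X (I ω) ω < ε + δ * 2^(k+1)
          by_contra hcon
          push_neg at hcon
          have h5 : δ * 2^(k+1) * (δ / 2^(k+1)) = δ^2 := by
            field_simp
          have h6 : δ^2 ≤ (X (I ω) ω - ε) * Y (I ω) ω := by
            calc δ^2 = δ * 2^(k+1) * (δ / 2^(k+1)) := h5.symm
              _ ≤ (X (I ω) ω - ε) * Y (I ω) ω := by
                  apply mul_le_mul (by linarith) hk1 (by positivity) (by linarith)
          linarith
        · exact of_decide_eq_true hf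
        · trivial
      · dsimp only
        split_ifs with hj hf
        · subst hj
          exact ⟨hk1, hk2⟩
        · trivial
        · have hXj : δ ≤ X j ω := by simpa using hf
          have h2k : (1:ℝ) ≤ 2 ^ k := one_le_pow₀ one_le_two
          have hmin : min (X j ω) (Y j ω) < δ := by
            calc min (X j ω) (Y j ω) ≤ Y (I ω) ω := le_trans (hG j) hminXY
              _ < δ / 2^k := hk2
              _ ≤ δ := by
                  rw [div_le_iff₀ (by positivity)]
                  nlinarith [hδ0]
          rcases min_lt_iff.mp hmin with h | h
          · linarith
          · exact h
    · -- Case 2 : X - ε small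
      have huδ : X (I ω) ω - ε < δ := by
        have h1 : (X (I ω) ω - ε) ^ 2 < δ ^ 2 := by nlinarith
        exact lt_of_pow_lt_pow_left₀ 2 hδ0.le h1
      obtain ⟨k, hk1, hk2⟩ := dyadic_exists hδ0 hu0 huδ
      refine Or.inr (mem_iUnion.mpr ⟨k, mem_iUnion.mpr
        ⟨fun j => decide (X j ω < ε + δ), fun j => ?_, fun j => ?_⟩⟩)
      · dsimp only
        split_ifs with hj hf
        · subst hj
          exact ⟨by linarith, by linarith⟩
        · exact of_decide_eq_true hf
        · trivial
      · dsimp only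
        split_ifs with hj hf
        · subst hj
          -- Y (I ω) ω < δ * 2^(k+1)
          show Y (I ω) ω ∈ Iio (δ * 2 ^ (k+1))
          by_contra hcon
          simp only [mem_Iio, not_lt] at hcon
          have h5 : δ / 2^(k+1) * (δ * 2^(k+1)) = δ^2 := by
            field_simp
          have h6 : δ^2 ≤ (X (I ω) ω - ε) * Y (I ω) ω := by
            calc δ^2 = δ / 2^(k+1) * (δ * 2^(k+1)) := h5.symm
              _ ≤ (X (I ω) ω - ε) * Y (I ω) ω := by
                  apply mul_le_mul hk1 hcon (by positivity) (by linarith)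
          linarith
        · trivial
        · have hXj : ε + δ ≤ X j ω := by simpa using hf
          have h2k : (1:ℝ) ≤ 2 ^ k := one_le_pow₀ one_le_two
          have hmin : min (X j ω) (Y j ω) < ε + δ := by
            calc min (X j ω) (Y j ω) ≤ X (I ω) ω := le_trans (hG j) hminXX
              _ < ε + δ / 2^k := by linarith
              _ ≤ ε + δ := by
                  have : δ / 2^k ≤ δ := by
                    rw [div_le_iff₀ (by positivity)]
                    nlinarith [hδ0]
                  linarith
          rcases min_lt_iff.mp hmin with h | h
          · linarith
          · exact h
  -- per-piece measure bounds
  have hAA : ∀ k : ℕ, ENNReal.ofReal ((δ * 2^(k+1)) ^ (1-θ)) * ENNReal.ofReal (δ/2^k)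
      = ENNReal.ofReal ((2:ℝ)^(1-θ) * δ^(1+(1-θ)))
          * (ENNReal.ofReal ((2:ℝ) ^ ((1 - θ) - 1))) ^ k := by
    intro k
    rw [← ENNReal.ofReal_mul (by positivity), dyadic_alg hδ0 k,
      ENNReal.ofReal_mul (by positivity), ENNReal.ofReal_pow hρ0.le]
  have hU1b : ∀ (i : Fin M) (k : ℕ), ℙ (U1 i k)
      ≤ (2^M * ENNReal.ofReal ((2:ℝ)^(1-θ) * δ^(1+(1-θ)))
          * (ENNReal.ofReal (2*δ))^(M-1)) * (ENNReal.ofReal ((2:ℝ) ^ ((1 - θ) - 1))) ^ k := by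
    intro i k
    have h1 : expMeasure 1 (Ioo ε (ε + δ * 2^(k+1)))
        ≤ ENNReal.ofReal ((δ * 2^(k+1)) ^ (1-θ)) := by
      apply le_ofReal_rpow (by positivity) (expMeasure_le_one _) _ (by linarith) (by linarith)
      refine (expMeasure_Ioo_le _ _).trans (le_of_eq ?_)
      rw [add_sub_cancel_left]
    have h2 : expMeasure 1 (Ico (δ/2^(k+1)) (δ/2^k)) ≤ ENNReal.ofReal (δ/2^k) := by
      refine (expMeasure_Ico_le _ _).trans (ENNReal.ofReal_le_ofReal ?_)
      have : 0 ≤ δ / 2^(k+1) := by positivity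
      linarith
    have hB : ENNReal.ofReal δ ≤ ENNReal.ofReal (2*δ) :=
      ENNReal.ofReal_le_ofReal (by linarith)
    have hpb := piece_bound hmX hmY hindep hX hY i _ _ measurableSet_Ioo measurableSet_Ico
      _ _ _ h1 h2 δ hB
    rw [hU1def]
    refine hpb.trans (le_of_eq ?_)
    rw [show ENNReal.ofReal ((δ * 2^(k+1)) ^ (1-θ)) * ENNReal.ofReal (δ/2^k)
          * (ENNReal.ofReal (2*δ))^(M-1)
        = (ENNReal.ofReal ((δ * 2^(k+1)) ^ (1-θ)) * ENNReal.ofReal (δ/2^k))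
          * (ENNReal.ofReal (2*δ))^(M-1) from by ring, hAA k]
    ring
  have hU2b : ∀ (i : Fin M) (k : ℕ), ℙ (U2 i k)
      ≤ (2^M * ENNReal.ofReal ((2:ℝ)^(1-θ) * δ^(1+(1-θ)))
          * (ENNReal.ofReal (2*δ))^(M-1)) * (ENNReal.ofReal ((2:ℝ) ^ ((1 - θ) - 1))) ^ k := by
    intro i k
    have h1 : expMeasure 1 (Ico (ε + δ/2^(k+1)) (ε + δ/2^k)) ≤ ENNReal.ofReal (δ/2^k) := by
      refine (expMeasure_Ico_le _ _).trans (ENNReal.ofReal_le_ofReal ?_)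
      have : 0 ≤ δ / 2^(k+1) := by positivity
      linarith
    have h2 : expMeasure 1 (Iio (δ * 2^(k+1)))
        ≤ ENNReal.ofReal ((δ * 2^(k+1)) ^ (1-θ)) := by
      apply le_ofReal_rpow (by positivity) (expMeasure_le_one _) (expMeasure_Iio_le _)
        (by linarith) (by linarith)
    have hB : ENNReal.ofReal (ε+δ) ≤ ENNReal.ofReal (2*δ) :=
      ENNReal.ofReal_le_ofReal (by linarith)
    have hpb := piece_bound hmX hmY hindep hX hY i _ _ measurableSet_Ico measurableSet_Iio
      _ _ _ h1 h2 (ε+δ) hB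
    rw [hU2def]
    refine hpb.trans (le_of_eq ?_)
    rw [show ENNReal.ofReal (δ/2^k) * ENNReal.ofReal ((δ * 2^(k+1)) ^ (1-θ))
          * (ENNReal.ofReal (2*δ))^(M-1)
        = (ENNReal.ofReal ((δ * 2^(k+1)) ^ (1-θ)) * ENNReal.ofReal (δ/2^k))
          * (ENNReal.ofReal (2*δ))^(M-1) from by ring, hAA k]
    ring
  have hsum1 : ∀ i : Fin M, ℙ (⋃ k, U1 i k)
      ≤ (2^M * ENNReal.ofReal ((2:ℝ)^(1-θ) * δ^(1+(1-θ))) * (ENNReal.ofReal (2*δ))^(M-1))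
          * (1 - ENNReal.ofReal ((2:ℝ) ^ ((1 - θ) - 1)))⁻¹ := by
    intro i
    calc ℙ (⋃ k, U1 i k) ≤ ∑' k, ℙ (U1 i k) := measure_iUnion_le _
      _ ≤ ∑' k, (2^M * ENNReal.ofReal ((2:ℝ)^(1-θ) * δ^(1+(1-θ)))
            * (ENNReal.ofReal (2*δ))^(M-1)) * (ENNReal.ofReal ((2:ℝ) ^ ((1 - θ) - 1))) ^ k :=
          ENNReal.tsum_le_tsum (hU1b i)
      _ = _ := geom_bound hrlt _
  have hsum2 : ∀ i : Fin M, ℙ (⋃ k, U2 i k)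
      ≤ (2^M * ENNReal.ofReal ((2:ℝ)^(1-θ) * δ^(1+(1-θ))) * (ENNReal.ofReal (2*δ))^(M-1))
          * (1 - ENNReal.ofReal ((2:ℝ) ^ ((1 - θ) - 1)))⁻¹ := by
    intro i
    calc ℙ (⋃ k, U2 i k) ≤ ∑' k, ℙ (U2 i k) := measure_iUnion_le _
      _ ≤ ∑' k, (2^M * ENNReal.ofReal ((2:ℝ)^(1-θ) * δ^(1+(1-θ)))
            * (ENNReal.ofReal (2*δ))^(M-1)) * (ENNReal.ofReal ((2:ℝ) ^ ((1 - θ) - 1))) ^ k :=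
          ENNReal.tsum_le_tsum (hU2b i)
      _ = _ := geom_bound hrlt _
  have hTBle : ℙ TB ≤ (M:ℝ≥0∞) * (2 * ((2^M * ENNReal.ofReal ((2:ℝ)^(1-θ) * δ^(1+(1-θ)))
      * (ENNReal.ofReal (2*δ))^(M-1)) * ENNReal.ofReal G)) := by
    calc ℙ TB ≤ ℙ ((⋃ i, (({ω | Y i ω ≤ 0} ∪ ⋃ k, U1 i k) ∪ ⋃ k, U2 i k)) ∪ N) :=
          measure_mono hcovB
      _ ≤ ℙ (⋃ i, (({ω | Y i ω ≤ 0} ∪ ⋃ k, U1 i k) ∪ ⋃ k, U2 i k)) + ℙ N :=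
          measure_union_le _ _
      _ = ℙ (⋃ i, (({ω | Y i ω ≤ 0} ∪ ⋃ k, U1 i k) ∪ ⋃ k, U2 i k)) := by rw [hN0, add_zero]
      _ ≤ ∑ i : Fin M, ℙ (({ω | Y i ω ≤ 0} ∪ ⋃ k, U1 i k) ∪ ⋃ k, U2 i k) :=
          measure_iUnion_fintype_le _ _
      _ ≤ ∑ _i : Fin M, 2 * ((2^M * ENNReal.ofReal ((2:ℝ)^(1-θ) * δ^(1+(1-θ)))
            * (ENNReal.ofReal (2*δ))^(M-1)) * ENNReal.ofReal G) := by
          refine Finset.sum_le_sum fun i _ => ?_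
          calc ℙ (({ω | Y i ω ≤ 0} ∪ ⋃ k, U1 i k) ∪ ⋃ k, U2 i k)
              ≤ ℙ ({ω | Y i ω ≤ 0} ∪ ⋃ k, U1 i k) + ℙ (⋃ k, U2 i k) := measure_union_le _ _
            _ ≤ (ℙ {ω | Y i ω ≤ 0} + ℙ (⋃ k, U1 i k)) + ℙ (⋃ k, U2 i k) :=
                add_le_add_left (measure_union_le _ _) _
            _ ≤ (0 + (2^M * ENNReal.ofReal ((2:ℝ)^(1-θ) * δ^(1+(1-θ)))
                  * (ENNReal.ofReal (2*δ))^(M-1)) * (1 - ENNReal.ofReal ((2:ℝ) ^ ((1 - θ) - 1)))⁻¹)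
                + (2^M * ENNReal.ofReal ((2:ℝ)^(1-θ) * δ^(1+(1-θ)))
                  * (ENNReal.ofReal (2*δ))^(M-1)) * (1 - ENNReal.ofReal ((2:ℝ) ^ ((1 - θ) - 1)))⁻¹ := by
                refine add_le_add (add_le_add (le_of_eq (hY0 i)) (hsum1 i)) (hsum2 i)
            _ = 2 * ((2^M * ENNReal.ofReal ((2:ℝ)^(1-θ) * δ^(1+(1-θ)))
                  * (ENNReal.ofReal (2*δ))^(M-1)) * ENNReal.ofReal G) := by
                rw [hGg]
                ring
      _ = (M:ℝ≥0∞) * (2 * ((2^M * ENNReal.ofReal ((2:ℝ)^(1-θ) * δ^(1+(1-θ)))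
            * (ENNReal.ofReal (2*δ))^(M-1)) * ENNReal.ofReal G)) := by
          rw [Finset.sum_const, Finset.card_univ, Fintype.card_fin, nsmul_eq_mul]
  have hBreal : (ℙ TB).toReal ≤ (M:ℝ) * (2 * ((2^M * ((2:ℝ)^(1-θ) * δ^(1+(1-θ)))
      * (2*δ)^(M-1)) * G)) := by
    have hfin : (M:ℝ≥0∞) * (2 * ((2^M * ENNReal.ofReal ((2:ℝ)^(1-θ) * δ^(1+(1-θ)))
        * (ENNReal.ofReal (2*δ))^(M-1)) * ENNReal.ofReal G)) ≠ ⊤ := by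
      refine ENNReal.mul_ne_top (ENNReal.natCast_ne_top M) (ENNReal.mul_ne_top (by norm_num)
        (ENNReal.mul_ne_top (ENNReal.mul_ne_top (ENNReal.mul_ne_top ?_ ENNReal.ofReal_ne_top)
          (ENNReal.pow_ne_top ENNReal.ofReal_ne_top)) ENNReal.ofReal_ne_top))
      exact ENNReal.pow_ne_top (by norm_num)
    refine le_trans (ENNReal.toReal_mono hfin hTBle) (le_of_eq ?_)
    simp only [ENNReal.toReal_mul, ENNReal.toReal_pow,
      ENNReal.toReal_ofReal (show (0:ℝ) ≤ (2:ℝ)^(1-θ) * δ^(1+(1-θ)) by positivity),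
      ENNReal.toReal_ofReal (show (0:ℝ) ≤ 2*δ by positivity),
      ENNReal.toReal_ofReal hG0.le, ENNReal.toReal_natCast, ENNReal.toReal_ofNat]
  -- final real arithmetic
  have hM1 : (1:ℝ) ≤ (M:ℝ) := by exact_mod_cast hM
  have hrpA : (2*ε)^M ≤ 2^M * ε ^ (((M:ℝ) + 1)/2 - θ/2) := by
    rw [mul_pow]
    apply mul_le_mul_of_nonneg_left _ (by positivity)
    rw [← Real.rpow_natCast ε M]
    apply Real.rpow_le_rpow_of_exponent_ge hε0 hε1.le
    linarith
  have hδpow : δ^(1+(1-θ)) * (2*δ)^(M-1)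
      = 2^(M-1) * (ε ^ (((M:ℝ) + 1)/2 - θ/2) * (1/η) ^ (((M:ℝ) + 1 - θ)/2)) := by
    rw [mul_pow]
    have e1 : δ^(1+(1-θ)) * δ^(M-1) = δ ^ ((M:ℝ) + 1 - θ) := by
      rw [← Real.rpow_natCast δ (M-1), ← Real.rpow_add hδ0]
      congr 1
      rw [Nat.cast_sub hM]
      push_cast
      ring
    have e2 : δ ^ ((M:ℝ) + 1 - θ) = ε ^ (((M:ℝ) + 1)/2 - θ/2) * (1/η) ^ (((M:ℝ) + 1 - θ)/2) := by
      rw [hδdef, Real.sqrt_eq_rpow, ← Real.rpow_mul (by positivity : (0:ℝ) ≤ ε/η),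
        div_eq_mul_one_div ε η, Real.mul_rpow hε0.le (by positivity)]
      congr 1
      · congr 1
        ring
      · congr 1
        ring
    calc δ^(1+(1-θ)) * (2^(M-1) * δ^(M-1)) = 2^(M-1) * (δ^(1+(1-θ)) * δ^(M-1)) := by ring
      _ = 2^(M-1) * (ε ^ (((M:ℝ) + 1)/2 - θ/2) * (1/η) ^ (((M:ℝ) + 1 - θ)/2)) := by
          rw [e1, e2]
  calc (ℙ {ω | X (I ω) ω < ε}).toReal + (ℙ TB).toReal
      ≤ (2*ε)^M + (M:ℝ) * (2 * ((2^M * ((2:ℝ)^(1-θ) * δ^(1+(1-θ))) * (2*δ)^(M-1)) * G)) :=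
        add_le_add hA hBreal
    _ ≤ 2^M * ε ^ (((M:ℝ) + 1)/2 - θ/2)
        + (M:ℝ) * (2 * ((2^M * ((2:ℝ)^(1-θ) * δ^(1+(1-θ))) * (2*δ)^(M-1)) * G)) :=
        add_le_add_left hrpA _
    _ = ((2:ℝ) ^ M + (M:ℝ) * 2 * 2 ^ M * 2 ^ (1 - θ) * G * 2 ^ (M - 1)
          * (1/η) ^ (((M:ℝ) + 1 - θ)/2)) * ε ^ (((M:ℝ) + 1)/2 - θ/2) := by
        linear_combination ((M:ℝ) * (2 * (2^M * (2:ℝ)^(1-θ) * G))) * hδpow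
end DivAux

set_option maxHeartbeats 1000000 in
/-- **Diversity order of max-min scheduling with an energy-harvesting relay.**
`X₁,…,X_M, Y₁,…,Y_M` are `2M` independent rate-1 exponential random variables, `I` is the
(a.s. unique) index maximizing `min(Xᵢ, Yᵢ)`, `η > 0`, and for `ε > 0`, `ε₁ = ε/η` and
`P_o(ε) = P(X_I < ε) + P((X_I − ε)·Y_I < ε₁ ∧ X_I > ε)`. Then
`lim_{ε→0⁺} log P_o(ε) / log ε = (M+1)/2`. -/
theorem stmt1
    {Ω : Type*} [MeasureSpace Ω] [IsProbabilityMeasure (ℙ : Measure Ω)]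
    (M : ℕ) (hM : 1 ≤ M)
    (X Y : Fin M → Ω → ℝ)
    (hmX : ∀ i, Measurable (X i)) (hmY : ∀ i, Measurable (Y i))
    (hindep : iIndepFun (Sum.elim X Y) ℙ)
    (hX : ∀ i, Measure.map (X i) ℙ = expMeasure 1)
    (hY : ∀ i, Measure.map (Y i) ℙ = expMeasure 1)
    (I : Ω → Fin M) (hI : Measurable I)
    (hmax : ∀ᵐ ω ∂ℙ, ∀ j, min (X j ω) (Y j ω) ≤ min (X (I ω) ω) (Y (I ω) ω))
    (η : ℝ) (hη : 0 < η) :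
    Tendsto
      (fun ε : ℝ =>
        Real.log
            ((ℙ {ω | X (I ω) ω < ε}).toReal +
              (ℙ {ω | (X (I ω) ω - ε) * Y (I ω) ω < ε / η ∧ ε < X (I ω) ω}).toReal)
          / Real.log ε)
      (𝓝[>] 0) (𝓝 (((M : ℝ) + 1) / 2)) := by
  exact DivAux.ratio_tendsto
    (P := fun ε : ℝ =>
      (ℙ {ω | X (I ω) ω < ε}).toReal +
        (ℙ {ω | (X (I ω) ω - ε) * Y (I ω) ω < ε / η ∧ ε < X (I ω) ω}).toReal)
    (L := ((M : ℝ) + 1) / 2)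
    (DivAux.lower_bound hM hmX hmY hindep hX hY I hI hmax η hη)
    (fun θ h0 h1 => DivAux.upper_bound hM hmX hmY hindep hX hY I hI hmax η hη θ h0 h1)
end

section
/- Fix η > 0 and an integer M ≥ 1, and for ε > 0 set ε₁ = ε/η and P_o(ε) = (1 − e^{−ε})^M + Σ_{n=1}^{M} (1 − ∫₀^∞ e^{−y − ε₁/y} dy)^n · C(M,n) · (1 − e^{−ε})^{M−n} · e^{−nε}. Then lim_{ε→0⁺} log P_o(ε) / log ε = M; that is, the proposed user scheduling strategy achieves the full diversity gain M. -/
open Filter Topology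
open MeasureTheory Set Real

-- integrability of the integrand
lemma aux_integrable (c : ℝ) (hc : 0 ≤ c) :
    IntegrableOn (fun y : ℝ => Real.exp (-y - c / y)) (Set.Ioi 0) := by
  apply Integrable.mono' ((exp_neg_integrableOn_Ioi 0 one_pos).congr_fun
    (fun x _ => by beta_reduce; rw [neg_one_mul]) measurableSet_Ioi)
  · refine (ContinuousOn.aestronglyMeasurable ?_ measurableSet_Ioi)
    exact (continuousOn_id.neg.sub (continuousOn_const.div continuousOn_id
      (fun x hx => ne_of_gt hx))).rexp
  · filter_upwards [ae_restrict_mem measurableSet_Ioi] with y hy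
    rw [Real.norm_eq_abs, abs_of_pos (Real.exp_pos _)]
    apply Real.exp_le_exp.2
    have : 0 ≤ c / y := div_nonneg hc (le_of_lt hy)
    linarith

lemma aux_le_one (c : ℝ) (hc : 0 ≤ c) :
    (∫ y in Set.Ioi (0:ℝ), Real.exp (-y - c / y)) ≤ 1 := by
  rw [← integral_exp_neg_Ioi_zero]
  apply setIntegral_mono_on (aux_integrable c hc)
    ((exp_neg_integrableOn_Ioi 0 one_pos).congr_fun
      (fun x _ => by beta_reduce; rw [neg_one_mul]) measurableSet_Ioi) measurableSet_Ioi
  intro y hy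
  apply Real.exp_le_exp.2
  have : 0 ≤ c / y := div_nonneg hc (le_of_lt hy)
  linarith

lemma aux_ge (c t : ℝ) (hc : 0 ≤ c) (ht : 0 < t) (ht1 : t < 1) :
    1 - Real.Gamma t * c ^ (1 - t) ≤ ∫ y in Set.Ioi (0:ℝ), Real.exp (-y - c / y) := by
  have key : (∫ y in Set.Ioi (0:ℝ), (Real.exp (-y) - Real.exp (-y - c / y)))
      ≤ c ^ (1 - t) * Real.Gamma t := by
    rw [Real.Gamma_eq_integral ht, ← MeasureTheory.integral_const_mul]
    apply setIntegral_mono_on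
    · exact ((exp_neg_integrableOn_Ioi 0 one_pos).congr_fun
        (fun x _ => by beta_reduce; rw [neg_one_mul]) measurableSet_Ioi).sub (aux_integrable c hc)
    · exact (Real.GammaIntegral_convergent ht).const_mul _
    · exact measurableSet_Ioi
    intro y hy
    have hy0 : (0:ℝ) < y := hy
    have h1 : Real.exp (-y) - Real.exp (-y - c/y) = Real.exp (-y) * (1 - Real.exp (-(c/y))) := by
      rw [mul_sub, mul_one, ← Real.exp_add]; ring_nf
    have h2 : 1 - Real.exp (-(c/y)) ≤ (c/y) ^ (1 - t) := by
      set x := c / y with hx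
      have hx0 : 0 ≤ x := div_nonneg hc hy0.le
      rcases le_or_gt x 1 with h | h
      · rcases eq_or_lt_of_le hx0 with h0 | h0
        · simp [← h0, Real.zero_rpow (by linarith : (1:ℝ) - t ≠ 0)]
        · calc 1 - Real.exp (-x) ≤ x := by nlinarith [Real.add_one_le_exp (-x)]
          _ = x ^ (1:ℝ) := (Real.rpow_one x).symm
          _ ≤ x ^ (1 - t) := Real.rpow_le_rpow_of_exponent_ge h0 h (by linarith)
      · calc 1 - Real.exp (-x) ≤ 1 := by nlinarith [Real.exp_pos (-x)]
        _ = (1:ℝ) ^ (1 - t) := (Real.one_rpow _).symm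
        _ ≤ x ^ (1 - t) := Real.rpow_le_rpow zero_le_one h.le (by linarith)
    have h3 : (c/y) ^ (1-t) = c ^ (1-t) * y ^ (t-1) := by
      rw [Real.div_rpow hc hy0.le, div_eq_mul_inv, ← Real.rpow_neg hy0.le, neg_sub]
    calc Real.exp (-y) - Real.exp (-y - c/y)
        = Real.exp (-y) * (1 - Real.exp (-(c/y))) := h1
      _ ≤ Real.exp (-y) * ((c/y) ^ (1-t)) := by
          apply mul_le_mul_of_nonneg_left h2 (Real.exp_pos _).le
      _ = c ^ (1-t) * (Real.exp (-y) * y ^ (t-1)) := by rw [h3]; ring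
  have hsub : (∫ y in Set.Ioi (0:ℝ), (Real.exp (-y) - Real.exp (-y - c / y)))
      = 1 - ∫ y in Set.Ioi (0:ℝ), Real.exp (-y - c / y) := by
    rw [integral_sub (((exp_neg_integrableOn_Ioi 0 one_pos).congr_fun
        (fun x _ => by beta_reduce; rw [neg_one_mul]) measurableSet_Ioi)) (aux_integrable c hc),
      integral_exp_neg_Ioi_zero]
  linarith [key, hsub.symm.le, hsub.le]


set_option maxHeartbeats 1000000 in
/-- Fix `η > 0` and `M ≥ 1`. With `ε₁ = ε/η` and
`P_o(ε) = (1 − e^{−ε})^M + Σ_{n=1}^{M} (1 − ∫₀^∞ e^{−y − ε₁/y} dy)^n C(M,n) (1 − e^{−ε})^{M−n} e^{−nε}`,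
we have `lim_{ε→0⁺} log P_o(ε)/log ε = M`: the proposed user scheduling strategy achieves the
full diversity gain `M`. -/
theorem stmt4 (η : ℝ) (hη : 0 < η) (M : ℕ) (hM : 1 ≤ M) :
    Tendsto
      (fun ε : ℝ =>
        Real.log
            ((1 - Real.exp (-ε)) ^ M +
              ∑ n ∈ Finset.Icc 1 M,
                (1 - ∫ y in Set.Ioi (0 : ℝ), Real.exp (-y - (ε / η) / y)) ^ n *
                  (M.choose n : ℝ) * (1 - Real.exp (-ε)) ^ (M - n) * Real.exp (-(n : ℝ) * ε))
          / Real.log ε)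
      (𝓝[>] 0) (𝓝 M) := by
  have hM1 : (1:ℝ) ≤ M := by exact_mod_cast hM
  rw [Metric.tendsto_nhds]
  intro δ hδ
  set t : ℝ := min (1/2) (δ / (4 * M)) with htdef
  clear_value t
  have ht : 0 < t := htdef ▸ lt_min (by norm_num) (div_pos hδ (by positivity))
  have ht1 : t < 1 := by
    rw [htdef]; exact lt_of_le_of_lt (min_le_left _ _) (by norm_num)
  have htM : t * M ≤ δ / 4 := by
    have h1 : t ≤ δ / (4 * M) := by rw [htdef]; exact min_le_right _ _
    have h2 : t * M ≤ (δ / (4 * M)) * M := by nlinarith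
    calc t * M ≤ (δ / (4 * M)) * M := h2
    _ = δ / 4 := by field_simp
  have hΓ : 0 < Real.Gamma t := Real.Gamma_pos_of_pos ht
  have hηp : 0 < η ^ (1 - t) := Real.rpow_pos_of_pos hη _
  set K : ℝ := 1 + ∑ n ∈ Finset.Icc 1 M,
      (M.choose n : ℝ) * (Real.Gamma t / η ^ (1 - t)) ^ n with hKdef
  clear_value K
  have hK1 : 1 ≤ K := by
    rw [hKdef]
    have : 0 ≤ ∑ n ∈ Finset.Icc 1 M, (M.choose n : ℝ) * (Real.Gamma t / η ^ (1 - t)) ^ n :=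
      Finset.sum_nonneg fun n _ => by positivity
    linarith
  have hlogK : 0 ≤ Real.log K := Real.log_nonneg hK1
  set ε₀ : ℝ := Real.exp (-(2 * (M + Real.log K)) / δ) with hε₀def
  clear_value ε₀
  filter_upwards [Ioo_mem_nhdsGT_of_mem (show (0:ℝ) ∈ Set.Ico 0 ε₀ from
    ⟨le_refl _, hε₀def ▸ Real.exp_pos _⟩)] with ε hε
  obtain ⟨hε0, hεε₀⟩ := hε
  have hε₀1 : ε₀ < 1 := by
    rw [hε₀def, Real.exp_lt_one_iff]
    have : 0 < 2 * (M + Real.log K) := by nlinarith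
    exact div_neg_of_neg_of_pos (by linarith) hδ
  have hε1 : ε < 1 := hεε₀.trans hε₀1
  have hlogε : Real.log ε < 0 := Real.log_neg hε0 hε1
  have hlogε' : Real.log ε < -(2 * (M + Real.log K)) / δ := by
    calc Real.log ε < Real.log ε₀ := Real.log_lt_log hε0 hεε₀
    _ = -(2 * (M + Real.log K)) / δ := by rw [hε₀def, Real.log_exp]
  set P : ℝ := (1 - Real.exp (-ε)) ^ M +
      ∑ n ∈ Finset.Icc 1 M,
        (1 - ∫ y in Set.Ioi (0 : ℝ), Real.exp (-y - (ε / η) / y)) ^ n *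
          (M.choose n : ℝ) * (1 - Real.exp (-ε)) ^ (M - n) * Real.exp (-(n : ℝ) * ε) with hPdef
  clear_value P
  have hc : 0 ≤ ε / η := le_of_lt (div_pos hε0 hη)
  set g : ℝ := 1 - ∫ y in Set.Ioi (0 : ℝ), Real.exp (-y - (ε / η) / y) with hgdef
  clear_value g
  have hg0 : 0 ≤ g := by
    rw [hgdef]; have := aux_le_one (ε / η) hc; linarith
  have hgup : g ≤ Real.Gamma t * (ε / η) ^ (1 - t) := by
    rw [hgdef]; have := aux_ge (ε / η) t hc ht ht1; linarith
  have h1e : 0 ≤ 1 - Real.exp (-ε) := by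
    have : Real.exp (-ε) ≤ 1 := Real.exp_le_one_iff.2 (by linarith)
    linarith
  have h1eup : 1 - Real.exp (-ε) ≤ ε := by
    have := Real.add_one_le_exp (-ε); linarith
  have h1elow : ε * Real.exp (-1) ≤ 1 - Real.exp (-ε) := by
    have ha : Real.exp (-1) ≤ Real.exp (-ε) := Real.exp_le_exp.2 (by linarith)
    have hb : ε + 1 ≤ Real.exp ε := Real.add_one_le_exp ε
    have hab : Real.exp (-ε) * Real.exp ε = 1 := by
      rw [← Real.exp_add]; simp
    nlinarith [Real.exp_pos (-ε), Real.exp_pos (-1)]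
  -- lower bound on P
  have hPlow : (ε * Real.exp (-1)) ^ M ≤ P := by
    have h1 : (ε * Real.exp (-1)) ^ M ≤ (1 - Real.exp (-ε)) ^ M :=
      pow_le_pow_left₀ (by positivity) h1elow M
    have h2 : 0 ≤ ∑ n ∈ Finset.Icc 1 M,
        g ^ n * (M.choose n : ℝ) * (1 - Real.exp (-ε)) ^ (M - n) * Real.exp (-(n : ℝ) * ε) :=
      Finset.sum_nonneg fun n _ => by positivity
    rw [hPdef]; linarith
  have hPpos : 0 < P := lt_of_lt_of_le (by positivity) hPlow
  -- upper bound on P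
  have hPup : P ≤ K * ε ^ ((1 - t) * M) := by
    have hr0 : 0 < ε ^ ((1 - t) * M) := Real.rpow_pos_of_pos hε0 _
    have hfirst : (1 - Real.exp (-ε)) ^ M ≤ ε ^ ((1 - t) * M) := by
      calc (1 - Real.exp (-ε)) ^ M ≤ ε ^ M := pow_le_pow_left₀ h1e h1eup M
      _ = ε ^ (M : ℝ) := (Real.rpow_natCast ε M).symm
      _ ≤ ε ^ ((1 - t) * M) := Real.rpow_le_rpow_of_exponent_ge hε0 hε1.le (by nlinarith)
    have hterm : ∀ n ∈ Finset.Icc 1 M,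
        g ^ n * (M.choose n : ℝ) * (1 - Real.exp (-ε)) ^ (M - n) * Real.exp (-(n : ℝ) * ε)
          ≤ (M.choose n : ℝ) * (Real.Gamma t / η ^ (1 - t)) ^ n * ε ^ ((1 - t) * M) := by
      intro n hn
      obtain ⟨hn1, hnM⟩ := Finset.mem_Icc.1 hn
      have hgn : g ^ n ≤ (Real.Gamma t * (ε / η) ^ (1 - t)) ^ n := pow_le_pow_left₀ hg0 hgup n
      have hmid : (1 - Real.exp (-ε)) ^ (M - n) ≤ ε ^ (M - n) := pow_le_pow_left₀ h1e h1eup _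
      have hexp1 : Real.exp (-(n : ℝ) * ε) ≤ 1 := Real.exp_le_one_iff.2 (by
        have : (0:ℝ) ≤ (n:ℝ) * ε := by positivity
        linarith)
      have key : (Real.Gamma t * (ε / η) ^ (1 - t)) ^ n * ε ^ (M - n)
          ≤ (Real.Gamma t / η ^ (1 - t)) ^ n * ε ^ ((1 - t) * M) := by
        have hsplit : (ε / η) ^ (1 - t) = ε ^ (1 - t) / η ^ (1 - t) :=
          Real.div_rpow hε0.le hη.le _
        have hpow : (Real.Gamma t * (ε / η) ^ (1 - t)) ^ n
            = (Real.Gamma t / η ^ (1 - t)) ^ n * (ε ^ (1 - t)) ^ n := by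
          rw [hsplit]; rw [← mul_pow]; ring_nf
        have hεn : (ε ^ (1 - t)) ^ n * ε ^ (M - n) = ε ^ ((1 - t) * n + (M - n : ℕ)) := by
          rw [← Real.rpow_natCast (ε ^ (1 - t)) n, ← Real.rpow_natCast ε (M - n),
            ← Real.rpow_mul hε0.le, ← Real.rpow_add hε0]
        have hexpo : ε ^ ((1 - t) * n + ((M - n : ℕ) : ℝ)) ≤ ε ^ ((1 - t) * M) := by
          apply Real.rpow_le_rpow_of_exponent_ge hε0 hε1.le
          have hcast : ((M - n : ℕ) : ℝ) = (M : ℝ) - n := by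
            rw [Nat.cast_sub hnM]
          rw [hcast]
          have hnMr : (n : ℝ) ≤ M := by exact_mod_cast hnM
          nlinarith
        calc (Real.Gamma t * (ε / η) ^ (1 - t)) ^ n * ε ^ (M - n)
            = (Real.Gamma t / η ^ (1 - t)) ^ n * ((ε ^ (1 - t)) ^ n * ε ^ (M - n)) := by
              rw [hpow]; ring
          _ = (Real.Gamma t / η ^ (1 - t)) ^ n * ε ^ ((1 - t) * n + (M - n : ℕ)) := by
              rw [hεn]
          _ ≤ (Real.Gamma t / η ^ (1 - t)) ^ n * ε ^ ((1 - t) * M) := by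
              apply mul_le_mul_of_nonneg_left hexpo (by positivity)
      calc g ^ n * (M.choose n : ℝ) * (1 - Real.exp (-ε)) ^ (M - n) * Real.exp (-(n : ℝ) * ε)
          ≤ g ^ n * (M.choose n : ℝ) * (1 - Real.exp (-ε)) ^ (M - n) * 1 := by
            apply mul_le_mul_of_nonneg_left hexp1 (by positivity)
        _ = (M.choose n : ℝ) * (g ^ n * (1 - Real.exp (-ε)) ^ (M - n)) := by ring
        _ ≤ (M.choose n : ℝ) * ((Real.Gamma t * (ε / η) ^ (1 - t)) ^ n * ε ^ (M - n)) := by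
            apply mul_le_mul_of_nonneg_left _ (by positivity)
            apply mul_le_mul hgn hmid (by positivity) (by positivity)
        _ ≤ (M.choose n : ℝ) * ((Real.Gamma t / η ^ (1 - t)) ^ n * ε ^ ((1 - t) * M)) := by
            apply mul_le_mul_of_nonneg_left key (by positivity)
        _ = (M.choose n : ℝ) * (Real.Gamma t / η ^ (1 - t)) ^ n * ε ^ ((1 - t) * M) := by ring
    have hsum := Finset.sum_le_sum hterm
    rw [← Finset.sum_mul] at hsum
    rw [hPdef, hKdef]
    calc (1 - Real.exp (-ε)) ^ M + ∑ n ∈ Finset.Icc 1 M,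
          g ^ n * (M.choose n : ℝ) * (1 - Real.exp (-ε)) ^ (M - n) * Real.exp (-(n : ℝ) * ε)
        ≤ ε ^ ((1 - t) * M) + (∑ n ∈ Finset.Icc 1 M,
            (M.choose n : ℝ) * (Real.Gamma t / η ^ (1 - t)) ^ n) * ε ^ ((1 - t) * M) :=
          add_le_add hfirst hsum
      _ = (1 + ∑ n ∈ Finset.Icc 1 M,
            (M.choose n : ℝ) * (Real.Gamma t / η ^ (1 - t)) ^ n) * ε ^ ((1 - t) * M) := by ring
  -- log bounds
  have hlow : (M : ℝ) * (Real.log ε - 1) ≤ Real.log P := by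
    calc (M : ℝ) * (Real.log ε - 1) = Real.log ((ε * Real.exp (-1)) ^ M) := by
          rw [Real.log_pow, Real.log_mul (ne_of_gt hε0) (ne_of_gt (Real.exp_pos _)),
            Real.log_exp]
          push_cast; ring
    _ ≤ Real.log P := Real.log_le_log (by positivity) hPlow
  have hup : Real.log P ≤ Real.log K + (1 - t) * M * Real.log ε := by
    calc Real.log P ≤ Real.log (K * ε ^ ((1 - t) * M)) := Real.log_le_log hPpos hPup
    _ = Real.log K + (1 - t) * M * Real.log ε := by
        rw [Real.log_mul (by linarith) (ne_of_gt (Real.rpow_pos_of_pos hε0 _)),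
          Real.log_rpow hε0]
  -- conclude
  have hkey : δ * Real.log ε < -(2 * (M + Real.log K)) := by
    have := (lt_div_iff₀ hδ).1 hlogε'
    linarith
  have hL : 0 < -Real.log ε := by linarith
  rw [Real.dist_eq, abs_sub_lt_iff]
  constructor
  · rw [sub_lt_iff_lt_add, div_lt_iff_of_neg hlogε]
    nlinarith [hkey, hlow, hlogK, hM1]
  · rw [sub_lt_iff_lt_add, ← sub_lt_iff_lt_add', lt_div_iff_of_neg hlogε]
    have hh : 0 ≤ (δ / 4 - t * M) * (-Real.log ε) :=
      mul_nonneg (by linarith) hL.le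
    nlinarith [hh, hkey, hlogK, hM1, hup]
end

section
/- Let F(t) = 1 − ∫₀^∞ e^{−y − t/y} dy for t > 0. Then lim_{t→0⁺} F(t) / (t·ln(1/t)) = 1. -/
open Filter Topology Set MeasureTheory Real

private lemma intExpNeg' : IntegrableOn (fun y : ℝ => Real.exp (-y)) (Set.Ioi 0) := by
  simpa using exp_neg_integrableOn_Ioi 0 one_pos

private lemma intA' {t : ℝ} (ht : 0 ≤ t) :
    IntegrableOn (fun y : ℝ => Real.exp (-y - t / y)) (Set.Ioi 0) := by
  refine Integrable.mono' intExpNeg' ?_ ?_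
  · apply Measurable.aestronglyMeasurable
    exact (measurable_neg.sub ((measurable_const.div measurable_id))).exp
  · filter_upwards [ae_restrict_mem measurableSet_Ioi] with y hy
    rw [Real.norm_eq_abs, abs_of_pos (Real.exp_pos _)]
    apply Real.exp_le_exp.2
    have : 0 ≤ t / y := div_nonneg ht (le_of_lt hy)
    linarith

private noncomputable def fF' (t : ℝ) : ℝ → ℝ :=
  fun y => Real.exp (-y) - Real.exp (-y - t / y)

private lemma intF' {t : ℝ} (ht : 0 ≤ t) : IntegrableOn (fF' t) (Set.Ioi 0) :=
  intExpNeg'.sub (intA' ht)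

private lemma rewriteF' {t : ℝ} (ht : 0 ≤ t) :
    1 - (∫ y in Set.Ioi (0 : ℝ), Real.exp (-y - t / y)) =
      ∫ y in Set.Ioi (0 : ℝ), fF' t y := by
  rw [show (fun y => fF' t y) = fun y : ℝ => Real.exp (-y) - Real.exp (-y - t / y) from rfl,
    integral_sub intExpNeg' (intA' ht), integral_exp_neg_Ioi_zero]

private lemma fNonneg' {t y : ℝ} (ht : 0 ≤ t) (hy : 0 < y) : 0 ≤ fF' t y := by
  have : 0 ≤ t / y := div_nonneg ht hy.le
  have := Real.exp_le_exp.2 (show -y - t / y ≤ -y by linarith)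
  unfold fF'; linarith

private lemma fLeDiv' {t y : ℝ} (ht : 0 ≤ t) (hy : 0 < y) :
    fF' t y ≤ Real.exp (-y) * (t / y) := by
  have h1 : Real.exp (-y - t / y) = Real.exp (-y) * Real.exp (-(t / y)) := by
    rw [← Real.exp_add]; ring_nf
  have h2 : 1 - t / y ≤ Real.exp (-(t / y)) := by
    have := Real.add_one_le_exp (-(t / y)); linarith
  have h3 : (0:ℝ) < Real.exp (-y) := Real.exp_pos _
  unfold fF'
  rw [h1]
  nlinarith [mul_le_mul_of_nonneg_left h2 h3.le]

private lemma fGe' {t y : ℝ} (ht : 0 ≤ t) (hy : 0 < y) :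
    Real.exp (-y) * (t / y) * Real.exp (-(t / y)) ≤ fF' t y := by
  have h1 : Real.exp (-y - t / y) = Real.exp (-y) * Real.exp (-(t / y)) := by
    rw [← Real.exp_add]; ring_nf
  have h2 : t / y + 1 ≤ Real.exp (t / y) := Real.add_one_le_exp _
  have h3 : (0:ℝ) < Real.exp (-y) := Real.exp_pos _
  have h4 : (0:ℝ) < Real.exp (-(t / y)) := Real.exp_pos _
  have h5 : Real.exp (t / y) * Real.exp (-(t / y)) = 1 := by
    rw [← Real.exp_add]; simp
  have h6 : (t / y + 1) * Real.exp (-(t / y)) ≤ 1 := by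
    calc (t / y + 1) * Real.exp (-(t / y)) ≤ Real.exp (t / y) * Real.exp (-(t / y)) :=
          mul_le_mul_of_nonneg_right h2 h4.le
      _ = 1 := h5
  unfold fF'
  rw [h1]
  nlinarith [mul_le_mul_of_nonneg_left h6 h3.le]

private lemma oneDivIntegrable' {a : ℝ} (ha : 0 < a) (ha1 : a ≤ 1) :
    IntervalIntegrable (fun y : ℝ => 1/y) volume a 1 := by
  apply intervalIntegral.intervalIntegrable_one_div
  · intro x hx
    rw [Set.uIcc_of_le ha1] at hx
    exact (lt_of_lt_of_le ha hx.1).ne'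
  · exact continuousOn_id

private lemma upperB' {t : ℝ} (ht : 0 < t) (ht1 : t ≤ 1) :
    (∫ y in Set.Ioi (0:ℝ), fF' t y) ≤ t * Real.log (1/t) + 2*t := by
  have hsub1 : Set.Ioc (0:ℝ) t ⊆ Set.Ioi 0 := Set.Ioc_subset_Ioi_self
  have hsub2 : Set.Ioc t 1 ⊆ Set.Ioi (0:ℝ) := fun y hy => lt_trans ht hy.1
  have hsub3 : Set.Ioi (1:ℝ) ⊆ Set.Ioi (0:ℝ) := Set.Ioi_subset_Ioi (by norm_num)
  have hint := intF' ht.le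
  have hsplit1 : (∫ y in Set.Ioi (0:ℝ), fF' t y) =
      (∫ y in Set.Ioc (0:ℝ) t, fF' t y) + ∫ y in Set.Ioi t, fF' t y := by
    rw [← setIntegral_union (Set.Ioc_disjoint_Ioi le_rfl) measurableSet_Ioi
      (hint.mono_set hsub1) (hint.mono_set (Set.Ioi_subset_Ioi ht.le)),
      Set.Ioc_union_Ioi_eq_Ioi ht.le]
  have hsplit2 : (∫ y in Set.Ioi t, fF' t y) =
      (∫ y in Set.Ioc t 1, fF' t y) + ∫ y in Set.Ioi (1:ℝ), fF' t y := by
    rw [← setIntegral_union (Set.Ioc_disjoint_Ioi le_rfl) measurableSet_Ioi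
      (hint.mono_set hsub2) (hint.mono_set hsub3),
      Set.Ioc_union_Ioi_eq_Ioi ht1]
  have hP1 : (∫ y in Set.Ioc (0:ℝ) t, fF' t y) ≤ t := by
    have : (∫ y in Set.Ioc (0:ℝ) t, fF' t y) ≤ ∫ _y in Set.Ioc (0:ℝ) t, (1:ℝ) := by
      apply setIntegral_mono_on (hint.mono_set hsub1)
        (integrableOn_const measure_Ioc_lt_top.ne) measurableSet_Ioc
      intro y hy
      have h1 : fF' t y ≤ Real.exp (-y) - 0 := by
        have := Real.exp_pos (-y - t/y); unfold fF'; linarith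
      have h2 : Real.exp (-y) ≤ 1 := Real.exp_le_one_iff.2 (by linarith [hy.1])
      linarith
    simpa [Real.volume_Ioc, ht.le] using this
  have hP2 : (∫ y in Set.Ioc t 1, fF' t y) ≤ t * Real.log (1/t) := by
    have hmono : (∫ y in Set.Ioc t 1, fF' t y) ≤ ∫ y in Set.Ioc t 1, t * (1/y) := by
      apply setIntegral_mono_on (hint.mono_set hsub2) ?_ measurableSet_Ioc
      · intro y hy
        have hy0 : 0 < y := lt_trans ht hy.1
        have h1 := fLeDiv' ht.le hy0
        have h2 : Real.exp (-y) ≤ 1 := Real.exp_le_one_iff.2 (by linarith)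
        have h3 : 0 ≤ t / y := div_nonneg ht.le hy0.le
        calc fF' t y ≤ Real.exp (-y) * (t/y) := h1
          _ ≤ 1 * (t/y) := by nlinarith
          _ = t * (1/y) := by ring
      · exact (intervalIntegrable_iff_integrableOn_Ioc_of_le ht1).1
          ((oneDivIntegrable' ht ht1).const_mul t)
    have hval : (∫ y in Set.Ioc t 1, t * (1/y)) = t * Real.log (1/t) := by
      rw [← intervalIntegral.integral_of_le ht1, intervalIntegral.integral_const_mul,
        integral_one_div_of_pos ht one_pos]
    linarith [hmono, hval.le]
  have hP3 : (∫ y in Set.Ioi (1:ℝ), fF' t y) ≤ t := by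
    have hmono : (∫ y in Set.Ioi (1:ℝ), fF' t y) ≤ ∫ y in Set.Ioi (1:ℝ), t * Real.exp (-y) := by
      apply setIntegral_mono_on (hint.mono_set hsub3) ?_ measurableSet_Ioi
      · intro y hy
        have hy0 : 0 < y := lt_trans one_pos hy
        have h1 := fLeDiv' ht.le hy0
        have h2 : t / y ≤ t := by
          rw [div_le_iff₀ hy0]; nlinarith [Set.mem_Ioi.1 hy]
        have h3 := (Real.exp_pos (-y)).le
        calc fF' t y ≤ Real.exp (-y) * (t/y) := h1
          _ ≤ Real.exp (-y) * t := by nlinarith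
          _ = t * Real.exp (-y) := by ring
      · have : IntegrableOn (fun y : ℝ => Real.exp (-y)) (Set.Ioi 1) := by
          simpa using exp_neg_integrableOn_Ioi 1 one_pos
        exact this.const_mul t
    have hval : (∫ y in Set.Ioi (1:ℝ), t * Real.exp (-y)) = t * Real.exp (-1) := by
      rw [integral_const_mul, integral_exp_neg_Ioi]
    have : t * Real.exp (-1) ≤ t := by
      nlinarith [Real.exp_le_one_iff.2 (show (-1:ℝ) ≤ 0 by norm_num), ht.le,
        (Real.exp_pos (-1)).le]
    linarith
  linarith [hsplit1, hsplit2, hP1, hP2, hP3]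

private lemma lowerB' {t δ : ℝ} (ht : 0 < t) (hδ : 0 < δ) (hδ1 : δ ≤ 1) :
    Real.exp (-(t/δ)) * t * (-Real.log δ - 1) ≤ ∫ y in Set.Ioi (0:ℝ), fF' t y := by
  have hsub : Set.Ioc δ 1 ⊆ Set.Ioi (0:ℝ) := fun y hy => lt_trans hδ hy.1
  set C := Real.exp (-(t/δ)) with hC
  have hC0 : 0 < C := Real.exp_pos _
  have hgint : IntegrableOn (fun y : ℝ => C * (t * (1/y) - t)) (Set.Ioc δ 1) := by
    refine (intervalIntegrable_iff_integrableOn_Ioc_of_le hδ1).1 ?_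
    exact (((oneDivIntegrable' hδ hδ1).const_mul t).sub
      (intervalIntegrable_const)).const_mul C
  have h0 : (∫ y in Set.Ioc δ 1, fF' t y) ≤ ∫ y in Set.Ioi (0:ℝ), fF' t y := by
    apply setIntegral_mono_set (intF' ht.le)
    · filter_upwards [ae_restrict_mem measurableSet_Ioi] with y hy
      exact fNonneg' ht.le hy
    · exact HasSubset.Subset.eventuallyLE hsub
  have h1 : (∫ y in Set.Ioc δ 1, C * (t * (1/y) - t)) ≤ ∫ y in Set.Ioc δ 1, fF' t y := by
    apply setIntegral_mono_on hgint (intF' ht.le |>.mono_set hsub) measurableSet_Ioc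
    intro y hy
    have hy0 : 0 < y := lt_trans hδ hy.1
    have hy1 : y ≤ 1 := hy.2
    have hge := fGe' ht.le hy0
    have hA : (1:ℝ) - y ≤ Real.exp (-y) := by have := Real.add_one_le_exp (-y); linarith
    have hB : C ≤ Real.exp (-(t/y)) := by
      apply Real.exp_le_exp.2
      have : t / y ≤ t / δ := by gcongr; exact hy.1.le
      linarith
    have hx : 0 ≤ t / y := div_nonneg ht.le hy0.le
    have key : C * (t * (1/y) - t) ≤ Real.exp (-y) * (t/y) * Real.exp (-(t/y)) := by
      have heq : t * (1/y) - t = (t/y) * (1-y) := by field_simp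
      rw [heq]
      calc C * ((t/y) * (1-y)) ≤ Real.exp (-(t/y)) * ((t/y) * (1-y)) := by
            apply mul_le_mul_of_nonneg_right hB
            exact mul_nonneg hx (by linarith)
        _ ≤ Real.exp (-(t/y)) * ((t/y) * Real.exp (-y)) := by
            apply mul_le_mul_of_nonneg_left _ (Real.exp_pos _).le
            exact mul_le_mul_of_nonneg_left hA hx
        _ = Real.exp (-y) * (t/y) * Real.exp (-(t/y)) := by ring
    linarith
  have h2 : (∫ y in Set.Ioc δ 1, C * (t * (1/y) - t)) =
      C * (t * Real.log (1/δ) - t * (1 - δ)) := by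
    rw [← intervalIntegral.integral_of_le hδ1, intervalIntegral.integral_const_mul,
      intervalIntegral.integral_sub ((oneDivIntegrable' hδ hδ1).const_mul t)
        intervalIntegrable_const,
      intervalIntegral.integral_const_mul, integral_one_div_of_pos hδ one_pos,
      intervalIntegral.integral_const]
    simp only [smul_eq_mul]
    ring
  have h3 : C * t * (-Real.log δ - 1) ≤ C * (t * Real.log (1/δ) - t * (1 - δ)) := by
    rw [one_div, Real.log_inv]
    nlinarith [mul_nonneg (mul_nonneg hC0.le ht.le) hδ.le]
  linarith

/-- Let `F(t) = 1 − ∫₀^∞ e^{−y − t/y} dy` for `t > 0`. Then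
`lim_{t→0⁺} F(t) / (t ln(1/t)) = 1`. -/
theorem stmt5 :
    Tendsto
      (fun t : ℝ =>
        (1 - ∫ y in Set.Ioi (0 : ℝ), Real.exp (-y - t / y)) / (t * Real.log (1 / t)))
      (𝓝[>] 0) (𝓝 1) := by
  have hL : Tendsto (fun t : ℝ => Real.log (1/t)) (𝓝[>] 0) atTop := by
    have h := Real.tendsto_log_nhdsGT_zero
    have : Tendsto (fun t : ℝ => -Real.log t) (𝓝[>] (0:ℝ)) atTop :=
      tendsto_neg_atBot_atTop.comp h
    refine this.congr fun t => ?_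
    rw [one_div, Real.log_inv]
  have hTL : Tendsto (fun t : ℝ => t * Real.log (1/t)) (𝓝[>] 0) (𝓝 0) := by
    have h : Tendsto (fun t : ℝ => t * Real.log t) (𝓝 0) (𝓝 0) := by
      simpa using Real.continuous_mul_log.tendsto 0
    have h2 : Tendsto (fun t : ℝ => -(t * Real.log t)) (𝓝[>] (0:ℝ)) (𝓝 0) := by
      simpa using (h.mono_left nhdsWithin_le_nhds).neg
    refine h2.congr fun t => ?_
    rw [one_div, Real.log_inv]; ring
  have h1d : Tendsto (fun L : ℝ => 1/L) atTop (𝓝 0) := by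
    simpa [one_div] using tendsto_inv_atTop_zero
  have hlo : Tendsto (fun L : ℝ => Real.exp (-(1/L)) * (1 - Real.log L / L - 1/L))
      atTop (𝓝 1) := by
    have h2 : Tendsto (fun L : ℝ => Real.log L / L) atTop (𝓝 0) :=
      Real.isLittleO_log_id_atTop.tendsto_div_nhds_zero
    have h3 : Tendsto (fun L : ℝ => Real.exp (-(1/L))) atTop (𝓝 1) := by
      have h0 : Tendsto (fun L : ℝ => -(1/L)) atTop (𝓝 0) := by simpa using h1d.neg
      simpa [Function.comp_def] using (Real.continuous_exp.tendsto 0).comp h0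
    have h4 : Tendsto (fun L : ℝ => 1 - Real.log L / L - 1/L) atTop (𝓝 1) := by
      simpa using (tendsto_const_nhds.sub h2).sub h1d
    simpa using h3.mul h4
  have hhi : Tendsto (fun L : ℝ => (1:ℝ) + 2/L) atTop (𝓝 1) := by
    simpa using tendsto_const_nhds.add ((tendsto_const_nhds (x := (2:ℝ))).div_atTop tendsto_id)
  have hev : ∀ᶠ t in 𝓝[>] (0:ℝ), 0 < t ∧ t < 1 ∧ t * Real.log (1/t) < 1 := by
    filter_upwards [self_mem_nhdsWithin,
      (tendsto_id.mono_left nhdsWithin_le_nhds).eventually_lt_const one_pos,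
      hTL.eventually_lt_const one_pos] with t h0 h1 h2
    exact ⟨h0, h1, h2⟩
  refine tendsto_of_tendsto_of_tendsto_of_le_of_le' (hlo.comp hL) (hhi.comp hL) ?_ ?_
  · filter_upwards [hev] with t ⟨ht0, ht1, htl⟩
    set L := Real.log (1/t) with hLdef'
    have hLdef : L = -Real.log t := by rw [hLdef', one_div, Real.log_inv]
    have hL0 : 0 < L := by
      rw [hLdef]; linarith [Real.log_neg ht0 ht1]
    have hδ0 : 0 < t * L := mul_pos ht0 hL0
    have hlow := lowerB' (δ := t * L) ht0 hδ0 htl.le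
    have hdiv : t / (t * L) = 1 / L := by field_simp
    have hlog : Real.log (t * L) = -L + Real.log L := by
      rw [Real.log_mul ht0.ne' hL0.ne', show Real.log t = -L from by rw [hLdef]; ring]
    rw [hdiv, hlog] at hlow
    have hnum := rewriteF' ht0.le
    show Real.exp (-(1/L)) * (1 - Real.log L / L - 1/L) ≤ _
    rw [hnum]
    have heq : Real.exp (-(1/L)) * (1 - Real.log L / L - 1/L) =
        Real.exp (-(1/L)) * t * (-(-L + Real.log L) - 1) / (t * L) := by
      field_simp
      ring
    rw [heq]
    gcongr

  · filter_upwards [hev] with t ⟨ht0, ht1, htl⟩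
    set L := Real.log (1/t) with hLdef'
    have hLdef : L = -Real.log t := by rw [hLdef', one_div, Real.log_inv]
    have hL0 : 0 < L := by
      rw [hLdef]; linarith [Real.log_neg ht0 ht1]
    have hδ0 : 0 < t * L := mul_pos ht0 hL0
    have hup := upperB' ht0 ht1.le
    have hnum := rewriteF' ht0.le
    show _ ≤ (1:ℝ) + 2 / L
    rw [hnum]
    have heq : (1:ℝ) + 2 / L = (t * L + 2 * t) / (t * L) := by
      field_simp
    rw [heq]
    gcongr
end

section
/- For every integer M ≥ 1 and every ε > 0, ∫₀^ε (1 − e^{z−ε}) · 2M · e^{−2z} · (1 − e^{−2z})^{M−1} dz = e^{−ε} · Σ_{i=0}^{M} C(M,i) · ((−1)^i/(2i−1)) · (1 − e^{−(2i−1)ε}). -/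
open Finset

lemma aux_ne (i : ℕ) : (1 - 2*(i:ℝ)) ≠ 0 := by
  rcases i with _ | j
  · norm_num
  · push_cast
    intro h
    nlinarith [Nat.cast_nonneg (α := ℝ) j]

lemma aux_ne' (i : ℕ) : (2*(i:ℝ) - 1) ≠ 0 := by
  have := aux_ne i
  intro h; apply this; linarith

lemma aux_sum (M : ℕ) (z : ℝ) :
    ∑ i ∈ Finset.range (M+1), (M.choose i : ℝ) * (-1)^i * Real.exp ((1 - 2*(i:ℝ))*z)
      = Real.exp z * (1 - Real.exp (-2*z))^M := by
  have h : (1 - Real.exp (-2*z)) = (-Real.exp (-2*z)) + 1 := by ring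
  rw [h, add_pow, Finset.mul_sum]
  refine Finset.sum_congr rfl fun i hi => ?_
  have h1 : (-Real.exp (-2*z))^i = (-1:ℝ)^i * Real.exp ((i:ℝ)*(-2*z)) := by
    rw [neg_pow, Real.exp_nat_mul]
  have h2 : Real.exp ((1 - 2*(i:ℝ))*z) = Real.exp z * Real.exp ((i:ℝ)*(-2*z)) := by
    rw [← Real.exp_add]; ring_nf
  rw [h1, one_pow, h2]
  ring

/-- For every integer `M ≥ 1` and every `ε > 0`,
`∫₀^ε (1 − e^{z−ε}) · 2M e^{−2z} (1 − e^{−2z})^{M−1} dz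
  = e^{−ε} Σ_{i=0}^{M} C(M,i) ((−1)^i/(2i−1)) (1 − e^{−(2i−1)ε})`. -/
theorem stmt6 (M : ℕ) (hM : 1 ≤ M) (ε : ℝ) (hε : 0 < ε) :
    ∫ z in (0 : ℝ)..ε,
        (1 - Real.exp (z - ε)) *
          (2 * (M : ℝ) * Real.exp (-2 * z) * (1 - Real.exp (-2 * z)) ^ (M - 1))
      = Real.exp (-ε) *
          ∑ i ∈ Finset.range (M + 1),
            (M.choose i : ℝ) * ((-1) ^ i / (2 * (i : ℝ) - 1)) *
              (1 - Real.exp (-(2 * (i : ℝ) - 1) * ε)) := by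
  set f : ℝ → ℝ := fun z => (1 - Real.exp (z - ε)) *
          (2 * (M : ℝ) * Real.exp (-2 * z) * (1 - Real.exp (-2 * z)) ^ (M - 1)) with hf
  set G : ℝ → ℝ := fun z => (1 - Real.exp (z - ε)) * (1 - Real.exp (-2*z))^M
      + Real.exp (-ε) * ∑ i ∈ Finset.range (M+1),
          (M.choose i : ℝ) * (-1)^i / (1 - 2*(i:ℝ)) * Real.exp ((1 - 2*(i:ℝ))*z) with hG
  have hderiv : ∀ z : ℝ, HasDerivAt G (f z) z := by
    intro z
    have dA : HasDerivAt (fun z : ℝ => 1 - Real.exp (z - ε)) (-(Real.exp (z - ε))) z := by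
      have := (((hasDerivAt_id z).sub_const ε).exp).const_sub 1
      simpa using this
    have dB : HasDerivAt (fun z : ℝ => (1 - Real.exp (-2*z))^M)
        ((M:ℝ) * (1 - Real.exp (-2*z))^(M-1) * (2 * Real.exp (-2*z))) z := by
      have inner : HasDerivAt (fun z : ℝ => 1 - Real.exp (-2*z)) (2 * Real.exp (-2*z)) z := by
        have := (((hasDerivAt_id z).const_mul (-2:ℝ)).exp).const_sub 1
        simpa using this.congr_deriv (by simp only [id_eq]; ring)
      exact inner.pow M
    have dS : HasDerivAt (fun z : ℝ => ∑ i ∈ Finset.range (M+1),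
          (M.choose i : ℝ) * (-1)^i / (1 - 2*(i:ℝ)) * Real.exp ((1 - 2*(i:ℝ))*z))
        (∑ i ∈ Finset.range (M+1), (M.choose i : ℝ) * (-1)^i * Real.exp ((1 - 2*(i:ℝ))*z)) z := by
      refine HasDerivAt.fun_sum fun i _ => ?_
      have e1 : HasDerivAt (fun z : ℝ => Real.exp ((1 - 2*(i:ℝ))*z))
          (Real.exp ((1 - 2*(i:ℝ))*z) * ((1 - 2*(i:ℝ)) * 1)) z :=
        ((hasDerivAt_id z).const_mul (1 - 2*(i:ℝ))).exp
      have := e1.const_mul ((M.choose i : ℝ) * (-1)^i / (1 - 2*(i:ℝ)))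
      refine this.congr_deriv ?_
      field_simp [aux_ne i]
    have total := (dA.mul dB).add (dS.const_mul (Real.exp (-ε)))
    refine total.congr_deriv ?_
    rw [hf]
    simp only
    rw [Finset.mul_sum]
    have key : Real.exp (-ε) * ∑ i ∈ Finset.range (M+1),
        (M.choose i : ℝ) * (-1)^i * Real.exp ((1 - 2*(i:ℝ))*z)
        = Real.exp (z - ε) * (1 - Real.exp (-2*z))^M := by
      rw [aux_sum, ← mul_assoc, ← Real.exp_add]
      ring_nf
    rw [← Finset.mul_sum, key]
    have hpow : (1 - Real.exp (-2*z))^M = (1 - Real.exp (-2*z)) * (1 - Real.exp (-2*z))^(M-1) := by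
      have hM' : M = (M-1)+1 := by omega
      conv_lhs => rw [hM']
      rw [pow_succ]
      ring
    rw [hpow]
    ring
  have hcont : Continuous f := by
    rw [hf]; fun_prop
  rw [intervalIntegral.integral_eq_sub_of_hasDerivAt (fun z _ => hderiv z)
    (hcont.intervalIntegrable 0 ε)]
  rw [hG]
  simp only
  norm_num [zero_pow (show M ≠ 0 by omega)]
  rw [← mul_sub, ← Finset.sum_sub_distrib]
  congr 1
  refine Finset.sum_congr rfl fun i _ => ?_
  field_simp [aux_ne i, aux_ne' i]
  ring
end

section
/- For every integer M ≥ 1, define Q₁(ε) = e^{−ε} · Σ_{i=0}^{M} C(M,i) · ((−1)^i/(2i−1)) · (1 − e^{−(2i−1)ε}). Then lim_{ε→0⁺} Q₁(ε) / ε^{M+1} = 2^M/(M+1). -/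
open Filter Topology

lemma aux_hasDerivAt (M : ℕ) (ε : ℝ) :
    HasDerivAt (fun ε : ℝ =>
      ∑ i ∈ Finset.range (M + 1),
        (M.choose i : ℝ) * ((-1) ^ i / (2 * (i : ℝ) - 1)) *
          (1 - Real.exp (-(2 * (i : ℝ) - 1) * ε)))
      (Real.exp ε * (1 - Real.exp (-2 * ε)) ^ M) ε := by
  have h : ∀ i ∈ Finset.range (M + 1), HasDerivAt
      (fun ε : ℝ => (M.choose i : ℝ) * ((-1) ^ i / (2 * (i : ℝ) - 1)) *
        (1 - Real.exp (-(2 * (i : ℝ) - 1) * ε)))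
      ((M.choose i : ℝ) * (-1) ^ i * Real.exp (-(2 * (i : ℝ) - 1) * ε)) ε := by
    intro i _
    have hne : (2 * (i : ℝ) - 1) ≠ 0 := by
      rcases Nat.eq_zero_or_pos i with h0 | h1
      · simp [h0]
      · have : (1 : ℝ) ≤ (i : ℝ) := by exact_mod_cast h1
        nlinarith
    have h1 : HasDerivAt (fun ε : ℝ => Real.exp (-(2 * (i : ℝ) - 1) * ε))
        (Real.exp (-(2 * (i : ℝ) - 1) * ε) * (-(2 * (i : ℝ) - 1))) ε := by
      simpa [Function.comp_def] using (Real.hasDerivAt_exp _).comp ε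
        ((hasDerivAt_id ε).const_mul (-(2 * (i : ℝ) - 1)))
    have h2 := (h1.const_sub 1).const_mul
      ((M.choose i : ℝ) * ((-1) ^ i / (2 * (i : ℝ) - 1)))
    refine h2.congr_deriv ?_
    field_simp
  have hsum := HasDerivAt.fun_sum h
  refine hsum.congr_deriv ?_
  have hb : (1 - Real.exp (-2 * ε)) ^ M
      = ∑ i ∈ Finset.range (M + 1),
        (-Real.exp (-2 * ε)) ^ i * (M.choose i : ℝ) := by
    have := add_pow (-Real.exp (-2 * ε)) (1 : ℝ) M
    simp only [one_pow, mul_one] at this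
    rw [sub_eq_add_neg, add_comm, this]
  rw [hb, Finset.mul_sum]
  apply Finset.sum_congr rfl
  intro i _
  have hxe : Real.exp ε * Real.exp (-2 * ε) ^ i = Real.exp (-(2 * (i : ℝ) - 1) * ε) := by
    rw [← Real.exp_nat_mul, ← Real.exp_add]
    ring_nf
  rw [← hxe, neg_pow]
  ring

/-- For every integer `M ≥ 1`, with
`Q₁(ε) = e^{−ε} Σ_{i=0}^{M} C(M,i) ((−1)^i/(2i−1)) (1 − e^{−(2i−1)ε})`,
we have `lim_{ε→0⁺} Q₁(ε)/ε^{M+1} = 2^M/(M+1)`. -/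
theorem stmt7 (M : ℕ) (hM : 1 ≤ M) :
    Tendsto
      (fun ε : ℝ =>
        (Real.exp (-ε) *
            ∑ i ∈ Finset.range (M + 1),
              (M.choose i : ℝ) * ((-1) ^ i / (2 * (i : ℝ) - 1)) *
                (1 - Real.exp (-(2 * (i : ℝ) - 1) * ε))) / ε ^ (M + 1))
      (𝓝[>] 0) (𝓝 (2 ^ M / (M + 1))) := by
  set f : ℝ → ℝ := fun ε =>
    ∑ i ∈ Finset.range (M + 1),
      (M.choose i : ℝ) * ((-1) ^ i / (2 * (i : ℝ) - 1)) *
        (1 - Real.exp (-(2 * (i : ℝ) - 1) * ε)) with hf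
  have hMpos : (0 : ℝ) < (M : ℝ) + 1 := by positivity
  -- limit of slope of (1 - exp(-2x)) at 0
  have hslope : Tendsto (fun ε : ℝ => (1 - Real.exp (-2 * ε)) / ε) (𝓝[>] 0) (𝓝 2) := by
    have hd : HasDerivAt (fun x : ℝ => 1 - Real.exp (-2 * x)) 2 0 := by
      have h1 : HasDerivAt (fun x : ℝ => Real.exp (-2 * x))
          (Real.exp (-2 * (0:ℝ)) * (-2)) 0 := by
        simpa [Function.comp_def] using (Real.hasDerivAt_exp _).comp (0:ℝ)
          ((hasDerivAt_id (0:ℝ)).const_mul (-2 : ℝ))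
      have h2 := h1.const_sub 1
      refine h2.congr_deriv ?_
      norm_num
    have := hasDerivAt_iff_tendsto_slope.mp hd
    have h2 := this.mono_left (nhdsWithin_mono 0 (by intro x hx; exact ne_of_gt hx))
    refine h2.congr ?_
    intro x
    simp [slope_def_field, div_eq_div_iff]
  -- L'Hôpital
  have key : Tendsto (fun ε : ℝ => f ε / ε ^ (M + 1)) (𝓝[>] 0)
      (𝓝 ((2 : ℝ) ^ M / ((M : ℝ) + 1))) := by
    apply HasDerivAt.lhopital_zero_nhdsGT
      (f' := fun ε => Real.exp ε * (1 - Real.exp (-2 * ε)) ^ M)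
      (g' := fun ε => ((M : ℝ) + 1) * ε ^ M)
    · exact Eventually.of_forall fun x => aux_hasDerivAt M x
    · exact Eventually.of_forall fun x => by
        simpa using (hasDerivAt_pow (M + 1) x)
    · filter_upwards [self_mem_nhdsWithin] with x hx
      have : (0:ℝ) < x := hx
      positivity
    · have hc : Continuous f := by
        apply continuous_finset_sum
        intro i _
        exact continuous_const.mul (continuous_const.sub
          (Real.continuous_exp.comp (continuous_const.mul continuous_id)))
      have h0 : f 0 = 0 := by simp [hf]
      have := hc.continuousAt (x := (0:ℝ)).tendsto
      rw [h0] at this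
      exact this.mono_left nhdsWithin_le_nhds
    · have : Tendsto (fun ε : ℝ => ε ^ (M + 1)) (𝓝 0) (𝓝 ((0:ℝ) ^ (M + 1))) :=
        (continuous_pow (M + 1)).continuousAt.tendsto
      simpa using this.mono_left nhdsWithin_le_nhds
    · -- f'/g' → 2^M/(M+1)
      have h1 : Tendsto (fun ε : ℝ =>
          Real.exp ε * ((1 - Real.exp (-2 * ε)) / ε) ^ M / ((M : ℝ) + 1)) (𝓝[>] 0)
          (𝓝 ((2 : ℝ) ^ M / ((M : ℝ) + 1))) := by
        have he : Tendsto (fun ε : ℝ => Real.exp ε) (𝓝[>] 0) (𝓝 1) := by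
          have := Real.continuous_exp.continuousAt (x := (0:ℝ)).tendsto
          rw [Real.exp_zero] at this
          exact this.mono_left nhdsWithin_le_nhds
        have := (he.mul (hslope.pow M)).div_const ((M : ℝ) + 1)
        simpa using this
      refine h1.congr' ?_
      filter_upwards [self_mem_nhdsWithin] with x hx
      have hx0 : x ≠ 0 := ne_of_gt hx
      have hxp : x ^ M ≠ 0 := pow_ne_zero _ hx0
      have hM1 : ((M : ℝ) + 1) ≠ 0 := ne_of_gt hMpos
      rw [div_pow, mul_div_assoc', div_div, mul_comm (x ^ M)]
  -- combine with exp(-ε) → 1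
  have he : Tendsto (fun ε : ℝ => Real.exp (-ε)) (𝓝[>] 0) (𝓝 1) := by
    have : Tendsto (fun ε : ℝ => Real.exp (-ε)) (𝓝 0) (𝓝 (Real.exp (-0))) :=
      (Real.continuous_exp.comp continuous_neg).continuousAt.tendsto
    simpa using this.mono_left nhdsWithin_le_nhds
  have := he.mul key
  rw [one_mul] at this
  refine this.congr ?_
  intro x
  rw [mul_div_assoc]
end

section
/- For every integer M ≥ 1, lim_{ε→0⁺} ε^{−M} · Σ_{i=0}^{M−1} C(M−1,i) · (−1)^i · (1 − e^{−(2i+1)ε})/(2i+1) = 2^{M−1}/M. -/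
open Filter Topology

/-- For every integer `M ≥ 1`,
`lim_{ε→0⁺} ε^{−M} Σ_{i=0}^{M−1} C(M−1,i) (−1)^i (1 − e^{−(2i+1)ε})/(2i+1) = 2^{M−1}/M`. -/
theorem stmt9 (M : ℕ) (hM : 1 ≤ M) :
    Tendsto
      (fun ε : ℝ =>
        ε ^ (-(M : ℤ)) *
          ∑ i ∈ Finset.range M,
            ((M - 1).choose i : ℝ) * (-1) ^ i *
              ((1 - Real.exp (-(2 * (i : ℝ) + 1) * ε)) / (2 * (i : ℝ) + 1)))
      (𝓝[>] 0) (𝓝 (2 ^ (M - 1) / M)) := by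
  have hMn : M = (M - 1) + 1 := (Nat.succ_pred_eq_of_pos hM).symm
  set n := M - 1 with hn
  set f : ℝ → ℝ := fun ε => ∑ i ∈ Finset.range M,
      ((M - 1).choose i : ℝ) * (-1) ^ i *
        ((1 - Real.exp (-(2 * (i : ℝ) + 1) * ε)) / (2 * (i : ℝ) + 1)) with hf
  -- derivative of f
  have hderiv : ∀ ε : ℝ, HasDerivAt f
      (Real.exp (-ε) * (1 - Real.exp (-2 * ε)) ^ n) ε := by
    intro ε
    have h1 : HasDerivAt f (∑ i ∈ Finset.range M,
        ((M - 1).choose i : ℝ) * (-1) ^ i * Real.exp (-(2 * (i : ℝ) + 1) * ε)) ε := by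
      apply HasDerivAt.fun_sum
      intro i _
      have hc : (2 * (i : ℝ) + 1) ≠ 0 := by positivity
      have h2 : HasDerivAt (fun x : ℝ => -(2 * (i : ℝ) + 1) * x)
          (-(2 * (i : ℝ) + 1)) ε := by
        simpa using (hasDerivAt_id ε).const_mul (-(2 * (i : ℝ) + 1))
      have h3 := h2.exp
      have h4 := ((hasDerivAt_const ε (1 : ℝ)).fun_sub h3).div_const (2 * (i : ℝ) + 1)
      have h5 := h4.const_mul (((M - 1).choose i : ℝ) * (-1) ^ i)
      refine h5.congr_deriv ?_
      field_simp
      ring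
    have hbin : (∑ i ∈ Finset.range M,
        ((M - 1).choose i : ℝ) * (-1) ^ i * Real.exp (-(2 * (i : ℝ) + 1) * ε))
        = Real.exp (-ε) * (1 - Real.exp (-2 * ε)) ^ n := by
      have hap := add_pow (-Real.exp (-2 * ε)) 1 n
      rw [show (1 : ℝ) - Real.exp (-2 * ε) = -Real.exp (-2 * ε) + 1 by ring, hap,
        Finset.mul_sum, ← hMn]
      refine Finset.sum_congr rfl fun i _ => ?_
      have e1 : (-Real.exp (-2 * ε)) ^ i = (-1 : ℝ) ^ i * Real.exp ((i : ℝ) * (-2 * ε)) := by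
        rw [neg_pow, ← Real.exp_nat_mul]
      have e2 : Real.exp (-ε) * Real.exp ((i : ℝ) * (-2 * ε))
          = Real.exp (-(2 * (i : ℝ) + 1) * ε) := by
        rw [← Real.exp_add]; congr 1; ring
      rw [e1, one_pow, mul_one,
        show Real.exp (-ε) * ((-1 : ℝ) ^ i * Real.exp ((i : ℝ) * (-2 * ε)) * ((n).choose i : ℝ))
          = ((n).choose i : ℝ) * (-1) ^ i * (Real.exp (-ε) * Real.exp ((i : ℝ) * (-2 * ε))) from
          by ring, e2, hn]
    rw [← hbin]; exact h1
  -- key limit: (1 - exp(-2ε))/ε → 2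
  have hslope : Tendsto (fun ε : ℝ => (1 - Real.exp (-2 * ε)) / ε) (𝓝[>] 0) (𝓝 2) := by
    have hd : HasDerivAt (fun x : ℝ => 1 - Real.exp (-2 * x)) 2 0 := by
      have h2 : HasDerivAt (fun x : ℝ => -2 * x) (-2 : ℝ) 0 := by
        simpa using (hasDerivAt_id (0:ℝ)).const_mul (-2 : ℝ)
      have := (hasDerivAt_const (0:ℝ) (1 : ℝ)).fun_sub h2.exp
      refine this.congr_deriv ?_
      simp
    have := hasDerivAt_iff_tendsto_slope.mp hd
    have h2 : Tendsto (slope (fun x : ℝ => 1 - Real.exp (-2 * x)) 0) (𝓝[>] 0) (𝓝 2) :=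
      this.mono_left (nhdsWithin_mono _ (fun x hx => ne_of_gt hx))
    refine h2.congr' ?_
    filter_upwards [self_mem_nhdsWithin] with x hx
    simp [slope_def_field, div_eq_div_iff (ne_of_gt (Set.mem_Ioi.mp hx))]
  -- limit of f'/g'
  have hdiv : Tendsto (fun ε : ℝ =>
      (Real.exp (-ε) * (1 - Real.exp (-2 * ε)) ^ n) / ((M : ℝ) * ε ^ (M - 1)))
      (𝓝[>] 0) (𝓝 (2 ^ (M - 1) / M)) := by
    have hexp : Tendsto (fun ε : ℝ => Real.exp (-ε)) (𝓝[>] 0) (𝓝 1) := by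
      have : ContinuousAt (fun ε : ℝ => Real.exp (-ε)) 0 := by fun_prop
      simpa using this.continuousWithinAt.tendsto
    have hpow : Tendsto (fun ε : ℝ => ((1 - Real.exp (-2 * ε)) / ε) ^ n)
        (𝓝[>] 0) (𝓝 (2 ^ n)) := hslope.pow n
    have hmain := (hexp.mul hpow).div_const (M : ℝ)
    rw [one_mul] at hmain
    refine hmain.congr' ?_
    filter_upwards [self_mem_nhdsWithin] with x hx
    have hx0 : x ≠ 0 := ne_of_gt hx
    have hxn : x ^ n ≠ 0 := pow_ne_zero _ hx0
    have hM0 : (M : ℝ) ≠ 0 := Nat.cast_ne_zero.mpr (by omega)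
    rw [← hn, div_pow, ← mul_div_assoc, div_div, mul_comm (x ^ n) (M : ℝ)]
  -- f → 0 and g → 0
  have hf0 : Tendsto f (𝓝[>] 0) (𝓝 0) := by
    have hc : Continuous f := by
      rw [hf]; exact continuous_finset_sum _ fun i _ => by fun_prop
    have hfz : f 0 = 0 := by simp [hf]
    have h := (hc.continuousWithinAt (s := Set.Ioi 0) (x := 0)).tendsto
    rw [hfz] at h
    exact h
  have hg0 : Tendsto (fun ε : ℝ => ε ^ M) (𝓝[>] 0) (𝓝 0) := by
    have : ContinuousAt (fun ε : ℝ => ε ^ M) 0 := by fun_prop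
    have h := (this.continuousWithinAt (s := Set.Ioi 0)).tendsto
    simpa [zero_pow (by omega : M ≠ 0)] using h
  -- L'Hôpital
  have hlh : Tendsto (fun ε : ℝ => f ε / ε ^ M) (𝓝[>] 0) (𝓝 (2 ^ (M - 1) / M)) := by
    apply HasDerivAt.lhopital_zero_nhdsGT
      (f' := fun ε => Real.exp (-ε) * (1 - Real.exp (-2 * ε)) ^ n)
      (g' := fun ε => (M : ℝ) * ε ^ (M - 1))
    · exact Eventually.of_forall fun x => hderiv x
    · exact Eventually.of_forall fun x => by
        simpa using hasDerivAt_pow M x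
    · filter_upwards [self_mem_nhdsWithin] with x hx
      have : (0:ℝ) < x := hx
      positivity
    · exact hf0
    · exact hg0
    · exact hdiv
  refine hlh.congr' ?_
  filter_upwards [self_mem_nhdsWithin] with x hx
  rw [div_eq_inv_mul, ← zpow_natCast x M, ← zpow_neg]
end

section
/- Fix an integer M ≥ 2. For ε > 0 set ε₀(ε) = (ε + √(ε² + 4ε))/2, and define Q₂(ε) = 2M · Σ_{i=0}^{M−1} C(M−1,i) · (−1)^i · [ (e^{−ε} − e^{−(2i+2)ε})/(2i+1) + (e^{−(2i+2)ε} − e^{−(2i+2)ε₀(ε)})/(2i+2) − e^{−ε} · ∫₀^{ε₀(ε)} e^{−(2i+1)y − ε/y} dy ]. Then lim_{ε→0⁺} log Q₂(ε) / log ε = (M+1)/2. -/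
open Real Filter Topology MeasureTheory Set

lemma int_exp_mul (c a b : ℝ) (hc : c ≠ 0) :
    ∫ x in a..b, Real.exp (c*x) = (Real.exp (c*b) - Real.exp (c*a))/c := by
  have h : ∀ x : ℝ, HasDerivAt (fun y => Real.exp (c*y)/c) (Real.exp (c*x)) x := by
    intro x
    have := ((hasDerivAt_id x).const_mul c).exp
    simpa [mul_comm, mul_div_assoc, mul_div_cancel_left₀ _ hc] using this.div_const c
  rw [intervalIntegral.integral_eq_sub_of_hasDerivAt (fun x _ => h x)
    ((Real.continuous_exp.comp (continuous_const.mul continuous_id)).intervalIntegrable a b)]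
  ring

lemma meas_aux (c e : ℝ) : Measurable (fun y : ℝ => Real.exp (-c*y - e/y)) :=
  Real.measurable_exp.comp (((measurable_const.mul measurable_id)).sub
    (measurable_const.div measurable_id))

lemma II_sing (c e u v : ℝ) (hc : 0 ≤ c) (he : 0 ≤ e) (hu : 0 ≤ u) (huv : u ≤ v) :
    IntervalIntegrable (fun y : ℝ => Real.exp (-c*y - e/y)) volume u v := by
  apply IntervalIntegrable.mono_fun (intervalIntegrable_const (c := (1:ℝ)))
    (meas_aux c e).aestronglyMeasurable
  rw [Filter.EventuallyLE, ae_restrict_iff' measurableSet_uIoc]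
  refine Filter.Eventually.of_forall (fun y hy => ?_)
  rw [Set.uIoc_of_le huv] at hy
  have hy0 : 0 < y := lt_of_le_of_lt hu hy.1
  have hle : -c*y - e/y ≤ 0 := by
    have h1 : 0 ≤ c*y := mul_nonneg hc hy0.le
    have h2 : 0 ≤ e/y := div_nonneg he hy0.le
    linarith
  simp only [norm_eq_abs, abs_of_pos (Real.exp_pos _), abs_one]
  exact Real.exp_le_one_iff.mpr hle

lemma prod_sing_eq (c e : ℝ) :
    (fun y : ℝ => Real.exp (-c*y) * Real.exp (-(e + e/y)))
      = fun y : ℝ => Real.exp (-e) * Real.exp (-c*y - e/y) := by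
  funext y; rw [← Real.exp_add, ← Real.exp_add]; congr 1; ring

lemma II_sing' (c e u v : ℝ) (hc : 0 ≤ c) (he : 0 ≤ e) (hu : 0 ≤ u) (huv : u ≤ v) :
    IntervalIntegrable (fun y : ℝ => Real.exp (-c*y) * Real.exp (-(e + e/y))) volume u v := by
  rw [prod_sing_eq]
  exact (II_sing c e u v hc he hu huv).const_mul _

lemma cont_part (c e : ℝ) : Continuous (fun y : ℝ => Real.exp (-c*y) * Real.exp (-(max y e))) := by
  have h1 : Continuous fun y : ℝ => -c*y := by fun_prop
  have h2 : Continuous fun y : ℝ => -(max y e) := (continuous_id.max continuous_const).neg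
  exact (Real.continuous_exp.comp h1).mul (Real.continuous_exp.comp h2)

lemma bracket_eq (i : ℕ) {e : ℝ} (he : 0 < e) {E : ℝ} (hE : e < E) :
    (Real.exp (-e) - Real.exp (-(2*(i:ℝ)+2)*e)) / (2*(i:ℝ)+1)
      + (Real.exp (-(2*(i:ℝ)+2)*e) - Real.exp (-(2*(i:ℝ)+2)*E)) / (2*(i:ℝ)+2)
      - Real.exp (-e) * ∫ y in (0:ℝ)..E, Real.exp (-(2*(i:ℝ)+1)*y - e/y)
    = ∫ y in (0:ℝ)..E, Real.exp (-(2*(i:ℝ)+1)*y)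
        * (Real.exp (-(max y e)) - Real.exp (-(e + e/y))) := by
  set c : ℝ := 2*(i:ℝ)+1 with hcdef
  have hc : 0 < c := by positivity
  have hc1 : (0:ℝ) < c + 1 := by positivity
  have h22 : 2*(i:ℝ)+2 = c + 1 := by rw [hcdef]; ring
  have hE0 : (0:ℝ) < E := he.trans hE
  -- RHS = ∫ f1 - ∫ f2
  have hi1 : IntervalIntegrable (fun y : ℝ => Real.exp (-c*y) * Real.exp (-(max y e)))
      volume 0 E := (cont_part c e).intervalIntegrable 0 E
  have hi2 : IntervalIntegrable (fun y : ℝ => Real.exp (-c*y) * Real.exp (-(e + e/y)))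
      volume 0 E := II_sing' c e 0 E hc.le he.le le_rfl hE0.le
  have hrhs : (∫ y in (0:ℝ)..E, Real.exp (-c*y)
        * (Real.exp (-(max y e)) - Real.exp (-(e + e/y))))
      = (∫ y in (0:ℝ)..E, Real.exp (-c*y) * Real.exp (-(max y e)))
        - ∫ y in (0:ℝ)..E, Real.exp (-c*y) * Real.exp (-(e + e/y)) := by
    rw [← intervalIntegral.integral_sub hi1 hi2]
    apply intervalIntegral.integral_congr
    intro y _; simp [mul_sub]
  -- first integral split
  have hsplit : (∫ y in (0:ℝ)..E, Real.exp (-c*y) * Real.exp (-(max y e)))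
      = (∫ y in (0:ℝ)..e, Real.exp (-c*y) * Real.exp (-(max y e)))
        + ∫ y in e..E, Real.exp (-c*y) * Real.exp (-(max y e)) :=
    (intervalIntegral.integral_add_adjacent_intervals
      ((cont_part c e).intervalIntegrable 0 e) ((cont_part c e).intervalIntegrable e E)).symm
  have hI1 : (∫ y in (0:ℝ)..e, Real.exp (-c*y) * Real.exp (-(max y e)))
      = Real.exp (-e) * ((Real.exp (-c*e) - 1)/(-c)) := by
    have : (∫ y in (0:ℝ)..e, Real.exp (-c*y) * Real.exp (-(max y e)))
        = ∫ y in (0:ℝ)..e, Real.exp (-e) * Real.exp (-c*y) := by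
      apply intervalIntegral.integral_congr
      intro y hy
      rw [Set.uIcc_of_le he.le] at hy
      dsimp only
      rw [max_eq_right hy.2, mul_comm]
    rw [this, intervalIntegral.integral_const_mul]
    congr 1
    have := int_exp_mul (-c) 0 e (neg_ne_zero.mpr (ne_of_gt hc))
    simpa [neg_mul, mul_zero, Real.exp_zero] using this
  have hI2 : (∫ y in e..E, Real.exp (-c*y) * Real.exp (-(max y e)))
      = (Real.exp (-(c+1)*E) - Real.exp (-(c+1)*e))/(-(c+1)) := by
    have : (∫ y in e..E, Real.exp (-c*y) * Real.exp (-(max y e)))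
        = ∫ y in e..E, Real.exp (-(c+1)*y) := by
      apply intervalIntegral.integral_congr
      intro y hy
      rw [Set.uIcc_of_le hE.le] at hy
      dsimp only
      rw [max_eq_left hy.1, ← Real.exp_add]
      congr 1; ring
    rw [this]
    have := int_exp_mul (-(c+1)) e E (neg_ne_zero.mpr (ne_of_gt hc1))
    simpa [neg_mul] using this
  -- second integral
  have hI3 : (∫ y in (0:ℝ)..E, Real.exp (-c*y) * Real.exp (-(e + e/y)))
      = Real.exp (-e) * ∫ y in (0:ℝ)..E, Real.exp (-c*y - e/y) := by
    rw [prod_sing_eq, intervalIntegral.integral_const_mul]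
  rw [h22]
  show (Real.exp (-e) - Real.exp (-(c+1)*e)) / c
      + (Real.exp (-(c+1)*e) - Real.exp (-(c+1)*E)) / (c+1)
      - Real.exp (-e) * ∫ y in (0:ℝ)..E, Real.exp (-c*y - e/y)
    = ∫ y in (0:ℝ)..E, Real.exp (-c*y) * (Real.exp (-(max y e)) - Real.exp (-(e + e/y)))
  rw [hrhs, hsplit, hI1, hI2, hI3]
  have h1 : Real.exp (-(c+1)*e) = Real.exp (-e) * Real.exp (-c*e) := by
    rw [← Real.exp_add]; congr 1; ring
  have e1 : (Real.exp (-e) - Real.exp (-(c+1)*e))/c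
      = Real.exp (-e) * ((Real.exp (-c*e) - 1)/(-c)) := by
    rw [h1]; field_simp [hc.ne']; ring
  have e2 : (Real.exp (-(c+1)*e) - Real.exp (-(c+1)*E))/(c+1)
      = (Real.exp (-(c+1)*E) - Real.exp (-(c+1)*e))/(-(c+1)) := by
    rw [div_neg, ← neg_div, neg_sub]
  rw [e1, e2]

lemma binom_key (M : ℕ) (hM : 2 ≤ M) (y : ℝ) :
    ∑ i ∈ Finset.range M, ((M-1).choose i : ℝ) * (-1)^i * Real.exp (-(2*(i:ℝ)+1)*y)
      = Real.exp (-y) * (1 - Real.exp (-2*y))^(M-1) := by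
  have hM1 : M - 1 + 1 = M := by omega
  have hbin := add_pow (-Real.exp (-2*y)) 1 (M-1)
  rw [hM1] at hbin
  have h1 : (1 - Real.exp (-2*y))^(M-1) = (-Real.exp (-2*y) + 1)^(M-1) := by ring_nf
  rw [h1, hbin, Finset.mul_sum]
  apply Finset.sum_congr rfl
  intro i hi
  have hexp : Real.exp (-(2*(i:ℝ)+1)*y) = Real.exp (-y) * Real.exp (-2*y)^i := by
    rw [← Real.exp_nat_mul, ← Real.exp_add]; congr 1; ring
  rw [hexp, neg_pow, one_pow]
  ring

lemma fi_integrable (i : ℕ) {e : ℝ} (he : 0 < e) {u v : ℝ} (hu : 0 ≤ u) (huv : u ≤ v) :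
    IntervalIntegrable (fun y : ℝ => Real.exp (-(2*(i:ℝ)+1)*y)
      * (Real.exp (-(max y e)) - Real.exp (-(e + e/y)))) volume u v := by
  have hc : (0:ℝ) ≤ 2*(i:ℝ)+1 := by positivity
  have heq : (fun y : ℝ => Real.exp (-(2*(i:ℝ)+1)*y)
      * (Real.exp (-(max y e)) - Real.exp (-(e + e/y))))
      = fun y : ℝ => Real.exp (-(2*(i:ℝ)+1)*y) * Real.exp (-(max y e))
        - Real.exp (-(2*(i:ℝ)+1)*y) * Real.exp (-(e + e/y)) := by
    funext y; ring
  rw [heq]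
  exact ((cont_part _ e).intervalIntegrable u v).sub (II_sing' _ e u v hc he.le hu huv)

lemma sum_eq (M : ℕ) (hM : 2 ≤ M) {e E : ℝ} (he : 0 < e) (hE : e < E) :
    ∑ i ∈ Finset.range M, ((M-1).choose i : ℝ) * (-1)^i *
      ((Real.exp (-e) - Real.exp (-(2*(i:ℝ)+2)*e)) / (2*(i:ℝ)+1)
        + (Real.exp (-(2*(i:ℝ)+2)*e) - Real.exp (-(2*(i:ℝ)+2)*E)) / (2*(i:ℝ)+2)
        - Real.exp (-e) * ∫ y in (0:ℝ)..E, Real.exp (-(2*(i:ℝ)+1)*y - e/y))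
    = ∫ y in (0:ℝ)..E, Real.exp (-y) * (1 - Real.exp (-2*y))^(M-1)
        * (Real.exp (-(max y e)) - Real.exp (-(e + e/y))) := by
  have hE0 : (0:ℝ) < E := he.trans hE
  have step1 : ∀ i ∈ Finset.range M, ((M-1).choose i : ℝ) * (-1)^i *
      ((Real.exp (-e) - Real.exp (-(2*(i:ℝ)+2)*e)) / (2*(i:ℝ)+1)
        + (Real.exp (-(2*(i:ℝ)+2)*e) - Real.exp (-(2*(i:ℝ)+2)*E)) / (2*(i:ℝ)+2)
        - Real.exp (-e) * ∫ y in (0:ℝ)..E, Real.exp (-(2*(i:ℝ)+1)*y - e/y))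
      = ∫ y in (0:ℝ)..E, ((M-1).choose i : ℝ) * (-1)^i *
          (Real.exp (-(2*(i:ℝ)+1)*y) * (Real.exp (-(max y e)) - Real.exp (-(e + e/y)))) := by
    intro i _
    rw [bracket_eq i he hE, intervalIntegral.integral_const_mul]
  rw [Finset.sum_congr rfl step1,
    ← intervalIntegral.integral_finset_sum (fun i _ => (fi_integrable i he le_rfl hE0.le).const_mul _)]
  apply intervalIntegral.integral_congr
  intro y _
  dsimp only
  calc ∑ i ∈ Finset.range M, ((M-1).choose i : ℝ) * (-1)^i *
        (Real.exp (-(2*(i:ℝ)+1)*y) * (Real.exp (-(max y e)) - Real.exp (-(e + e/y))))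
      = (∑ i ∈ Finset.range M, ((M-1).choose i : ℝ) * (-1)^i * Real.exp (-(2*(i:ℝ)+1)*y))
          * (Real.exp (-(max y e)) - Real.exp (-(e + e/y))) := by
        rw [Finset.sum_mul]; apply Finset.sum_congr rfl; intros; ring
    _ = Real.exp (-y) * (1 - Real.exp (-2*y))^(M-1)
          * (Real.exp (-(max y e)) - Real.exp (-(e + e/y))) := by rw [binom_key M hM y]

-- E e := (e + sqrt (e^2+4e))/2
lemma hs_sq {e : ℝ} (he : 0 < e) : (Real.sqrt (e^2+4*e))^2 = e^2+4*e :=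
  Real.sq_sqrt (by nlinarith)

lemma E_facts {e : ℝ} (he : 0 < e) :
    0 < (e + Real.sqrt (e^2+4*e))/2
      ∧ ((e + Real.sqrt (e^2+4*e))/2)^2 = e*((e + Real.sqrt (e^2+4*e))/2) + e
      ∧ e < (e + Real.sqrt (e^2+4*e))/2 := by
  have hs := hs_sq he
  have hs0 : 0 ≤ Real.sqrt (e^2+4*e) := Real.sqrt_nonneg _
  have hse : e < Real.sqrt (e^2+4*e) := by nlinarith [hs_sq he]
  refine ⟨by nlinarith, by nlinarith, by nlinarith⟩

lemma E_le {e : ℝ} (he : 0 < e) (he1 : e ≤ 1) :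
    (e + Real.sqrt (e^2+4*e))/2 ≤ 2 * Real.sqrt e := by
  have h1 : Real.sqrt (e^2+4*e) ≤ 3 * Real.sqrt e := by
    rw [show (3:ℝ) * Real.sqrt e = Real.sqrt (9*e) by
      rw [show (9:ℝ)*e = 3^2 * e by ring, Real.sqrt_mul (by norm_num), Real.sqrt_sq (by norm_num)]]
    apply Real.sqrt_le_sqrt; nlinarith
  have h2 : e ≤ Real.sqrt e := by
    nlinarith [Real.sq_sqrt he.le, Real.sqrt_nonneg e]
  linarith

lemma sqrt_le_E {e : ℝ} (he : 0 < e) : Real.sqrt e ≤ (e + Real.sqrt (e^2+4*e))/2 := by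
  have h1 : 2 * Real.sqrt e ≤ Real.sqrt (e^2+4*e) := by
    rw [show (2:ℝ) * Real.sqrt e = Real.sqrt (4*e) by
      rw [show (4:ℝ)*e = 2^2 * e by ring, Real.sqrt_mul (by norm_num), Real.sqrt_sq (by norm_num)]]
    apply Real.sqrt_le_sqrt; nlinarith
  linarith
-- quadratic fact
lemma quad_le {e y : ℝ} (he : 0 < e) (hy : 0 < y) (hyE : y ≤ (e + Real.sqrt (e^2+4*e))/2) :
    y^2 ≤ e*y + e := by
  have hs := hs_sq he
  have hs0 : 0 ≤ Real.sqrt (e^2+4*e) := Real.sqrt_nonneg _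
  nlinarith [mul_nonneg (show (0:ℝ) ≤ Real.sqrt (e^2+4*e) - (2*y-e) by linarith)
    (show (0:ℝ) ≤ Real.sqrt (e^2+4*e) + (2*y-e) by nlinarith)]

noncomputable def gfun (M : ℕ) (e y : ℝ) : ℝ :=
  Real.exp (-y) * (1 - Real.exp (-2*y))^(M-1) * (Real.exp (-(max y e)) - Real.exp (-(e + e/y)))

lemma quad_le' {e y E : ℝ} (hy : 0 ≤ y) (heE : e < E) (hEsq : E^2 = e*E + e)
    (hyE : y ≤ E) : y^2 ≤ e*y + e := by
  nlinarith [mul_nonneg (sub_nonneg.mpr hyE) (show (0:ℝ) ≤ y + E - e by linarith)]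

lemma max_le_b {e y E : ℝ} (he : 0 < e) (hy : 0 ≤ y) (heE : e < E) (hEsq : E^2 = e*E + e)
    (hyE : y ≤ E) : max y e ≤ e + e/y := by
  rcases eq_or_lt_of_le hy with h0 | h0
  · rw [← h0]; simp [max_le_iff, he.le]
  rcases le_or_gt y e with h1 | h1
  · rw [max_eq_right h1]
    have : 0 ≤ e/y := div_nonneg he.le hy
    linarith
  · rw [max_eq_left h1.le]
    have hq := quad_le' hy heE hEsq hyE
    rw [← sub_nonneg, show e + e/y - y = (e*y + e - y^2)/y by field_simp]
    apply div_nonneg _ hy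
    linarith

lemma D_nonneg {e y E : ℝ} (he : 0 < e) (hy : 0 ≤ y) (heE : e < E) (hEsq : E^2 = e*E + e)
    (hyE : y ≤ E) : 0 ≤ Real.exp (-(max y e)) - Real.exp (-(e + e/y)) := by
  rw [sub_nonneg, Real.exp_le_exp, neg_le_neg_iff]
  exact max_le_b he hy heE hEsq hyE

lemma one_sub_exp_nonneg {y : ℝ} (hy : 0 ≤ y) : 0 ≤ 1 - Real.exp (-2*y) := by
  rw [sub_nonneg]
  apply Real.exp_le_one_iff.mpr
  nlinarith

lemma g_nonneg (M : ℕ) {e y E : ℝ} (he : 0 < e) (hy : 0 ≤ y) (heE : e < E)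
    (hEsq : E^2 = e*E + e) (hyE : y ≤ E) : 0 ≤ gfun M e y := by
  unfold gfun
  have h1 := one_sub_exp_nonneg hy
  have h2 := D_nonneg he hy heE hEsq hyE
  positivity

lemma g_upper (M : ℕ) (hM : 2 ≤ M) {e y E : ℝ} (he : 0 < e) (hy : 0 ≤ y) (heE : e < E)
    (hEsq : E^2 = e*E + e) (hyE : y ≤ E) :
    gfun M e y ≤ 2^(M-1) * e * (y^(M-1) + y^(M-2)) := by
  rcases eq_or_lt_of_le hy with h0 | h0
  · rw [← h0]
    unfold gfun
    rw [show (-2*(0:ℝ)) = 0 by ring, Real.exp_zero, sub_self, zero_pow (by omega : M - 1 ≠ 0)]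
    simp only [mul_zero, zero_mul]
    positivity
  · have hD : Real.exp (-(max y e)) - Real.exp (-(e + e/y)) ≤ e + e/y := by
      have h2 : Real.exp (-(max y e)) ≤ 1 := by
        apply Real.exp_le_one_iff.mpr
        simp only [neg_nonpos]
        exact le_max_of_le_left hy
      have h3 : 1 - Real.exp (-(e + e/y)) ≤ e + e/y := by
        have := Real.add_one_le_exp (-(e + e/y))
        linarith
      linarith
    have hP : (1 - Real.exp (-2*y))^(M-1) ≤ (2*y)^(M-1) := by
      apply pow_le_pow_left₀ (one_sub_exp_nonneg hy)
      have := Real.add_one_le_exp (-2*y)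
      linarith
    have hA : Real.exp (-y) ≤ 1 := Real.exp_le_one_iff.mpr (by linarith)
    have hDpos := D_nonneg he hy heE hEsq hyE
    have hPpos := one_sub_exp_nonneg hy
    have step : gfun M e y ≤ (2*y)^(M-1) * (e + e/y) := by
      unfold gfun
      calc Real.exp (-y) * (1 - Real.exp (-2*y))^(M-1)
            * (Real.exp (-(max y e)) - Real.exp (-(e + e/y)))
          ≤ 1 * (2*y)^(M-1) * (e + e/y) := by
            apply mul_le_mul _ hD hDpos (by positivity)
            apply mul_le_mul hA hP (by positivity) (by norm_num)
        _ = (2*y)^(M-1) * (e + e/y) := by ring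
    refine step.trans (le_of_eq ?_)
    have hM1 : M - 1 = M - 2 + 1 := by omega
    rw [mul_pow, hM1, pow_succ]
    field_simp
    ring

lemma g_lower (M : ℕ) (hM : 2 ≤ M) {e y E : ℝ} (he : 0 < e) (he16 : e ≤ 1/16)
    (hE0 : 0 < E) (heE : e < E) (hEsq : E^2 = e*E + e) (h4e : 4*e ≤ E) (hE12 : E ≤ 1/2)
    (hy1 : E/2 ≤ y) (hy2 : y ≤ E) :
    (E/2)^(M-1) * (E - y) / 8 ≤ gfun M e y := by
  have hy0 : 0 < y := lt_of_lt_of_le (by linarith) hy1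
  have hey : e < y := by linarith
  have hymax : max y e = y := max_eq_left hey.le
  have hy12 : y ≤ 1/2 := by linarith
  have hA : (1:ℝ)/2 ≤ Real.exp (-y) := by
    have := Real.add_one_le_exp (-y)
    linarith
  have hB : (E/2)^(M-1) ≤ (1 - Real.exp (-2*y))^(M-1) := by
    apply pow_le_pow_left₀ (by positivity)
    have hinv : Real.exp (-2*y) * (1 + 2*y) ≤ 1 := by
      have h1 : (1:ℝ) + 2*y ≤ Real.exp (2*y) := by
        have := Real.add_one_le_exp (2*y); linarith
      have h2 : Real.exp (-2*y) * (1 + 2*y) ≤ Real.exp (-2*y) * Real.exp (2*y) :=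
        mul_le_mul_of_nonneg_left h1 (Real.exp_nonneg _)
      rwa [← Real.exp_add, show -2*y + 2*y = 0 by ring, Real.exp_zero] at h2
    nlinarith [Real.exp_pos (-2*y)]
  have hybe : y ≤ e + e/y := by
    have hq := quad_le' hy0.le heE hEsq hy2
    rw [← sub_nonneg, show e + e/y - y = (e*y + e - y^2)/y by field_simp]
    apply div_nonneg _ hy0.le
    nlinarith
  have hb1 : e + e/y ≤ 1 := by
    have h1 : e/y ≤ e/(E/2) := div_le_div_of_nonneg_left he.le (by positivity) hy1
    have h2 : e/(E/2) ≤ 1/2 := by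
      rw [div_le_iff₀ (by positivity)]
      linarith
    linarith
  have hbE : E ≤ e + e/y := by
    rw [← sub_le_iff_le_add', le_div_iff₀ hy0]
    nlinarith [mul_le_mul_of_nonneg_left hy2 (show (0:ℝ) ≤ E - e by linarith)]
  have hexp1 : (1:ℝ)/4 ≤ Real.exp (-(e + e/y)) := by
    have h1 : Real.exp (-1) ≤ Real.exp (-(e+e/y)) := by
      apply Real.exp_le_exp.mpr; linarith
    have h2 : Real.exp 1 ≤ 4 := by
      have := Real.exp_one_lt_d9; linarith
    have h4 : (4:ℝ)⁻¹ ≤ (Real.exp 1)⁻¹ := inv_anti₀ (Real.exp_pos 1) h2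
    rw [Real.exp_neg] at h1
    calc (1:ℝ)/4 = (4:ℝ)⁻¹ := by norm_num
      _ ≤ (Real.exp 1)⁻¹ := h4
      _ ≤ Real.exp (-(e+e/y)) := h1
  have hC : (1/4) * (E - y) ≤ Real.exp (-y) - Real.exp (-(e + e/y)) := by
    have hfac : Real.exp (-y) - Real.exp (-(e+e/y))
        = Real.exp (-(e+e/y)) * (Real.exp (e + e/y - y) - 1) := by
      rw [mul_sub, ← Real.exp_add, mul_one]
      congr 1; ring
    rw [hfac]
    have h5 : e + e/y - y ≤ Real.exp (e + e/y - y) - 1 := by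
      have := Real.add_one_le_exp (e + e/y - y); linarith
    calc (1/4) * (E - y) ≤ (1/4) * (e + e/y - y) := by
          apply mul_le_mul_of_nonneg_left _ (by norm_num); linarith
      _ ≤ Real.exp (-(e+e/y)) * (Real.exp (e + e/y - y) - 1) := by
          apply mul_le_mul hexp1 h5 (by linarith) (Real.exp_nonneg _)
  have hEy : 0 ≤ E - y := by linarith
  unfold gfun
  rw [hymax]
  calc (E/2)^(M-1) * (E - y) / 8
      = ((1/2) * (E/2)^(M-1)) * ((1/4) * (E - y)) := by ring
    _ ≤ (Real.exp (-y) * (1 - Real.exp (-2*y))^(M-1))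
          * (Real.exp (-y) - Real.exp (-(e + e/y))) := by
        apply mul_le_mul _ hC (by nlinarith)
          (mul_nonneg (Real.exp_nonneg _) (pow_nonneg (one_sub_exp_nonneg hy0.le) _))
        exact mul_le_mul hA hB (by positivity) (Real.exp_nonneg _)

lemma II_F (F : ℝ → ℝ) (hF : Continuous F) (e u v : ℝ) (he : 0 ≤ e) (hu : 0 ≤ u)
    (huv : u ≤ v) :
    IntervalIntegrable (fun y => F y * Real.exp (-(e + e/y))) volume u v := by
  have base := II_sing' 0 e u v le_rfl he hu huv
  have heq : (fun y : ℝ => F y * Real.exp (-(e + e/y)))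
      = fun y => F y * (Real.exp (-(0:ℝ)*y) * Real.exp (-(e + e/y))) := by
    funext y; norm_num
  rw [heq]
  exact base.continuousOn_mul hF.continuousOn

lemma g_integrable (M : ℕ) {e : ℝ} (he : 0 < e) {u v : ℝ} (hu : 0 ≤ u) (huv : u ≤ v) :
    IntervalIntegrable (gfun M e) volume u v := by
  have heq : gfun M e = fun y =>
      (Real.exp (-y) * (1 - Real.exp (-2*y))^(M-1)) * Real.exp (-(max y e))
      - (Real.exp (-y) * (1 - Real.exp (-2*y))^(M-1)) * Real.exp (-(e + e/y)) := by
    funext y; unfold gfun; ring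
  rw [heq]
  have hcont : Continuous fun y : ℝ => Real.exp (-y) * (1 - Real.exp (-2*y))^(M-1) := by
    fun_prop
  have hcont2 : Continuous fun y : ℝ =>
      (Real.exp (-y) * (1 - Real.exp (-2*y))^(M-1)) * Real.exp (-(max y e)) :=
    hcont.mul (Real.continuous_exp.comp (continuous_id.max continuous_const).neg)
  exact (hcont2.intervalIntegrable u v).sub (II_F _ hcont e u v he.le hu huv)

lemma int_upper (M : ℕ) (hM : 2 ≤ M) {e E : ℝ} (he : 0 < e) (heE : e < E)
    (hEsq : E^2 = e*E + e) (hE0 : 0 < E) :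
    ∫ y in (0:ℝ)..E, gfun M e y ≤ 2^(M-1) * e * (E^M + E^(M-1)) := by
  have h1 : ∫ y in (0:ℝ)..E, gfun M e y
      ≤ ∫ y in (0:ℝ)..E, 2^(M-1)*e*(y^(M-1) + y^(M-2)) :=
    intervalIntegral.integral_mono_on hE0.le (g_integrable M he le_rfl hE0.le)
      (Continuous.intervalIntegrable (by fun_prop) _ _)
      (fun y hy => g_upper M hM he hy.1 heE hEsq hy.2)
  refine h1.trans ?_
  have h2 : (∫ y in (0:ℝ)..E, 2^(M-1)*e*(y^(M-1) + y^(M-2)))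
      = 2^(M-1)*e*((E^(M-1+1) - 0^(M-1+1))/((M-1:ℕ)+1)
          + (E^(M-2+1) - 0^(M-2+1))/((M-2:ℕ)+1)) := by
    rw [intervalIntegral.integral_const_mul, intervalIntegral.integral_add
      (intervalIntegral.intervalIntegrable_pow _) (intervalIntegral.intervalIntegrable_pow _), integral_pow, integral_pow]
  rw [h2]
  have hz1 : (0:ℝ)^(M-1+1) = 0 := zero_pow (Nat.succ_ne_zero _)
  have hz2 : (0:ℝ)^(M-2+1) = 0 := zero_pow (Nat.succ_ne_zero _)
  have em : M - 1 + 1 = M := by omega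
  have em2 : M - 2 + 1 = M - 1 := by omega
  rw [hz1, hz2, em, em2, sub_zero, sub_zero]
  have hc1 : (1:ℝ) ≤ ((M-1:ℕ):ℝ)+1 := by
    have := Nat.cast_nonneg (α := ℝ) (M-1); linarith
  have hc2 : (1:ℝ) ≤ ((M-2:ℕ):ℝ)+1 := by
    have := Nat.cast_nonneg (α := ℝ) (M-2); linarith
  have d1 : E^M / (((M-1:ℕ):ℝ)+1) ≤ E^M := div_le_self (by positivity) hc1
  have d2 : E^(M-1) / (((M-2:ℕ):ℝ)+1) ≤ E^(M-1) := div_le_self (by positivity) hc2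
  apply mul_le_mul_of_nonneg_left (add_le_add d1 d2) (by positivity)

lemma int_lower (M : ℕ) (hM : 2 ≤ M) {e E : ℝ} (he : 0 < e) (he16 : e ≤ 1/16)
    (hE0 : 0 < E) (heE : e < E) (hEsq : E^2 = e*E + e) (h4e : 4*e ≤ E) (hE12 : E ≤ 1/2) :
    (E/2)^(M-1) * E^2 / 64 ≤ ∫ y in (0:ℝ)..E, gfun M e y := by
  have hsplit : ∫ y in (0:ℝ)..E, gfun M e y
      = (∫ y in (0:ℝ)..E/2, gfun M e y) + ∫ y in (E/2)..E, gfun M e y :=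
    (intervalIntegral.integral_add_adjacent_intervals
      (g_integrable M he le_rfl (by linarith)) (g_integrable M he (by linarith) (by linarith))).symm
  have h1 : 0 ≤ ∫ y in (0:ℝ)..E/2, gfun M e y :=
    intervalIntegral.integral_nonneg (by linarith)
      (fun y hy => g_nonneg M he hy.1 heE hEsq (by linarith [hy.2]))
  have h2 : (∫ y in (E/2)..E, (E/2)^(M-1) * (E - y) / 8) ≤ ∫ y in (E/2)..E, gfun M e y :=
    intervalIntegral.integral_mono_on (by linarith)
      (Continuous.intervalIntegrable (by fun_prop) _ _)
      (g_integrable M he (by linarith) (by linarith))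
      (fun y hy => g_lower M hM he he16 hE0 heE hEsq h4e hE12 hy.1 hy.2)
  have h3 : (∫ y in (E/2)..E, (E/2)^(M-1) * (E - y) / 8) = (E/2)^(M-1) * E^2/64 := by
    have heq : (fun y : ℝ => (E/2)^(M-1) * (E - y) / 8)
        = fun y => ((E/2)^(M-1)/8) * (E - y) := funext (fun y => by ring)
    rw [heq, intervalIntegral.integral_const_mul,
      intervalIntegral.integral_sub intervalIntegrable_const intervalIntegral.intervalIntegrable_id,
      intervalIntegral.integral_const, integral_id]
    simp only [smul_eq_mul]
    ring
  rw [hsplit]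
  rw [h3] at h2
  linarith

lemma key (M : ℕ) (hM : 2 ≤ M) {e E : ℝ} (he : 0 < e) (h16 : e < 1/16)
    (hE0 : 0 < E) (heE : e < E) (hEsq : E^2 = e*E + e)
    (hse : Real.sqrt e ≤ E) (hE2 : E ≤ 2*Real.sqrt e) :
    (M:ℝ)/(32*2^(M-1)) * e ^ (((M:ℝ)+1)/2)
      ≤ 2 * (M:ℝ) * ∑ i ∈ Finset.range M, ((M-1).choose i : ℝ) * (-1)^i *
        ((Real.exp (-e) - Real.exp (-(2*(i:ℝ)+2)*e)) / (2*(i:ℝ)+1)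
          + (Real.exp (-(2*(i:ℝ)+2)*e) - Real.exp (-(2*(i:ℝ)+2)*E)) / (2*(i:ℝ)+2)
          - Real.exp (-e) * ∫ y in (0:ℝ)..E, Real.exp (-(2*(i:ℝ)+1)*y - e/y))
    ∧ 2 * (M:ℝ) * ∑ i ∈ Finset.range M, ((M-1).choose i : ℝ) * (-1)^i *
        ((Real.exp (-e) - Real.exp (-(2*(i:ℝ)+2)*e)) / (2*(i:ℝ)+1)
          + (Real.exp (-(2*(i:ℝ)+2)*e) - Real.exp (-(2*(i:ℝ)+2)*E)) / (2*(i:ℝ)+2)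
          - Real.exp (-e) * ∫ y in (0:ℝ)..E, Real.exp (-(2*(i:ℝ)+1)*y - e/y))
      ≤ 2*(M:ℝ)*2^(M-1)*(2^M + 2^(M-1)) * e ^ (((M:ℝ)+1)/2) := by
  rw [sum_eq M hM he heE]
  have hs2 : (Real.sqrt e)^2 = e := Real.sq_sqrt he.le
  have hs0 : 0 < Real.sqrt e := Real.sqrt_pos.mpr he
  set s := Real.sqrt e with hsdef
  have hs14 : s ≤ 1/4 := by
    rw [hsdef, show (1:ℝ)/4 = Real.sqrt (1/16) by
      rw [show (1:ℝ)/16 = (1/4)^2 by norm_num, Real.sqrt_sq (by norm_num)]]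
    exact Real.sqrt_le_sqrt h16.le
  have h4e : 4*e ≤ E := by nlinarith
  have hE12 : E ≤ 1/2 := by linarith
  have hM0 : (0:ℝ) < (M:ℝ) := Nat.cast_pos.mpr (by omega)
  have he1 : e ≤ 1 := by linarith
  -- rpow conversions
  have hrp : ∀ k : ℕ, s^k = e ^ ((k:ℝ)/2) := by
    intro k
    have h : e ^ ((k:ℝ)/2) = (e ^ ((1:ℝ)/2))^(k : ℕ) := by
      rw [← Real.rpow_natCast (e ^ ((1:ℝ)/2)) k, ← Real.rpow_mul he.le]
      congr 1
      ring
    rw [h, hsdef, Real.sqrt_eq_rpow]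
  have hp1 : s^(M+1) = e ^ (((M:ℝ)+1)/2) := by
    rw [hrp (M+1)]
    congr 1
    push_cast; ring
  have hp2 : s^(M+2) = e ^ (((M:ℝ)+2)/2) := by
    rw [hrp (M+2)]
    congr 1
    push_cast; ring
  have hqle : e ^ (((M:ℝ)+2)/2) ≤ e ^ (((M:ℝ)+1)/2) :=
    Real.rpow_le_rpow_of_exponent_ge he he1 (by linarith)
  constructor
  · -- lower bound
    have low1 := int_lower M hM he h16.le hE0 heE hEsq h4e hE12
    have hA : (s/2)^(M-1) ≤ (E/2)^(M-1) := pow_le_pow_left₀ (by positivity) (by linarith) _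
    have hB : s^2 ≤ E^2 := pow_le_pow_left₀ hs0.le hse _
    have low2 : (s/2)^(M-1) * s^2 / 64 ≤ (E/2)^(M-1) * E^2 / 64 := by
      have := mul_le_mul hA hB (by positivity) (by positivity)
      linarith
    have hsum : (s/2)^(M-1) * s^2 = s^(M+1) / 2^(M-1) := by
      rw [div_pow, div_mul_eq_mul_div, ← pow_add, show M-1+2 = M+1 by omega]
    have heq : (M:ℝ)/(32*2^(M-1)) * e ^ (((M:ℝ)+1)/2)
        = 2 * (M:ℝ) * ((s/2)^(M-1) * s^2 / 64) := by
      rw [hsum, hp1]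
      have h2M : (2:ℝ)^(M-1) ≠ 0 := by positivity
      field_simp
      ring
    rw [heq]
    have := low2.trans low1
    calc 2 * (M:ℝ) * ((s/2)^(M-1) * s^2 / 64)
        ≤ 2 * (M:ℝ) * ∫ y in (0:ℝ)..E, gfun M e y :=
          mul_le_mul_of_nonneg_left this (by positivity)
      _ = _ := by rfl
  · -- upper bound
    have up1 := int_upper M hM he heE hEsq hE0
    have ha : E^M ≤ (2*s)^M := pow_le_pow_left₀ hE0.le hE2 _
    have hb : E^(M-1) ≤ (2*s)^(M-1) := pow_le_pow_left₀ hE0.le hE2 _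
    have key1 : e * ((2*s)^M + (2*s)^(M-1))
        = 2^M * s^(M+2) + 2^(M-1) * s^(M+1) := by
      rw [mul_pow, mul_pow, ← hs2]
      rw [show s^(M+2) = s^2 * s^M by ring, show s^(M+1) = s^2 * s^(M-1) by
        rw [← pow_add]; congr 1; omega]
      ring
    have up2 : ∫ y in (0:ℝ)..E, gfun M e y
        ≤ 2^(M-1) * (2^M * s^(M+2) + 2^(M-1) * s^(M+1)) := by
      refine up1.trans ?_
      rw [mul_assoc, ← key1]
      apply mul_le_mul_of_nonneg_left _ (by positivity)
      apply mul_le_mul_of_nonneg_left (add_le_add ha hb) he.le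
    have up3 : 2^(M-1) * (2^M * s^(M+2) + 2^(M-1) * s^(M+1))
        ≤ 2^(M-1)*(2^M + 2^(M-1)) * e ^ (((M:ℝ)+1)/2) := by
      rw [hp1, hp2]
      have h1 : (2:ℝ)^M * e ^ (((M:ℝ)+2)/2) ≤ 2^M * e ^ (((M:ℝ)+1)/2) :=
        mul_le_mul_of_nonneg_left hqle (by positivity)
      nlinarith [Real.rpow_pos_of_pos he (((M:ℝ)+1)/2), Real.rpow_pos_of_pos he (((M:ℝ)+2)/2),
        pow_pos (show (0:ℝ) < 2 by norm_num) (M-1), pow_pos (show (0:ℝ) < 2 by norm_num) M]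
    calc 2 * (M:ℝ) * ∫ y in (0:ℝ)..E, gfun M e y
        ≤ 2 * (M:ℝ) * (2^(M-1)*(2^M + 2^(M-1)) * e ^ (((M:ℝ)+1)/2)) :=
          mul_le_mul_of_nonneg_left (up2.trans up3) (by positivity)
      _ = 2*(M:ℝ)*2^(M-1)*(2^M + 2^(M-1)) * e ^ (((M:ℝ)+1)/2) := by ring

lemma inv_atBot_zero : Tendsto (fun x : ℝ => x⁻¹) atBot (𝓝 0) := by
  have h1 : Tendsto (fun x : ℝ => -x) atBot atTop := tendsto_neg_atBot_atTop
  have h3 := h1.inv_tendsto_atTop.neg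
  have heq : (fun x : ℝ => -((fun x : ℝ => -x)⁻¹ x)) = fun x : ℝ => x⁻¹ := by
    funext x; simp [Pi.inv_apply, inv_neg]
  rw [heq] at h3; simpa using h3

lemma tendsto_aux (K C : ℝ) :
    Tendsto (fun e : ℝ => C + Real.log K / Real.log e) (𝓝[>](0:ℝ)) (𝓝 C) := by
  have hinv : Tendsto (fun e : ℝ => (Real.log e)⁻¹) (𝓝[>](0:ℝ)) (𝓝 0) :=
    inv_atBot_zero.comp Real.tendsto_log_nhdsGT_zero
  have h2 : Tendsto (fun e : ℝ => Real.log K * (Real.log e)⁻¹) (𝓝[>](0:ℝ))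
      (𝓝 (Real.log K * 0)) := hinv.const_mul _
  rw [mul_zero] at h2
  have h3 := (tendsto_const_nhds (x := C) (f := 𝓝[>](0:ℝ))).add h2
  rw [add_zero] at h3
  simpa [div_eq_mul_inv] using h3

lemma lb_aux {Q A e p : ℝ} (he0 : 0 < e) (he1 : e < 1) (hA : 0 < A) (hQ : 0 < Q)
    (h : Q ≤ A * e ^ p) : p + Real.log A / Real.log e ≤ Real.log Q / Real.log e := by
  have hl : Real.log e < 0 := Real.log_neg he0 he1
  have hrp : (0:ℝ) < e ^ p := Real.rpow_pos_of_pos he0 p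
  have h1 : Real.log Q ≤ Real.log A + p * Real.log e := by
    have := Real.log_le_log hQ h
    rwa [Real.log_mul hA.ne' hrp.ne', Real.log_rpow he0] at this
  have h2 : (Real.log A + p * Real.log e) / Real.log e ≤ Real.log Q / Real.log e := by
    have := mul_le_mul_of_nonpos_right h1 (inv_nonpos.mpr hl.le)
    simpa [div_eq_mul_inv] using this
  calc p + Real.log A / Real.log e = (Real.log A + p * Real.log e)/Real.log e := by
        rw [add_div, mul_div_cancel_right₀ _ hl.ne]; ring
    _ ≤ _ := h2

lemma ub_aux {Q A e p : ℝ} (he0 : 0 < e) (he1 : e < 1) (hA : 0 < A) (hQ : 0 < Q)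
    (h : A * e ^ p ≤ Q) : Real.log Q / Real.log e ≤ p + Real.log A / Real.log e := by
  have hl : Real.log e < 0 := Real.log_neg he0 he1
  have hrp : (0:ℝ) < e ^ p := Real.rpow_pos_of_pos he0 p
  have h1 : Real.log A + p * Real.log e ≤ Real.log Q := by
    have := Real.log_le_log (by positivity) h
    rwa [Real.log_mul hA.ne' hrp.ne', Real.log_rpow he0] at this
  have h2 : Real.log Q / Real.log e ≤ (Real.log A + p * Real.log e) / Real.log e := by
    have := mul_le_mul_of_nonpos_right h1 (inv_nonpos.mpr hl.le)
    simpa [div_eq_mul_inv] using this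
  calc Real.log Q / Real.log e ≤ (Real.log A + p * Real.log e)/Real.log e := h2
    _ = p + Real.log A / Real.log e := by
        rw [add_div, mul_div_cancel_right₀ _ hl.ne]; ring

/-- Fix `M ≥ 2`. With `ε₀(ε) = (ε + √(ε² + 4ε))/2` and
`Q₂(ε) = 2M Σ_{i=0}^{M−1} C(M−1,i) (−1)^i [ (e^{−ε} − e^{−(2i+2)ε})/(2i+1)
  + (e^{−(2i+2)ε} − e^{−(2i+2)ε₀})/(2i+2) − e^{−ε} ∫₀^{ε₀} e^{−(2i+1)y − ε/y} dy ]`,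
we have `lim_{ε→0⁺} log Q₂(ε)/log ε = (M+1)/2`. -/
theorem stmt10 (M : ℕ) (hM : 2 ≤ M) :
    Tendsto
      (fun ε : ℝ =>
        Real.log
            (2 * (M : ℝ) *
              ∑ i ∈ Finset.range M,
                ((M - 1).choose i : ℝ) * (-1) ^ i *
                  ((Real.exp (-ε) - Real.exp (-(2 * (i : ℝ) + 2) * ε)) / (2 * (i : ℝ) + 1)
                    + (Real.exp (-(2 * (i : ℝ) + 2) * ε)
                        - Real.exp (-(2 * (i : ℝ) + 2) * ((ε + Real.sqrt (ε ^ 2 + 4 * ε)) / 2)))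
                        / (2 * (i : ℝ) + 2)
                    - Real.exp (-ε) *
                        ∫ y in (0 : ℝ)..(ε + Real.sqrt (ε ^ 2 + 4 * ε)) / 2,
                          Real.exp (-(2 * (i : ℝ) + 1) * y - ε / y)))
          / Real.log ε)
      (𝓝[>] 0) (𝓝 (((M : ℝ) + 1) / 2)) := by
  have hM0 : (0:ℝ) < (M:ℝ) := Nat.cast_pos.mpr (by omega)
  have hc1 : (0:ℝ) < (M:ℝ)/(32*2^(M-1)) := by positivity
  have hC2 : (0:ℝ) < 2*(M:ℝ)*2^(M-1)*(2^M + 2^(M-1)) := by positivity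
  have hmem : Set.Ioo (0:ℝ) (1/16) ∈ 𝓝[>] (0:ℝ) :=
    Ioo_mem_nhdsGT_of_mem (by norm_num : (0:ℝ) ∈ Set.Ico (0:ℝ) (1/16))
  apply tendsto_of_tendsto_of_tendsto_of_le_of_le'
    (tendsto_aux (2*(M:ℝ)*2^(M-1)*(2^M + 2^(M-1))) (((M:ℝ)+1)/2))
    (tendsto_aux ((M:ℝ)/(32*2^(M-1))) (((M:ℝ)+1)/2))
  · filter_upwards [hmem] with e heIoo
    obtain ⟨he0, he16⟩ := heIoo
    obtain ⟨hE0, hEsq, heE⟩ := E_facts he0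
    obtain ⟨hlow, hup⟩ := key M hM he0 he16 hE0 heE hEsq (sqrt_le_E he0)
      (E_le he0 (by linarith))
    exact lb_aux he0 (by linarith) hC2 (lt_of_lt_of_le (by positivity) hlow) hup
  · filter_upwards [hmem] with e heIoo
    obtain ⟨he0, he16⟩ := heIoo
    obtain ⟨hE0, hEsq, heE⟩ := E_facts he0
    obtain ⟨hlow, hup⟩ := key M hM he0 he16 hE0 heE hEsq (sqrt_le_E he0)
      (E_le he0 (by linarith))
    exact ub_aux he0 (by linarith) hc1 (lt_of_lt_of_le (by positivity) hlow) hlow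
end

section
/- Fix an integer M ≥ 2. For ε > 0 set ε₀(ε) = (ε + √(ε² + 4ε))/2, and define Q₄(ε) = 2M · Σ_{i=0}^{M−1} C(M−1,i) · (−1)^i · [ (e^{−2(i+1)ε} − e^{−2(i+1)ε₀(ε)})/(2(i+1)) − e^{−(2i+1)ε} · ∫₀^{ε₀(ε)−ε} e^{−(2i+1)x − ε/x} dx ]. Then lim_{ε→0⁺} log Q₄(ε) / log ε = (M+1)/2. -/
open Filter Topology MeasureTheory Set

noncomputable def Gf (M : ℕ) (ε : ℝ) (x : ℝ) : ℝ :=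
  Real.exp (-(x+ε)) * (1 - Real.exp (-2*(x+ε)))^(M-1) *
    (Real.exp (-(x+ε)) - Real.exp (-(ε/x)))

lemma ae_ne_zero : ∀ᵐ (x : ℝ) ∂(volume : Measure ℝ), x ≠ 0 := by
  have h : (volume : Measure ℝ) {(0:ℝ)} = 0 := measure_singleton 0
  rw [ae_iff]
  simpa using h


lemma intInt_bdd {f : ℝ → ℝ} (hf : Measurable f) {a b C : ℝ}
    (h : ∀ x ∈ Set.uIoc a b, |f x| ≤ C) : IntervalIntegrable f volume a b := by
  constructor <;>
  · apply Measure.integrableOn_of_bounded (M := C) measure_Ioc_lt_top.ne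
      hf.aestronglyMeasurable
    rw [ae_restrict_iff' measurableSet_Ioc]
    refine ae_of_all _ fun x hx => ?_
    · first
      | exact h x (Set.Ioc_subset_uIoc hx)
      | exact h x (Set.Ioc_subset_uIoc' hx)

lemma integral_exp_mul (c : ℝ) (hc : c ≠ 0) (a b : ℝ) :
    ∫ t in a..b, Real.exp (c*t) = (Real.exp (c*b) - Real.exp (c*a))/c := by
  have key : ∀ x ∈ Set.uIcc a b, HasDerivAt (fun t => Real.exp (c*t)/c) (Real.exp (c*x)) x := by
    intro x _
    have h1 : HasDerivAt (fun t : ℝ => c * t) c x := by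
      simpa using (hasDerivAt_id x).const_mul c
    have h3 := h1.exp.div_const c
    simpa [mul_div_cancel_left₀ _ hc, mul_comm] using h3
  have := intervalIntegral.integral_eq_sub_of_hasDerivAt key
    ((Real.continuous_exp.comp (continuous_const.mul continuous_id)).intervalIntegrable a b)
  simpa [div_sub_div_same] using this

lemma binom_sum (A : ℝ) (n : ℕ) :
    ∑ i ∈ Finset.range (n+1), (n.choose i : ℝ) * (-1)^i * A^i = (1 - A)^n := by
  rw [sub_eq_neg_add, add_pow]
  refine Finset.sum_congr rfl fun i _ => ?_
  rw [neg_pow]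
  ring



lemma Gf_meas (M : ℕ) (ε : ℝ) : Measurable (Gf M ε) := by
  unfold Gf
  fun_prop

lemma d_sq {ε : ℝ} (hε : 0 ≤ ε) :
    ((Real.sqrt (ε^2+4*ε) - ε)/2)^2 + ε*((Real.sqrt (ε^2+4*ε) - ε)/2) = ε := by
  have h : Real.sqrt (ε^2+4*ε) ^ 2 = ε^2+4*ε := Real.sq_sqrt (by positivity)
  nlinarith [h]

lemma d_pos {ε : ℝ} (hε : 0 < ε) : 0 < (Real.sqrt (ε^2+4*ε) - ε)/2 := by
  have h : ε < Real.sqrt (ε^2+4*ε) := by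
    rw [Real.lt_sqrt hε.le]
    nlinarith
  linarith

lemma d_le_s {ε : ℝ} (hε : 0 < ε) : (Real.sqrt (ε^2+4*ε) - ε)/2 ≤ Real.sqrt ε := by
  have h := d_sq hε.le
  have hd := d_pos hε
  have hs : Real.sqrt ε ^ 2 = ε := Real.sq_sqrt hε.le
  have hs0 : 0 < Real.sqrt ε := Real.sqrt_pos.2 hε
  nlinarith

lemma s_le_one {ε : ℝ} (hε : 0 < ε) (h1 : ε ≤ 1) : Real.sqrt ε ≤ 1 := by
  rw [show (1:ℝ) = Real.sqrt 1 by simp]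
  exact Real.sqrt_le_sqrt h1

lemma eps_le_s {ε : ℝ} (hε : 0 < ε) (h1 : ε ≤ 1) : ε ≤ Real.sqrt ε := by
  have hs : Real.sqrt ε ^ 2 = ε := Real.sq_sqrt hε.le
  have := s_le_one hε h1
  nlinarith [Real.sqrt_pos.2 hε]

lemma s_half_le_d {ε : ℝ} (hε : 0 < ε) (h1 : ε ≤ 1) :
    Real.sqrt ε / 2 ≤ (Real.sqrt (ε^2+4*ε) - ε)/2 := by
  have h := d_sq hε.le
  have hd := d_pos hε
  have hs : Real.sqrt ε ^ 2 = ε := Real.sq_sqrt hε.le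
  have hes := eps_le_s hε h1
  have hs0 : 0 < Real.sqrt ε := Real.sqrt_pos.2 hε
  nlinarith

lemma eps_le_d {ε : ℝ} (hε : 0 < ε) (h1 : ε ≤ 1/4) :
    ε ≤ (Real.sqrt (ε^2+4*ε) - ε)/2 := by
  have h2 := s_half_le_d hε (by linarith)
  have hs : Real.sqrt ε ^ 2 = ε := Real.sq_sqrt hε.le
  have hs4 : Real.sqrt ε ≤ 1/2 := by
    rw [show (1/2:ℝ) = Real.sqrt (1/4) by rw [show (1/4:ℝ) = (1/2)^2 by norm_num, Real.sqrt_sq]; norm_num]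
    exact Real.sqrt_le_sqrt h1
  nlinarith [Real.sqrt_pos.2 hε]

lemma Gf_abs_le {M : ℕ} {ε x : ℝ} (hε : 0 < ε) (hx : 0 < x) : |Gf M ε x| ≤ 1 := by
  unfold Gf
  have h1 : Real.exp (-(x+ε)) ≤ 1 := Real.exp_le_one_iff.2 (by linarith)
  have h1' : 0 < Real.exp (-(x+ε)) := Real.exp_pos _
  have h2 : Real.exp (-2*(x+ε)) ≤ 1 := Real.exp_le_one_iff.2 (by linarith)
  have h2' : 0 < Real.exp (-2*(x+ε)) := Real.exp_pos _
  have h3 : Real.exp (-(ε/x)) ≤ 1 := Real.exp_le_one_iff.2 (neg_nonpos.2 (div_nonneg hε.le hx.le))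
  have h3' : 0 < Real.exp (-(ε/x)) := Real.exp_pos _
  have hp : (0:ℝ) ≤ (1 - Real.exp (-2*(x+ε)))^(M-1) := pow_nonneg (by linarith) _
  have hp1 : (1 - Real.exp (-2*(x+ε)))^(M-1) ≤ 1 :=
    pow_le_one₀ (by linarith) (by linarith)
  rw [abs_mul, abs_mul]
  have : |Real.exp (-(x+ε)) - Real.exp (-(ε/x))| ≤ 1 := by
    rw [abs_le]; constructor <;> nlinarith
  calc |Real.exp (-(x+ε))| * |(1 - Real.exp (-2*(x+ε)))^(M-1)| * |Real.exp (-(x+ε)) - Real.exp (-(ε/x))|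
      ≤ 1 * 1 * 1 := by
        apply mul_le_mul _ this (abs_nonneg _) (by norm_num)
        apply mul_le_mul _ _ (abs_nonneg _) (by norm_num)
        · rwa [abs_of_pos h1']
        · rwa [abs_of_nonneg hp]
    _ = 1 := by norm_num

lemma Gf_intInt (M : ℕ) {ε : ℝ} (hε : 0 < ε) {a b : ℝ} (ha : 0 ≤ a) (hb : 0 ≤ b) :
    IntervalIntegrable (Gf M ε) volume a b := by
  apply intInt_bdd (Gf_meas M ε)
  intro x hx
  exact Gf_abs_le hε (lt_of_le_of_lt (le_min ha hb) hx.1)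






lemma binom_sum' {M : ℕ} (hM : 1 ≤ M) (A : ℝ) :
    ∑ i ∈ Finset.range M, ((M-1).choose i : ℝ) * (-1)^i * A^i = (1 - A)^(M-1) := by
  conv_lhs => rw [show M = M-1+1 by omega]
  exact binom_sum A (M-1)

lemma pointwise_eq (M : ℕ) (hM : 1 ≤ M) (ε x : ℝ) :
    ∑ i ∈ Finset.range M, ((M - 1).choose i : ℝ) * (-1) ^ i *
      (Real.exp (-2*((i:ℝ)+1)*(x+ε)) - Real.exp (-(2*(i:ℝ)+1)*(x+ε) - ε/x))
    = Gf M ε x := by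
  have key : ∀ i : ℕ, Real.exp (-2*((i:ℝ)+1)*(x+ε)) - Real.exp (-(2*(i:ℝ)+1)*(x+ε) - ε/x)
      = Real.exp (-2*(x+ε))^i * (Real.exp (-(x+ε)) *
          (Real.exp (-(x+ε)) - Real.exp (-(ε/x)))) := by
    intro i
    rw [show -2*((i:ℝ)+1)*(x+ε) = (i:ℝ)*(-2*(x+ε)) + (-(x+ε) + -(x+ε)) by ring,
        show -(2*(i:ℝ)+1)*(x+ε) - ε/x = (i:ℝ)*(-2*(x+ε)) + (-(x+ε) + -(ε/x)) by ring,
        Real.exp_add, Real.exp_add, Real.exp_add, Real.exp_add, Real.exp_nat_mul]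
    ring
  calc ∑ i ∈ Finset.range M, ((M - 1).choose i : ℝ) * (-1) ^ i *
        (Real.exp (-2*((i:ℝ)+1)*(x+ε)) - Real.exp (-(2*(i:ℝ)+1)*(x+ε) - ε/x))
      = (∑ i ∈ Finset.range M, ((M-1).choose i : ℝ) * (-1)^i * Real.exp (-2*(x+ε))^i) *
          (Real.exp (-(x+ε)) * (Real.exp (-(x+ε)) - Real.exp (-(ε/x)))) := by
        rw [Finset.sum_mul]
        exact Finset.sum_congr rfl fun i _ => by rw [key i]; ring
    _ = Gf M ε x := by rw [binom_sum' hM]; unfold Gf; ring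

lemma key_id (M : ℕ) (hM : 1 ≤ M) {ε : ℝ} (hε : 0 < ε) :
    (∑ i ∈ Finset.range M,
      ((M - 1).choose i : ℝ) * (-1) ^ i *
        ((Real.exp (-2 * ((i : ℝ) + 1) * ε)
            - Real.exp (-2 * ((i : ℝ) + 1) * ((ε + Real.sqrt (ε ^ 2 + 4 * ε)) / 2)))
            / (2 * ((i : ℝ) + 1))
          - Real.exp (-(2 * (i : ℝ) + 1) * ε) *
              ∫ x in (0 : ℝ)..(ε + Real.sqrt (ε ^ 2 + 4 * ε)) / 2 - ε,
                Real.exp (-(2 * (i : ℝ) + 1) * x - ε / x)))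
    = ∫ x in (0:ℝ)..((Real.sqrt (ε^2+4*ε) - ε)/2), Gf M ε x := by
  set d : ℝ := (Real.sqrt (ε^2+4*ε) - ε)/2 with hd
  have hd0 : 0 ≤ d := by
    have : ε ≤ Real.sqrt (ε^2+4*ε) :=
      (Real.le_sqrt hε.le (by positivity)).2 (by nlinarith)
    rw [hd]; linarith
  have he0 : (ε + Real.sqrt (ε ^ 2 + 4 * ε)) / 2 = d + ε := by rw [hd]; ring
  have he0' : (ε + Real.sqrt (ε ^ 2 + 4 * ε)) / 2 - ε = d := by rw [hd]; ring
  -- integrability of second integrand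
  have hint2 : ∀ i : ℕ, IntervalIntegrable
      (fun x => Real.exp (-(2*(i:ℝ)+1)*(x+ε) - ε/x)) volume 0 d := by
    intro i
    apply intInt_bdd (C := 1) (by fun_prop)
    intro x hx
    have hx0 : 0 < x := lt_of_le_of_lt (le_min le_rfl hd0) hx.1
    rw [abs_of_pos (Real.exp_pos _)]
    apply Real.exp_le_one_iff.2
    have h1 : 0 ≤ ε/x := div_nonneg hε.le hx0.le
    nlinarith [hx0, hε]
  have hint1 : ∀ i : ℕ, IntervalIntegrable
      (fun x => Real.exp (-2*((i:ℝ)+1)*(x+ε))) volume 0 d :=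
    fun i => (Real.continuous_exp.comp (by continuity)).intervalIntegrable 0 d
  have step : ∀ i ∈ Finset.range M,
      ((M - 1).choose i : ℝ) * (-1) ^ i *
        ((Real.exp (-2 * ((i : ℝ) + 1) * ε)
            - Real.exp (-2 * ((i : ℝ) + 1) * ((ε + Real.sqrt (ε ^ 2 + 4 * ε)) / 2)))
            / (2 * ((i : ℝ) + 1))
          - Real.exp (-(2 * (i : ℝ) + 1) * ε) *
              ∫ x in (0 : ℝ)..(ε + Real.sqrt (ε ^ 2 + 4 * ε)) / 2 - ε,
                Real.exp (-(2 * (i : ℝ) + 1) * x - ε / x))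
      = ∫ x in (0:ℝ)..d, ((M - 1).choose i : ℝ) * (-1) ^ i *
          (Real.exp (-2*((i:ℝ)+1)*(x+ε)) - Real.exp (-(2*(i:ℝ)+1)*(x+ε) - ε/x)) := by
    intro i _
    have hc : (-2*((i:ℝ)+1)) ≠ 0 := by
      have : (0:ℝ) < 2*((i:ℝ)+1) := by positivity
      linarith
    have hA : (Real.exp (-2 * ((i : ℝ) + 1) * ε)
          - Real.exp (-2 * ((i : ℝ) + 1) * ((ε + Real.sqrt (ε ^ 2 + 4 * ε)) / 2)))
          / (2 * ((i : ℝ) + 1))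
        = ∫ x in (0:ℝ)..d, Real.exp (-2*((i:ℝ)+1)*(x+ε)) := by
      rw [intervalIntegral.integral_comp_add_right
        (fun t => Real.exp (-2*((i:ℝ)+1)*t)) ε, zero_add, integral_exp_mul _ hc, he0]
      rw [div_eq_div_iff (by positivity : (0:ℝ) < 2*((i:ℝ)+1)).ne' hc]
      ring
    have hB : Real.exp (-(2 * (i : ℝ) + 1) * ε) *
          ∫ x in (0 : ℝ)..(ε + Real.sqrt (ε ^ 2 + 4 * ε)) / 2 - ε,
            Real.exp (-(2 * (i : ℝ) + 1) * x - ε / x)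
        = ∫ x in (0:ℝ)..d, Real.exp (-(2*(i:ℝ)+1)*(x+ε) - ε/x) := by
      rw [he0', ← intervalIntegral.integral_const_mul]
      apply intervalIntegral.integral_congr
      intro x _
      simp only [← Real.exp_add]
      ring_nf
    rw [hA, hB, ← intervalIntegral.integral_sub (hint1 i) (hint2 i),
        ← intervalIntegral.integral_const_mul]
  rw [Finset.sum_congr rfl step, ← intervalIntegral.integral_finset_sum]
  · exact intervalIntegral.integral_congr fun x _ => pointwise_eq M hM ε x
  · intro i _
    exact ((hint1 i).sub (hint2 i)).const_mul _














lemma one_sub_exp_le (u : ℝ) : 1 - Real.exp (-u) ≤ u := by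
  have := Real.add_one_le_exp (-u); linarith

lemma exp_half_lb {t : ℝ} (ht0 : 0 ≤ t) (ht : t ≤ 1/2) : t ≤ 1 - Real.exp (-(2*t)) := by
  have hexp : 1 + 2*t ≤ Real.exp (2*t) := by
    have := Real.add_one_le_exp (2*t); linarith
  have h2 : (0:ℝ) < 1 + 2*t := by linarith
  rw [Real.exp_neg]
  have hinv : (Real.exp (2*t))⁻¹ ≤ (1+2*t)⁻¹ := inv_anti₀ h2 hexp
  have heq : 1 - (1+2*t)⁻¹ = 2*t/(1+2*t) := by field_simp; ring
  have key : t ≤ 2*t/(1+2*t) := by rw [le_div_iff₀ h2]; nlinarith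
  linarith

lemma Gf_nonneg (M : ℕ) {ε x : ℝ} (hε : 0 < ε) (hx : 0 < x) (hq : x*(x+ε) ≤ ε) :
    0 ≤ Gf M ε x := by
  unfold Gf
  have h1 : (0:ℝ) ≤ Real.exp (-(x+ε)) := (Real.exp_pos _).le
  have h2 : (0:ℝ) ≤ (1 - Real.exp (-2*(x+ε)))^(M-1) :=
    pow_nonneg (by have := Real.exp_le_one_iff.2 (by nlinarith : -2*(x+ε) ≤ 0); linarith) _
  have h3 : Real.exp (-(ε/x)) ≤ Real.exp (-(x+ε)) := by
    apply Real.exp_le_exp.2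
    have : x + ε ≤ ε/x := (le_div_iff₀ hx).2 (by nlinarith)
    linarith
  exact mul_nonneg (mul_nonneg h1 h2) (by linarith)

lemma Gf_le_pow (M : ℕ) {ε x : ℝ} (hε : 0 < ε) (hx : 0 < x) :
    Gf M ε x ≤ (2*(x+ε))^(M-1) := by
  have ht : 0 < x + ε := by linarith
  have hP : (0:ℝ) ≤ (2*(x+ε))^(M-1) := by positivity
  have hA : Real.exp (-(x+ε)) ≤ 1 := Real.exp_le_one_iff.2 (by linarith)
  have hA0 : (0:ℝ) < Real.exp (-(x+ε)) := Real.exp_pos _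
  have hB0 : (0:ℝ) ≤ 1 - Real.exp (-2*(x+ε)) := by
    have := Real.exp_le_one_iff.2 (by nlinarith : -2*(x+ε) ≤ 0); linarith
  have hB : (1 - Real.exp (-2*(x+ε)))^(M-1) ≤ (2*(x+ε))^(M-1) := by
    apply pow_le_pow_left₀ hB0
    have := one_sub_exp_le (2*(x+ε))
    rw [show -2*(x+ε) = -(2*(x+ε)) by ring]
    linarith
  have hB0' : (0:ℝ) ≤ (1 - Real.exp (-2*(x+ε)))^(M-1) := pow_nonneg hB0 _
  rcases le_or_gt (Real.exp (-(x+ε)) - Real.exp (-(ε/x))) 0 with hC | hC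
  · unfold Gf
    exact le_trans (mul_nonpos_of_nonneg_of_nonpos (mul_nonneg hA0.le hB0') hC) hP
  · unfold Gf
    have hC1 : Real.exp (-(x+ε)) - Real.exp (-(ε/x)) ≤ 1 := by
      have := Real.exp_pos (-(ε/x)); linarith
    calc Real.exp (-(x+ε)) * (1 - Real.exp (-2*(x+ε)))^(M-1) *
          (Real.exp (-(x+ε)) - Real.exp (-(ε/x)))
        ≤ 1 * (2*(x+ε))^(M-1) * 1 := by
          apply mul_le_mul _ hC1 hC.le (by positivity)
          exact mul_le_mul hA hB hB0' (by norm_num)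
      _ = (2*(x+ε))^(M-1) := by ring

lemma Gf_le_pow_mul (M : ℕ) {ε x : ℝ} (hε : 0 < ε) (hx : 0 < x) :
    Gf M ε x ≤ (2*(x+ε))^(M-1) * (ε/x) := by
  have ht : 0 < x + ε := by linarith
  have hdiv : (0:ℝ) ≤ ε/x := div_nonneg hε.le hx.le
  have hP : (0:ℝ) ≤ (2*(x+ε))^(M-1) * (ε/x) := by positivity
  have hA : Real.exp (-(x+ε)) ≤ 1 := Real.exp_le_one_iff.2 (by linarith)
  have hA0 : (0:ℝ) < Real.exp (-(x+ε)) := Real.exp_pos _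
  have hB0 : (0:ℝ) ≤ 1 - Real.exp (-2*(x+ε)) := by
    have := Real.exp_le_one_iff.2 (by nlinarith : -2*(x+ε) ≤ 0); linarith
  have hB : (1 - Real.exp (-2*(x+ε)))^(M-1) ≤ (2*(x+ε))^(M-1) := by
    apply pow_le_pow_left₀ hB0
    have := one_sub_exp_le (2*(x+ε))
    rw [show -2*(x+ε) = -(2*(x+ε)) by ring]
    linarith
  have hB0' : (0:ℝ) ≤ (1 - Real.exp (-2*(x+ε)))^(M-1) := pow_nonneg hB0 _
  rcases le_or_gt (Real.exp (-(x+ε)) - Real.exp (-(ε/x))) 0 with hC | hC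
  · unfold Gf
    exact le_trans (mul_nonpos_of_nonneg_of_nonpos (mul_nonneg hA0.le hB0') hC) hP
  · unfold Gf
    have hC1 : Real.exp (-(x+ε)) - Real.exp (-(ε/x)) ≤ ε/x := by
      have h1 : Real.exp (-(x+ε)) - Real.exp (-(ε/x)) ≤ 1 - Real.exp (-(ε/x)) := by
        linarith
      have := one_sub_exp_le (ε/x)
      linarith
    calc Real.exp (-(x+ε)) * (1 - Real.exp (-2*(x+ε)))^(M-1) *
          (Real.exp (-(x+ε)) - Real.exp (-(ε/x)))
        ≤ 1 * (2*(x+ε))^(M-1) * (ε/x) := by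
          apply mul_le_mul _ hC1 hC.le (by positivity)
          exact mul_le_mul hA hB hB0' (by norm_num)
      _ = (2*(x+ε))^(M-1) * (ε/x) := by ring

lemma sqrt_le_quarter {ε : ℝ} (hε : 0 < ε) (hε16 : ε ≤ 1/16) : Real.sqrt ε ≤ 1/4 := by
  have hs2 : Real.sqrt ε ^ 2 = ε := Real.sq_sqrt hε.le
  nlinarith [Real.sqrt_nonneg ε]

lemma Gf_lb (M : ℕ) {ε x : ℝ} (hε : 0 < ε) (hε16 : ε ≤ 1/16)
    (hx1 : Real.sqrt ε / 4 ≤ x) (hx2 : x ≤ Real.sqrt ε / 2) :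
    Real.exp (-1) * (Real.sqrt ε/4)^(M-1) * (Real.exp (-1) * Real.sqrt ε) ≤ Gf M ε x := by
  set s := Real.sqrt ε with hs
  have hs2 : s^2 = ε := Real.sq_sqrt hε.le
  have hs0 : 0 < s := Real.sqrt_pos.2 hε
  have hs14 : s ≤ 1/4 := sqrt_le_quarter hε hε16
  have hx0 : 0 < x := lt_of_lt_of_le (by positivity) hx1
  have heps : ε ≤ s/4 := by nlinarith
  have ht1 : x + ε ≤ 3*s/4 := by linarith
  have ht0 : 0 < x + ε := by linarith
  have hA : Real.exp (-1) ≤ Real.exp (-(x+ε)) := Real.exp_le_exp.2 (by nlinarith)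
  have hBt : x + ε ≤ 1 - Real.exp (-(2*(x+ε))) := exp_half_lb ht0.le (by nlinarith)
  have hB : (s/4)^(M-1) ≤ (1 - Real.exp (-2*(x+ε)))^(M-1) := by
    apply pow_le_pow_left₀ (by positivity)
    rw [show (-2)*(x+ε) = -(2*(x+ε)) by ring]
    linarith
  have hb1 : ε/x ≤ 4*s := by rw [div_le_iff₀ hx0]; nlinarith
  have hb2 : 2*s ≤ ε/x := by rw [le_div_iff₀ hx0]; nlinarith
  have hble : ε/x ≤ 1 := by linarith
  have hC : Real.exp (-1) * s ≤ Real.exp (-(x+ε)) - Real.exp (-(ε/x)) := by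
    have h1 : Real.exp (-(ε/x)) * ((ε/x - (x+ε)) + 1) ≤
        Real.exp (-(ε/x)) * Real.exp (ε/x - (x+ε)) :=
      mul_le_mul_of_nonneg_left (Real.add_one_le_exp _) (Real.exp_pos _).le
    have h2 : Real.exp (-(ε/x)) * Real.exp (ε/x - (x+ε)) = Real.exp (-(x+ε)) := by
      rw [← Real.exp_add]; ring_nf
    rw [mul_add, mul_one] at h1
    have h3 : Real.exp (-1) * s ≤ Real.exp (-(ε/x)) * (ε/x - (x+ε)) := by
      apply mul_le_mul (Real.exp_le_exp.2 (by linarith)) (by linarith) hs0.le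
        (Real.exp_pos _).le
    linarith [h2 ▸ h1]
  have hB0 : (0:ℝ) ≤ (s/4)^(M-1) := by positivity
  calc Real.exp (-1) * (s/4)^(M-1) * (Real.exp (-1) * s)
      ≤ Real.exp (-(x+ε)) * (1 - Real.exp (-2*(x+ε)))^(M-1) *
          (Real.exp (-(x+ε)) - Real.exp (-(ε/x))) := by
        apply mul_le_mul _ hC (by positivity) _
        · exact mul_le_mul hA hB hB0 (Real.exp_pos _).le
        · exact mul_nonneg (Real.exp_pos _).le (le_trans hB0 hB)
    _ = Gf M ε x := rfl

lemma key_bounds (M : ℕ) (hM : 2 ≤ M) {ε : ℝ} (hε : 0 < ε) (hε16 : ε ≤ 1/16) :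
    Real.exp (-2) * (1/4:ℝ)^(M+1) * Real.sqrt ε ^ (M+1)
      ≤ (∫ x in (0:ℝ)..((Real.sqrt (ε^2+4*ε) - ε)/2), Gf M ε x) ∧
    (∫ x in (0:ℝ)..((Real.sqrt (ε^2+4*ε) - ε)/2), Gf M ε x)
      ≤ 2 * (4:ℝ)^M * Real.sqrt ε ^ (M+1) := by
  obtain ⟨k, rfl⟩ := Nat.exists_eq_add_of_le' hM
  have hM1 : k + 2 - 1 = k + 1 := by omega
  set s := Real.sqrt ε with hs
  set d : ℝ := (Real.sqrt (ε^2+4*ε) - ε)/2 with hd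
  have hs2 : s^2 = ε := Real.sq_sqrt hε.le
  have hs0 : 0 < s := Real.sqrt_pos.2 hε
  have hs14 : s ≤ 1/4 := sqrt_le_quarter hε hε16
  have hs1 : s ≤ 1 := by linarith
  have hdsq : d^2 + ε*d = ε := d_sq hε.le
  have hd0 : 0 < d := d_pos hε
  have hds : d ≤ s := d_le_s hε
  have hsd : s/2 ≤ d := s_half_le_d hε (by linarith)
  have hed : ε ≤ d := eps_le_d hε (by linarith)
  have hquad : ∀ x : ℝ, 0 < x → x ≤ d → x*(x+ε) ≤ ε := by
    intro x hx hxd; nlinarith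
  constructor
  · -- lower bound
    have I1 : IntervalIntegrable (Gf (k+2) ε) volume 0 (s/4) :=
      Gf_intInt _ hε le_rfl (by positivity)
    have I2 : IntervalIntegrable (Gf (k+2) ε) volume (s/4) (s/2) :=
      Gf_intInt _ hε (by positivity) (by positivity)
    have I3 : IntervalIntegrable (Gf (k+2) ε) volume (s/2) d :=
      Gf_intInt _ hε (by positivity) (by positivity)
    have hsplit : (∫ x in (0:ℝ)..d, Gf (k+2) ε x)
        = (∫ x in (0:ℝ)..(s/4), Gf (k+2) ε x) + (∫ x in (s/4)..(s/2), Gf (k+2) ε x)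
          + (∫ x in (s/2)..d, Gf (k+2) ε x) := by
      rw [intervalIntegral.integral_add_adjacent_intervals I1 I2,
          intervalIntegral.integral_add_adjacent_intervals (I1.trans I2) I3]
    have hn1 : 0 ≤ ∫ x in (0:ℝ)..(s/4), Gf (k+2) ε x := by
      apply intervalIntegral.integral_nonneg_of_ae_restrict (by positivity)
      filter_upwards [ae_restrict_mem measurableSet_Icc, ae_restrict_of_ae ae_ne_zero]
        with x hx hx0
      have hx0' : 0 < x := lt_of_le_of_ne hx.1 (Ne.symm hx0)
      exact Gf_nonneg _ hε hx0' (hquad x hx0' (by linarith [hx.2]))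
    have hn3 : 0 ≤ ∫ x in (s/2)..d, Gf (k+2) ε x := by
      apply intervalIntegral.integral_nonneg (by linarith)
      intro x hx
      have hx0' : 0 < x := lt_of_lt_of_le (by positivity) hx.1
      exact Gf_nonneg _ hε hx0' (hquad x hx0' hx.2)
    have hmid : Real.exp (-1) * (s/4)^(k+2-1) * (Real.exp (-1) * s) * (s/4)
        ≤ ∫ x in (s/4)..(s/2), Gf (k+2) ε x := by
      have := intervalIntegral.integral_mono_on (by linarith : s/4 ≤ s/2)
        (intervalIntegrable_const) I2
        (fun x hx => Gf_lb (k+2) hε hε16 hx.1 hx.2)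
      rw [intervalIntegral.integral_const] at this
      calc Real.exp (-1) * (s/4)^(k+2-1) * (Real.exp (-1) * s) * (s/4)
          = (s/2 - s/4) • (Real.exp (-1) * (s/4)^(k+2-1) * (Real.exp (-1) * s)) := by
            rw [smul_eq_mul]; ring
        _ ≤ _ := this
    have hconst : Real.exp (-2) * (1/4:ℝ)^(k+2+1) * s ^ (k+2+1)
        ≤ Real.exp (-1) * (s/4)^(k+2-1) * (Real.exp (-1) * s) * (s/4) := by
      rw [hM1, show s/4 = s*(1/4) by ring, mul_pow]
      have he2 : Real.exp (-1) * Real.exp (-1) = Real.exp (-2) := by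
        rw [← Real.exp_add]; norm_num
      have hq : (1/4:ℝ)^(k+3) ≤ (1/4)^(k+2) :=
        pow_le_pow_of_le_one (by norm_num) (by norm_num) (by omega)
      have heq : Real.exp (-1) * (s^(k+1) * (1/4:ℝ)^(k+1)) * (Real.exp (-1) * s) * (s*(1/4))
          = Real.exp (-2) * s^(k+3) * (1/4:ℝ)^(k+2) := by
        rw [← he2]; ring
      rw [heq, show k+2+1 = k+3 from rfl]
      have hsp : (0:ℝ) ≤ Real.exp (-2) * s^(k+3) := by positivity
      calc Real.exp (-2) * (1/4:ℝ)^(k+3) * s^(k+3)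
          = Real.exp (-2) * s^(k+3) * (1/4:ℝ)^(k+3) := by ring
        _ ≤ Real.exp (-2) * s^(k+3) * (1/4:ℝ)^(k+2) :=
            mul_le_mul_of_nonneg_left hq hsp
    linarith [hsplit, hn1, hn3, hmid, hconst]
  · -- upper bound
    have J1 : IntervalIntegrable (Gf (k+2) ε) volume 0 ε :=
      Gf_intInt _ hε le_rfl hε.le
    have J2 : IntervalIntegrable (Gf (k+2) ε) volume ε d :=
      Gf_intInt _ hε hε.le (by linarith)
    have hsplit : (∫ x in (0:ℝ)..d, Gf (k+2) ε x)
        = (∫ x in (0:ℝ)..ε, Gf (k+2) ε x) + (∫ x in ε..d, Gf (k+2) ε x) :=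
      (intervalIntegral.integral_add_adjacent_intervals J1 J2).symm
    have hu1 : (∫ x in (0:ℝ)..ε, Gf (k+2) ε x) ≤ (4*ε)^(k+1) * ε := by
      have hmono := intervalIntegral.integral_mono_ae_restrict hε.le J1
        (intervalIntegrable_const (c := (4*ε)^(k+1)))
      have hae : Gf (k+2) ε ≤ᶠ[ae (volume.restrict (Set.Icc 0 ε))]
          (fun _ => (4*ε)^(k+1)) := by
        filter_upwards [ae_restrict_mem measurableSet_Icc, ae_restrict_of_ae ae_ne_zero]
          with x hx hx0
        have hx0' : 0 < x := lt_of_le_of_ne hx.1 (Ne.symm hx0)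
        calc Gf (k+2) ε x ≤ (2*(x+ε))^(k+2-1) := Gf_le_pow _ hε hx0'
          _ ≤ (4*ε)^(k+1) := by
              rw [hM1]
              exact pow_le_pow_left₀ (by linarith) (by linarith [hx.2]) _
      have := hmono hae
      rw [intervalIntegral.integral_const, smul_eq_mul] at this
      calc (∫ x in (0:ℝ)..ε, Gf (k+2) ε x) ≤ (ε - 0) * (4*ε)^(k+1) := this
        _ = (4*ε)^(k+1) * ε := by ring
    have hu1' : (4*ε)^(k+1) * ε ≤ 4^(k+1) * s^(k+3) := by
      have h1 : (4*ε)^(k+1) * ε = 4^(k+1) * s^(2*k+4) := by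
        rw [mul_pow, ← hs2, ← pow_mul]
        ring
      rw [h1]
      have : s^(2*k+4) ≤ s^(k+3) := pow_le_pow_of_le_one hs0.le hs1 (by omega)
      have h4 : (0:ℝ) ≤ 4^(k+1) := by positivity
      nlinarith
    have hu2 : (∫ x in ε..d, Gf (k+2) ε x) ≤ 4^(k+1) * s^(k+2) * (d - ε) := by
      have hmono := intervalIntegral.integral_mono_on hed J2
        (intervalIntegrable_const (c := 4^(k+1) * s^(k+2)))
        (fun x hx => ?_)
      · rw [intervalIntegral.integral_const, smul_eq_mul] at hmono
        calc (∫ x in ε..d, Gf (k+2) ε x) ≤ (d - ε) * (4^(k+1) * s^(k+2)) := hmono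
          _ = 4^(k+1) * s^(k+2) * (d - ε) := by ring
      · have hx0' : 0 < x := lt_of_lt_of_le hε hx.1
        calc Gf (k+2) ε x ≤ (2*(x+ε))^(k+2-1) * (ε/x) := Gf_le_pow_mul _ hε hx0'
          _ ≤ (4*x)^(k+1) * (ε/x) := by
              rw [hM1]
              apply mul_le_mul_of_nonneg_right _ (div_nonneg hε.le hx0'.le)
              exact pow_le_pow_left₀ (by linarith) (by linarith [hx.1]) _
          _ = 4^(k+1) * (x^k * ε) := by
              have hxe : x^(k+1) * (ε/x) = x^k * ε := by
                rw [pow_succ, mul_assoc, mul_div_cancel₀ _ hx0'.ne']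
              rw [mul_pow, mul_assoc, hxe]
          _ ≤ 4^(k+1) * s^(k+2) := by
              apply mul_le_mul_of_nonneg_left _ (by positivity)
              have hxk : x^k ≤ s^k := pow_le_pow_left₀ hx0'.le (le_trans hx.2 hds) _
              calc x^k * ε ≤ s^k * s^2 := by nlinarith [pow_nonneg hx0'.le k]
                _ = s^(k+2) := by rw [← pow_add]
    have hu2' : 4^(k+1) * s^(k+2) * (d - ε) ≤ 4^(k+1) * s^(k+3) := by
      have : s^(k+2) * (d - ε) ≤ s^(k+2) * s := by
        apply mul_le_mul_of_nonneg_left (by linarith) (by positivity)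
      calc 4^(k+1) * s^(k+2) * (d - ε) = 4^(k+1) * (s^(k+2) * (d-ε)) := by ring
        _ ≤ 4^(k+1) * (s^(k+2) * s) := by
            apply mul_le_mul_of_nonneg_left this (by positivity)
        _ = 4^(k+1) * s^(k+3) := by rw [← pow_succ]
    have hfin : (4:ℝ)^(k+1) * s^(k+3) + 4^(k+1) * s^(k+3) ≤ 2 * 4^(k+2) * s^(k+2+1) := by
      have h4 : (4:ℝ)^(k+1) ≤ 4^(k+2) := by
        apply pow_le_pow_right₀ (by norm_num) (by omega)
      have hsp : (0:ℝ) ≤ s^(k+3) := by positivity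
      nlinarith
    rw [hsplit]
    calc (∫ x in (0:ℝ)..ε, Gf (k+2) ε x) + (∫ x in ε..d, Gf (k+2) ε x)
        ≤ 4^(k+1) * s^(k+3) + 4^(k+1) * s^(k+3) := by
          have := le_trans hu1 hu1'
          have := le_trans hu2 hu2'
          linarith
      _ ≤ 2 * 4^(k+2) * s^(k+2+1) := hfin




lemma log_bounds (M : ℕ) (hM : 2 ≤ M) {ε : ℝ} (hε : 0 < ε) (hε16 : ε < 1/16) :
    ((M:ℝ)+1)/2 + Real.log (2*(M:ℝ)*(2*(4:ℝ)^M)) / Real.log ε ≤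
      (Real.log
            (2 * (M : ℝ) *
              ∑ i ∈ Finset.range M,
                ((M - 1).choose i : ℝ) * (-1) ^ i *
                  ((Real.exp (-2 * ((i : ℝ) + 1) * ε)
                      - Real.exp (-2 * ((i : ℝ) + 1) * ((ε + Real.sqrt (ε ^ 2 + 4 * ε)) / 2)))
                      / (2 * ((i : ℝ) + 1))
                    - Real.exp (-(2 * (i : ℝ) + 1) * ε) *
                        ∫ x in (0 : ℝ)..(ε + Real.sqrt (ε ^ 2 + 4 * ε)) / 2 - ε,
                          Real.exp (-(2 * (i : ℝ) + 1) * x - ε / x)))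
          / Real.log ε) ∧
    (Real.log
            (2 * (M : ℝ) *
              ∑ i ∈ Finset.range M,
                ((M - 1).choose i : ℝ) * (-1) ^ i *
                  ((Real.exp (-2 * ((i : ℝ) + 1) * ε)
                      - Real.exp (-2 * ((i : ℝ) + 1) * ((ε + Real.sqrt (ε ^ 2 + 4 * ε)) / 2)))
                      / (2 * ((i : ℝ) + 1))
                    - Real.exp (-(2 * (i : ℝ) + 1) * ε) *
                        ∫ x in (0 : ℝ)..(ε + Real.sqrt (ε ^ 2 + 4 * ε)) / 2 - ε,
                          Real.exp (-(2 * (i : ℝ) + 1) * x - ε / x)))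
          / Real.log ε)
      ≤ ((M:ℝ)+1)/2 + Real.log (2*(M:ℝ)*(Real.exp (-2) * (1/4:ℝ)^(M+1))) / Real.log ε := by
  have hM0 : (0:ℝ) < (M:ℝ) := by exact_mod_cast lt_of_lt_of_le (by norm_num) hM
  have hs0 : 0 < Real.sqrt ε := Real.sqrt_pos.2 hε
  have hI := key_bounds M hM hε hε16.le
  rw [key_id M (by omega) hε]
  set I : ℝ := ∫ x in (0:ℝ)..((Real.sqrt (ε^2+4*ε) - ε)/2), Gf M ε x with hIdef
  set C₁ : ℝ := 2*(M:ℝ)*(Real.exp (-2) * (1/4:ℝ)^(M+1)) with hC₁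
  set C₂ : ℝ := 2*(M:ℝ)*(2*(4:ℝ)^M) with hC₂
  have hC₁0 : 0 < C₁ := by rw [hC₁]; positivity
  have hC₂0 : 0 < C₂ := by rw [hC₂]; positivity
  have hF1 : C₁ * Real.sqrt ε ^ (M+1) ≤ 2*(M:ℝ)*I := by
    have := mul_le_mul_of_nonneg_left hI.1 (by positivity : (0:ℝ) ≤ 2*(M:ℝ))
    calc C₁ * Real.sqrt ε ^ (M+1)
        = 2*(M:ℝ) * (Real.exp (-2) * (1/4:ℝ)^(M+1) * Real.sqrt ε ^ (M+1)) := by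
          rw [hC₁]; ring
      _ ≤ 2*(M:ℝ)*I := this
  have hF2 : 2*(M:ℝ)*I ≤ C₂ * Real.sqrt ε ^ (M+1) := by
    have := mul_le_mul_of_nonneg_left hI.2 (by positivity : (0:ℝ) ≤ 2*(M:ℝ))
    calc 2*(M:ℝ)*I ≤ 2*(M:ℝ) * (2 * (4:ℝ)^M * Real.sqrt ε ^ (M+1)) := this
      _ = C₂ * Real.sqrt ε ^ (M+1) := by rw [hC₂]; ring
  have hL0 : 0 < C₁ * Real.sqrt ε ^ (M+1) := by positivity
  have hF0 : 0 < 2*(M:ℝ)*I := lt_of_lt_of_le hL0 hF1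
  have hlog1 : Real.log (C₁ * Real.sqrt ε ^ (M+1)) ≤ Real.log (2*(M:ℝ)*I) :=
    Real.log_le_log hL0 hF1
  have hlog2 : Real.log (2*(M:ℝ)*I) ≤ Real.log (C₂ * Real.sqrt ε ^ (M+1)) :=
    Real.log_le_log hF0 hF2
  have hexp : ∀ C : ℝ, 0 < C → Real.log (C * Real.sqrt ε ^ (M+1))
      = Real.log C + ((M:ℝ)+1) * (Real.log ε / 2) := by
    intro C hC
    rw [Real.log_mul hC.ne' (pow_ne_zero _ hs0.ne'), Real.log_pow, Real.log_sqrt hε.le]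
    push_cast
    ring
  have hlε : Real.log ε < 0 := Real.log_neg hε (by linarith)
  have hkey : ∀ C : ℝ, (Real.log C + ((M:ℝ)+1) * (Real.log ε / 2)) / Real.log ε
      = ((M:ℝ)+1)/2 + Real.log C / Real.log ε := by
    intro C
    have h1 : ((M:ℝ)+1) * (Real.log ε / 2) / Real.log ε
        = ((M:ℝ)+1)/2 * (Real.log ε / Real.log ε) := by ring
    rw [add_div, h1, div_self hlε.ne, mul_one, add_comm]
  have hinvle : (Real.log ε)⁻¹ ≤ 0 := inv_nonpos.2 hlε.le
  constructor
  · have h := mul_le_mul_of_nonpos_right hlog2 hinvle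
    rw [← div_eq_mul_inv, ← div_eq_mul_inv, hexp C₂ hC₂0, hkey] at h
    exact h
  · have h := mul_le_mul_of_nonpos_right hlog1 hinvle
    rw [← div_eq_mul_inv, ← div_eq_mul_inv, hexp C₁ hC₁0, hkey] at h
    exact h

/-- Fix `M ≥ 2`. With `ε₀(ε) = (ε + √(ε² + 4ε))/2` and
`Q₄(ε) = 2M Σ_{i=0}^{M−1} C(M−1,i) (−1)^i [ (e^{−2(i+1)ε} − e^{−2(i+1)ε₀})/(2(i+1))
  − e^{−(2i+1)ε} ∫₀^{ε₀−ε} e^{−(2i+1)x − ε/x} dx ]`,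
we have `lim_{ε→0⁺} log Q₄(ε)/log ε = (M+1)/2`. -/
theorem stmt11 (M : ℕ) (hM : 2 ≤ M) :
    Tendsto
      (fun ε : ℝ =>
        Real.log
            (2 * (M : ℝ) *
              ∑ i ∈ Finset.range M,
                ((M - 1).choose i : ℝ) * (-1) ^ i *
                  ((Real.exp (-2 * ((i : ℝ) + 1) * ε)
                      - Real.exp (-2 * ((i : ℝ) + 1) * ((ε + Real.sqrt (ε ^ 2 + 4 * ε)) / 2)))
                      / (2 * ((i : ℝ) + 1))
                    - Real.exp (-(2 * (i : ℝ) + 1) * ε) *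
                        ∫ x in (0 : ℝ)..(ε + Real.sqrt (ε ^ 2 + 4 * ε)) / 2 - ε,
                          Real.exp (-(2 * (i : ℝ) + 1) * x - ε / x)))
          / Real.log ε)
      (𝓝[>] 0) (𝓝 (((M : ℝ) + 1) / 2)) := by
  have hinv : Tendsto (fun ε : ℝ => (Real.log ε)⁻¹) (𝓝[>] (0:ℝ)) (𝓝 0) := by
    have h1 : Tendsto (fun ε : ℝ => -Real.log ε) (𝓝[>] (0:ℝ)) atTop :=
      tendsto_neg_atTop_iff.mpr Real.tendsto_log_nhdsGT_zero
    have h2 := h1.inv_tendsto_atTop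
    have h3 := h2.neg
    simp only [Pi.inv_apply, ← neg_inv, neg_neg, neg_zero] at h3
    exact h3
  have hdiv : ∀ C : ℝ, Tendsto (fun ε : ℝ => Real.log C / Real.log ε) (𝓝[>] (0:ℝ)) (𝓝 0) := by
    intro C
    simpa [div_eq_mul_inv] using hinv.const_mul (Real.log C)
  have hg : Tendsto (fun ε : ℝ => ((M:ℝ)+1)/2 + Real.log (2*(M:ℝ)*(2*(4:ℝ)^M)) / Real.log ε)
      (𝓝[>] (0:ℝ)) (𝓝 (((M:ℝ)+1)/2)) := by
    simpa using (tendsto_const_nhds :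
        Tendsto (fun _ : ℝ => ((M:ℝ)+1)/2) (𝓝[>] (0:ℝ)) _).add
      (hdiv (2*(M:ℝ)*(2*(4:ℝ)^M)))
  have hh : Tendsto (fun ε : ℝ => ((M:ℝ)+1)/2 +
      Real.log (2*(M:ℝ)*(Real.exp (-2) * (1/4:ℝ)^(M+1))) / Real.log ε)
      (𝓝[>] (0:ℝ)) (𝓝 (((M:ℝ)+1)/2)) := by
    simpa using (tendsto_const_nhds :
        Tendsto (fun _ : ℝ => ((M:ℝ)+1)/2) (𝓝[>] (0:ℝ)) _).add
      (hdiv (2*(M:ℝ)*(Real.exp (-2) * (1/4:ℝ)^(M+1))))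
  have hmem : Set.Ioo (0:ℝ) (1/16) ∈ 𝓝[>] (0:ℝ) :=
    Ioo_mem_nhdsGT_of_mem (by norm_num)
  apply tendsto_of_tendsto_of_tendsto_of_le_of_le' hg hh
  · filter_upwards [hmem] with ε hε
    exact (log_bounds M hM hε.1 hε.2).1
  · filter_upwards [hmem] with ε hε
    exact (log_bounds M hM hε.1 hε.2).2
end

section
/- Fix an integer M ≥ 2 and for ε > 0 set ε₀(ε) = (ε + √(ε² + 4ε))/2. Then lim_{ε→0⁺} M · (∫₀^{ε₀(ε)} y^{M−1} · e^{−ε/y} dy) / ε₀(ε)^M = 1. -/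
open Filter Topology intervalIntegral MeasureTheory

lemma aux_integrable_s12 (k : ℕ) {ε E : ℝ} (hε : 0 < ε) (hE : 0 < E) :
    IntervalIntegrable (fun y => y ^ (k+1) * Real.exp (-ε/y)) volume 0 E := by
  apply IntervalIntegrable.mono_fun ((continuous_pow (k+1)).intervalIntegrable 0 E)
  · apply Measurable.aestronglyMeasurable
    exact (measurable_id.pow_const _).mul ((measurable_const.div measurable_id).exp)
  · rw [Filter.EventuallyLE, ae_restrict_iff' measurableSet_uIoc]
    apply ae_of_all
    intro y hy
    rw [Set.uIoc_of_le hE.le] at hy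
    have hy0 : 0 < y := hy.1
    have h1 : Real.exp (-ε/y) ≤ 1 := by
      rw [Real.exp_le_one_iff, neg_div]
      have : 0 ≤ ε / y := by positivity
      linarith
    have h2 : 0 ≤ y ^ (k+1) := by positivity
    rw [Real.norm_eq_abs, Real.norm_eq_abs, abs_of_nonneg (by positivity), abs_of_nonneg h2]
    nlinarith [Real.exp_pos (-ε/y)]

lemma aux_ub (k : ℕ) {ε E : ℝ} (hε : 0 < ε) (hE : 0 < E) :
    (∫ y in (0:ℝ)..E, y ^ (k+1) * Real.exp (-ε/y)) ≤ E ^ (k+2) / (k+2) := by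
  have h := intervalIntegral.integral_mono_on hE.le (aux_integrable_s12 k hε hE)
      ((continuous_pow (k+1)).intervalIntegrable 0 E) ?_
  · calc (∫ y in (0:ℝ)..E, y ^ (k+1) * Real.exp (-ε/y))
        ≤ ∫ y in (0:ℝ)..E, y ^ (k+1) := h
      _ = E ^ (k+2) / (k+2) := by
          rw [integral_pow, show k+1+1 = k+2 from rfl]
          push_cast
          ring
  · intro y hy
    rcases eq_or_lt_of_le hy.1 with h0 | h0
    · simp [← h0]
    · have h1 : Real.exp (-ε/y) ≤ 1 := by
        rw [Real.exp_le_one_iff, neg_div]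
        have : 0 ≤ ε / y := by positivity
        linarith
      nlinarith [pow_nonneg h0.le (k+1), Real.exp_pos (-ε/y)]

lemma aux_lb (k : ℕ) {ε E : ℝ} (hε : 0 < ε) (hE : 0 < E) :
    E ^ (k+2) / (k+2) - ε * E ^ (k+1) / (k+1) ≤
      ∫ y in (0:ℝ)..E, y ^ (k+1) * Real.exp (-ε/y) := by
  have hint : IntervalIntegrable (fun y : ℝ => y ^ (k+1) - ε * y ^ k) volume 0 E :=
    ((continuous_pow (k+1)).sub (continuous_const.mul (continuous_pow k))).intervalIntegrable 0 E
  have h := intervalIntegral.integral_mono_on hE.le hint (aux_integrable_s12 k hε hE) ?_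
  · calc E ^ (k+2) / (k+2) - ε * E ^ (k+1) / (k+1)
        = ∫ y in (0:ℝ)..E, (y ^ (k+1) - ε * y ^ k) := by
          rw [intervalIntegral.integral_sub (g := fun y : ℝ => ε * y ^ k) ((continuous_pow (k+1)).intervalIntegrable 0 E)
              ((continuous_const.mul (continuous_pow k)).intervalIntegrable 0 E),
            intervalIntegral.integral_const_mul, integral_pow, integral_pow]
          push_cast
          ring
      _ ≤ _ := h
  · intro y hy
    rcases eq_or_lt_of_le hy.1 with h0 | h0
    · have : (0:ℝ) ≤ ε * 0 ^ k := by positivity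
      simp only [← h0]
      simp only [zero_pow (Nat.succ_ne_zero k), zero_mul, zero_sub, neg_nonpos]
      exact this
    · have h1 : 1 - ε / y ≤ Real.exp (-ε/y) := by
        have := Real.add_one_le_exp (-ε/y)
        rw [neg_div] at this ⊢
        linarith
      have hy0 : y ≠ 0 := h0.ne'
      have key : y ^ (k+1) * (1 - ε / y) = y ^ (k+1) - ε * y ^ k := by
        field_simp
        ring
      calc y ^ (k+1) - ε * y ^ k = y ^ (k+1) * (1 - ε / y) := key.symm
        _ ≤ y ^ (k+1) * Real.exp (-ε/y) := by
            apply mul_le_mul_of_nonneg_left h1 (by positivity)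

/-- Fix `M ≥ 2` and set `ε₀(ε) = (ε + √(ε² + 4ε))/2` for `ε > 0`. Then
`lim_{ε→0⁺} M (∫₀^{ε₀(ε)} y^{M−1} e^{−ε/y} dy) / ε₀(ε)^M = 1`. -/
theorem stmt12 (M : ℕ) (hM : 2 ≤ M) :
    Tendsto
      (fun ε : ℝ =>
        (M : ℝ) *
            (∫ y in (0 : ℝ)..(ε + Real.sqrt (ε ^ 2 + 4 * ε)) / 2,
              y ^ (M - 1) * Real.exp (-ε / y))
          / ((ε + Real.sqrt (ε ^ 2 + 4 * ε)) / 2) ^ M)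
      (𝓝[>] 0) (𝓝 1) := by
  obtain ⟨k, rfl⟩ : ∃ k, M = k + 2 := ⟨M - 2, by omega⟩
  have hk1 : (0:ℝ) < (k:ℝ) + 1 := by positivity
  have hk2 : (0:ℝ) < (k:ℝ) + 2 := by positivity
  set c : ℝ := ((k:ℝ)+2)/((k:ℝ)+1) with hc
  have hc0 : (0:ℝ) ≤ c := by positivity
  have hlow : Tendsto (fun ε : ℝ => 1 - c * Real.sqrt ε) (𝓝[>] 0) (𝓝 1) := by
    have h0 : Tendsto (fun ε : ℝ => 1 - c * Real.sqrt ε) (𝓝 0) (𝓝 (1 - c * Real.sqrt 0)) :=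
      tendsto_const_nhds.sub ((Real.continuous_sqrt.tendsto 0).const_mul c)
    simpa using h0.mono_left nhdsWithin_le_nhds
  refine tendsto_of_tendsto_of_tendsto_of_le_of_le' hlow tendsto_const_nhds ?_ ?_ <;>
    · filter_upwards [self_mem_nhdsWithin] with ε (hε : 0 < ε)
      set E : ℝ := (ε + Real.sqrt (ε ^ 2 + 4 * ε)) / 2 with hEdef
      have hs : 0 < Real.sqrt (ε ^ 2 + 4 * ε) := Real.sqrt_pos.mpr (by positivity)
      have hE : 0 < E := by rw [hEdef]; positivity
      have hEM : 0 < E ^ (k+2) := by positivity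
      have hsE : Real.sqrt ε ≤ E := by
        have h4 : Real.sqrt (4 * ε) ≤ Real.sqrt (ε ^ 2 + 4 * ε) :=
          Real.sqrt_le_sqrt (by nlinarith)
        have h4' : Real.sqrt (4 * ε) = 2 * Real.sqrt ε := by
          rw [show (4:ℝ) * ε = 2^2 * ε by ring, Real.sqrt_mul (by positivity),
            Real.sqrt_sq (by norm_num)]
        rw [hEdef]
        nlinarith [Real.sqrt_nonneg ε]
      have hsub : k + 2 - 1 = k + 1 := rfl
      rw [hsub]
      set I : ℝ := ∫ y in (0:ℝ)..E, y ^ (k+1) * Real.exp (-ε/y) with hI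
      first
      | -- lower bound branch
        ( have hlbI := aux_lb k hε hE
          have hεE : ε / E ≤ Real.sqrt ε := by
            have hsp : 0 < Real.sqrt ε := Real.sqrt_pos.mpr hε
            calc ε / E ≤ ε / Real.sqrt ε := by
                  apply div_le_div_of_nonneg_left hε.le hsp hsE
              _ = Real.sqrt ε := Real.div_sqrt
          have hkey : ((k:ℝ)+2) * (E ^ (k+2) / (k+2) - ε * E ^ (k+1) / (k+1)) / E ^ (k+2)
              = 1 - c * (ε / E) := by
            rw [hc]
            field_simp
            ring
          calc 1 - c * Real.sqrt ε ≤ 1 - c * (ε / E) := by nlinarith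
            _ = ((k:ℝ)+2) * (E ^ (k+2) / (k+2) - ε * E ^ (k+1) / (k+1)) / E ^ (k+2) := hkey.symm
            _ ≤ (↑(k+2) : ℝ) * I / E ^ (k+2) := by
                push_cast
                gcongr )
      | -- upper bound branch
        ( have hubI := aux_ub k hε hE
          rw [div_le_one hEM]
          push_cast
          calc ((k:ℝ)+2) * I ≤ ((k:ℝ)+2) * (E ^ (k+2) / (k+2)) := by
                apply mul_le_mul_of_nonneg_left _ hk2.le
                exact_mod_cast hubI
            _ = E ^ (k+2) := by field_simp )
end
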